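/- arXiv:1801.02214 — 12 statements merged into one kernel-verified Lean document; each statement's English description precedes it below -/
import Mathlib

section
/- Let E, Q ∈ ℂ^{n×n} be such that the matrix pencil λE − Q is regular, i.e., det(λ₀E − Q) ≠ 0 for some λ₀ ∈ ℂ. Then EᴴQ = QᴴE if and only if there exist a unitary matrix U ∈ ℂ^{n×n} and an invertible matrix X ∈ ℂ^{n×n} such that UEX and UQX are diagonal matrices with real entries satisfying (UEX)² + (UQX)² = I_n. Moreover, if in addition EᴴQ is positive semidefinite, then U and X can be chosen so that the diagonal matrices UEX and UQX both have nonnegative diagonal entries. -/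
open Matrix ComplexOrder LinearMap Module.End

set_option maxHeartbeats 2000000

lemma toEuclideanLin_mul {n : ℕ} (A B : Matrix (Fin n) (Fin n) ℂ) :
    Matrix.toEuclideanLin (A * B) = Matrix.toEuclideanLin A ∘ₗ Matrix.toEuclideanLin B := by
  apply LinearMap.ext
  intro x
  simp [Matrix.toEuclideanLin_apply, Matrix.mulVec_mulVec]

lemma simul_diag {n : ℕ} (A B : Matrix (Fin n) (Fin n) ℂ)
    (hA : A.IsHermitian) (hB : B.IsHermitian) (hAB : A * B = B * A) :
    ∃ W ∈ Matrix.unitaryGroup (Fin n) ℂ, ∃ a b : Fin n → ℂ,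
      A * W = W * Matrix.diagonal a ∧ B * W = W * Matrix.diagonal b := by
  classical
  have hA' := (Matrix.isHermitian_iff_isSymmetric).1 hA
  have hB' := (Matrix.isHermitian_iff_isSymmetric).1 hB
  have hcomm : Commute (Matrix.toEuclideanLin A) (Matrix.toEuclideanLin B) := by
    have h1 : Matrix.toEuclideanLin A * Matrix.toEuclideanLin B = Matrix.toEuclideanLin (A * B) :=
      (toEuclideanLin_mul A B).symm
    have h2 : Matrix.toEuclideanLin B * Matrix.toEuclideanLin A = Matrix.toEuclideanLin (B * A) :=
      (toEuclideanLin_mul B A).symm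
    unfold Commute SemiconjBy
    rw [h1, h2, hAB]
  have hint := hA'.directSum_isInternal_of_commute hB' hcomm
  have horth := LinearMap.IsSymmetric.orthogonalFamily_eigenspace_inf_eigenspace hA' hB'
  haveI : Fintype {p : ℂ × ℂ //
      (eigenspace (Matrix.toEuclideanLin A) p.2 ⊓ eigenspace (Matrix.toEuclideanLin B) p.1) ≠ ⊥} :=
    hint.submodule_iSupIndep.fintypeNeBotOfFiniteDimensional
  have hint' := DirectSum.isInternal_ne_bot_iff.2 hint
  have horth' := horth.comp (Subtype.coe_injective (p := fun p : ℂ × ℂ =>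
      (eigenspace (Matrix.toEuclideanLin A) p.2 ⊓ eigenspace (Matrix.toEuclideanLin B) p.1) ≠ ⊥))
  have hn : Module.finrank ℂ (EuclideanSpace ℂ (Fin n)) = n := by
    simp [finrank_euclideanSpace]
  set bb := hint'.subordinateOrthonormalBasis hn horth' with hbb
  set idx := fun k => hint'.subordinateOrthonormalBasisIndex hn k horth' with hidx
  have hmem : ∀ k, bb k ∈ (eigenspace (Matrix.toEuclideanLin A) ((idx k).1).2 ⊓
      eigenspace (Matrix.toEuclideanLin B) ((idx k).1).1) :=
    fun k => hint'.subordinateOrthonormalBasis_subordinate hn k horth'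
  set W : Matrix (Fin n) (Fin n) ℂ :=
    (EuclideanSpace.basisFun (Fin n) ℂ).toBasis.toMatrix bb.toBasis with hW
  have hWu : W ∈ Matrix.unitaryGroup (Fin n) ℂ :=
    (EuclideanSpace.basisFun (Fin n) ℂ).toMatrix_orthonormalBasis_mem_unitary bb
  have hWapp : ∀ i j, W i j = bb j i := fun i j => rfl
  have hAvec : ∀ k, A *ᵥ ⇑(bb k) = ((idx k).1).2 • ⇑(bb k) := by
    intro k
    simpa only [Matrix.toEuclideanLin_apply, WithLp.ofLp_smul] using congr(⇑$(mem_eigenspace_iff.1 (hmem k).1))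
  have hBvec : ∀ k, B *ᵥ ⇑(bb k) = ((idx k).1).1 • ⇑(bb k) := by
    intro k
    simpa only [Matrix.toEuclideanLin_apply, WithLp.ofLp_smul] using congr(⇑$(mem_eigenspace_iff.1 (hmem k).2))
  have key : ∀ (M : Matrix (Fin n) (Fin n) ℂ) (a : Fin n → ℂ),
      (∀ k, M *ᵥ ⇑(bb k) = a k • ⇑(bb k)) → M * W = W * Matrix.diagonal a := by
    intro M a hM
    ext i k
    rw [Matrix.mul_diagonal]
    have h1 : (M * W) i k = (M *ᵥ ⇑(bb k)) i := by
      simp [Matrix.mul_apply, Matrix.mulVec, dotProduct, hWapp]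
    rw [h1, hM k, hWapp]
    simp [mul_comm]
  exact ⟨W, hWu, fun k => ((idx k).1).2, fun k => ((idx k).1).1,
    key A _ hAvec, key B _ hBvec⟩

lemma cx_facts (d f : ℂ) (hd : star d * d = 1) (hf : f ^ 2 = star d) :
    (starRingEnd ℂ) (f * (1 + d) / 2) = f * (1 + d) / 2 ∧
    (starRingEnd ℂ) (-Complex.I * f * (1 - d) / 2) = -Complex.I * f * (1 - d) / 2 ∧
    (f * (1 + d) / 2) ^ 2 + (-Complex.I * f * (1 - d) / 2) ^ 2 = 1 ∧
    (starRingEnd ℂ) f * f = 1 := by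
  have hfne : f ≠ 0 := by
    intro h
    rw [h] at hf
    simp only [ne_eq, zero_pow, OfNat.ofNat_ne_zero, not_false_eq_true] at hf
    rw [← hf, zero_mul] at hd
    exact zero_ne_one hd
  have hnsq : ((Complex.normSq f : ℂ)) ^ 2 = 1 := by
    have h1 : (starRingEnd ℂ) f * f = (Complex.normSq f : ℂ) := by
      rw [mul_comm]; exact Complex.mul_conj f
    calc ((Complex.normSq f : ℂ)) ^ 2 = ((starRingEnd ℂ) f * f) ^ 2 := by rw [h1]
      _ = (starRingEnd ℂ) (f ^ 2) * f ^ 2 := by rw [_root_.map_pow]; ring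
      _ = (starRingEnd ℂ) (star d) * star d := by rw [hf]
      _ = d * star d := by simp
      _ = 1 := by rw [mul_comm]; exact hd
  have hns : (Complex.normSq f : ℝ) = 1 := by
    have : ((Complex.normSq f : ℝ)) ^ 2 = 1 := by
      exact_mod_cast hnsq
    nlinarith [Complex.normSq_nonneg f]
  have hsf : (starRingEnd ℂ) f = f⁻¹ := by
    apply eq_inv_of_mul_eq_one_left
    rw [mul_comm, Complex.mul_conj, hns, Complex.ofReal_one]
  have hsd : (starRingEnd ℂ) d = f ^ 2 := hf.symm
  have hdf : d = (f⁻¹) ^ 2 := by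
    have := congrArg (starRingEnd ℂ) hsd
    rw [Complex.conj_conj] at this
    rw [this, _root_.map_pow, hsf]
  refine ⟨?_, ?_, ?_, ?_⟩
  · rw [map_div₀, _root_.map_mul, _root_.map_add, _root_.map_one, hsf, hsd, hdf]
    have h2 : (starRingEnd ℂ) (2 : ℂ) = 2 := Complex.conj_ofNat 2
    rw [h2]
    field_simp
    ring
  · rw [map_div₀, _root_.map_mul, _root_.map_mul, _root_.map_sub, _root_.map_one, hsf, hsd, hdf]
    have h2 : (starRingEnd ℂ) (2 : ℂ) = 2 := Complex.conj_ofNat 2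
    have hI : (starRingEnd ℂ) (-Complex.I) = Complex.I := by simp
    rw [h2, hI]
    field_simp
    ring
  · rw [hdf]
    field_simp
    ring_nf
    rw [Complex.I_sq]
    ring
  · rw [hsf]
    exact inv_mul_cancel₀ hfne

lemma unitary_diag {n : ℕ} (V : Matrix (Fin n) (Fin n) ℂ)
    (hV : V ∈ Matrix.unitaryGroup (Fin n) ℂ) :
    ∃ W ∈ Matrix.unitaryGroup (Fin n) ℂ, ∃ d : Fin n → ℂ,
      V * W = W * Matrix.diagonal d := by
  have h1 : Vᴴ * V = 1 := by
    rw [← Matrix.star_eq_conjTranspose]; exact mem_unitaryGroup_iff'.1 hV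
  have h2 : V * Vᴴ = 1 := by
    rw [← Matrix.star_eq_conjTranspose]; exact mem_unitaryGroup_iff.1 hV
  set C := (1/2 : ℂ) • (V + Vᴴ) with hC
  set S := (Complex.I/2 : ℂ) • (Vᴴ - V) with hS
  have hCH : C.IsHermitian := by
    unfold Matrix.IsHermitian
    rw [hC, conjTranspose_smul, conjTranspose_add, conjTranspose_conjTranspose]
    have : star (1/2 : ℂ) = (1/2 : ℂ) := by norm_num
    rw [this, add_comm]
  have hSH : S.IsHermitian := by
    unfold Matrix.IsHermitian
    rw [hS, conjTranspose_smul, conjTranspose_sub, conjTranspose_conjTranspose]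
    have : star (Complex.I/2 : ℂ) = -(Complex.I/2 : ℂ) := by
      rw [Complex.ext_iff]
      norm_num
    rw [this]
    module
  have expand1 : (V + Vᴴ) * (Vᴴ - V) = Vᴴ * Vᴴ - V * V := by
    rw [add_mul, mul_sub, mul_sub, h2, h1]
    noncomm_ring
  have expand2 : (Vᴴ - V) * (V + Vᴴ) = Vᴴ * Vᴴ - V * V := by
    rw [sub_mul, mul_add, mul_add, h2, h1]
    noncomm_ring
  have hcomm : C * S = S * C := by
    rw [hC, hS, smul_mul_assoc, mul_smul_comm, expand1,
        smul_mul_assoc, mul_smul_comm, expand2, smul_comm]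
  obtain ⟨W, hW, a, b, hCW, hSW⟩ := simul_diag C S hCH hSH hcomm
  have hVCS : V = C + Complex.I • S := by
    have hIS : Complex.I • S = (-(1/2) : ℂ) • (Vᴴ - V) := by
      rw [hS, smul_smul]
      congr 1
      rw [mul_div_assoc', Complex.I_mul_I]
      ring
    rw [hIS, hC]
    module
  refine ⟨W, hW, fun k => a k + Complex.I * b k, ?_⟩
  have : Matrix.diagonal (fun k => a k + Complex.I * b k)
      = Matrix.diagonal a + Complex.I • Matrix.diagonal b := by
    rw [← Matrix.diagonal_smul, ← Matrix.diagonal_add]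
    congr 1
  rw [this, hVCS, add_mul, hCW, smul_mul_assoc, hSW, mul_add, mul_smul_comm]

lemma pencil_posDef {n : ℕ} (E Q : Matrix (Fin n) (Fin n) ℂ)
    (hreg : ∃ μ : ℂ, (μ • E - Q).det ≠ 0) :
    (Eᴴ * E + Qᴴ * Q).PosDef := by
  obtain ⟨μ, hμ⟩ := hreg
  have hE := Matrix.posSemidef_conjTranspose_mul_self E
  have hQ := Matrix.posSemidef_conjTranspose_mul_self Q
  refine Matrix.PosDef.of_dotProduct_mulVec_pos (hE.1.add hQ.1) (fun x hx => ?_)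
  have hsum : dotProduct (star x) ((Eᴴ * E + Qᴴ * Q) *ᵥ x)
      = dotProduct (star x) ((Eᴴ * E) *ᵥ x) + dotProduct (star x) ((Qᴴ * Q) *ᵥ x) := by
    rw [Matrix.add_mulVec, dotProduct_add]
  have hE' : dotProduct (star x) ((Eᴴ * E) *ᵥ x) = dotProduct (star (E *ᵥ x)) (E *ᵥ x) := by
    rw [← Matrix.mulVec_mulVec, Matrix.star_mulVec, ← Matrix.dotProduct_mulVec]
  have hQ' : dotProduct (star x) ((Qᴴ * Q) *ᵥ x) = dotProduct (star (Q *ᵥ x)) (Q *ᵥ x) := by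
    rw [← Matrix.mulVec_mulVec, Matrix.star_mulVec, ← Matrix.dotProduct_mulVec]
  rw [hsum, hE', hQ']
  rcases lt_or_eq_of_le (add_nonneg (dotProduct_star_self_nonneg (E *ᵥ x))
    (dotProduct_star_self_nonneg (Q *ᵥ x))) with h | h
  · exact h
  exfalso
  have h1 : dotProduct (star (E *ᵥ x)) (E *ᵥ x) = 0 := by
    have hEn := dotProduct_star_self_nonneg (E *ᵥ x)
    have hQn := dotProduct_star_self_nonneg (Q *ᵥ x)
    have := h.symm
    -- a + b = 0, a,b ≥ 0 → a = 0
    have hle : dotProduct (star (E *ᵥ x)) (E *ᵥ x) ≤ 0 := by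
      calc dotProduct (star (E *ᵥ x)) (E *ᵥ x)
          = (dotProduct (star (E *ᵥ x)) (E *ᵥ x) + dotProduct (star (Q *ᵥ x)) (Q *ᵥ x))
            - dotProduct (star (Q *ᵥ x)) (Q *ᵥ x) := by ring
        _ = - dotProduct (star (Q *ᵥ x)) (Q *ᵥ x) := by rw [this]; ring
        _ ≤ 0 := by simpa using hQn
    exact le_antisymm hle hEn
  have h2 : dotProduct (star (Q *ᵥ x)) (Q *ᵥ x) = 0 := by
    rw [h1, zero_add] at h
    exact h.symm
  have hEx : E *ᵥ x = 0 := dotProduct_star_self_eq_zero.1 h1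
  have hQx : Q *ᵥ x = 0 := dotProduct_star_self_eq_zero.1 h2
  have hMx : (μ • E - Q) *ᵥ x = 0 := by
    rw [Matrix.sub_mulVec, Matrix.smul_mulVec, hEx, hQx]
    simp
  have hU : IsUnit (μ • E - Q).det := isUnit_iff_ne_zero.2 hμ
  have : x = 0 := by
    have := congrArg (fun v => (μ • E - Q)⁻¹ *ᵥ v) hMx
    simpa [Matrix.mulVec_mulVec, Matrix.nonsing_inv_mul _ hU] using this
  exact hx this

lemma conj_reduce {n : ℕ} (U X M N : Matrix (Fin n) (Fin n) ℂ) (hU : Uᴴ * U = 1) :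
    (U * M * X)ᴴ * (U * N * X) = Xᴴ * (Mᴴ * N) * X := by
  rw [conjTranspose_mul, conjTranspose_mul]
  calc Xᴴ * (Mᴴ * Uᴴ) * (U * N * X)
      = Xᴴ * Mᴴ * (Uᴴ * U) * N * X := by simp only [Matrix.mul_assoc]
    _ = Xᴴ * (Mᴴ * N) * X := by rw [hU, mul_one]; simp only [Matrix.mul_assoc]


lemma diag_real_herm {n : ℕ} (A : Matrix (Fin n) (Fin n) ℂ)
    (hoff : ∀ i j, i ≠ j → A i j = 0) (him : ∀ i j, (A i j).im = 0) :
    Aᴴ = A := by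
  ext i j
  rcases eq_or_ne i j with rfl | hij
  · rw [conjTranspose_apply]
    exact (Complex.conj_eq_iff_im).2 (him i i)
  · rw [conjTranspose_apply, hoff j i (Ne.symm hij), hoff i j hij, star_zero]

lemma diag_comm {n : ℕ} (A B : Matrix (Fin n) (Fin n) ℂ)
    (hA : ∀ i j, i ≠ j → A i j = 0) (hB : ∀ i j, i ≠ j → B i j = 0) :
    A * B = B * A := by
  ext i j
  rw [Matrix.mul_apply, Matrix.mul_apply]
  apply Finset.sum_congr rfl
  intro k _
  rcases eq_or_ne i k with rfl | hik
  · rcases eq_or_ne i j with rfl | hij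
    · ring
    · rw [hB i j hij, hA i j hij]
      simp
  · rcases eq_or_ne k j with rfl | hkj
    · rw [hA i k hik, hB i k hik]
      simp
    · rw [hB k j hkj, hA k j hkj]
      simp

lemma reverse_dir {n : ℕ} (E Q U X : Matrix (Fin n) (Fin n) ℂ)
    (hU : U ∈ Matrix.unitaryGroup (Fin n) ℂ) (hX : IsUnit X)
    (hoffE : ∀ i j, i ≠ j → (U * E * X) i j = 0)
    (hoffQ : ∀ i j, i ≠ j → (U * Q * X) i j = 0)
    (himE : ∀ i j, ((U * E * X) i j).im = 0)
    (himQ : ∀ i j, ((U * Q * X) i j).im = 0) :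
    Eᴴ * Q = Qᴴ * E := by
  have hXH : IsUnit Xᴴ := by
    rw [← Matrix.star_eq_conjTranspose]
    exact hX.star
  have hUs : Uᴴ * U = 1 := Matrix.mem_unitaryGroup_iff'.1 hU
  set A := U * E * X with hA
  set B := U * Q * X with hB
  have hAH : Aᴴ = A := diag_real_herm A hoffE himE
  have hBH : Bᴴ = B := diag_real_herm B hoffQ himQ
  have hcomm : A * B = B * A := diag_comm A B hoffE hoffQ
  have key : Xᴴ * (Eᴴ * Q) * X = Xᴴ * (Qᴴ * E) * X := by
    rw [← conj_reduce U X E Q hUs, ← conj_reduce U X Q E hUs, ← hA, ← hB, hAH, hBH, hcomm]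
  have key2 : Xᴴ * (Eᴴ * Q) = Xᴴ * (Qᴴ * E) := hX.mul_right_cancel key
  exact hXH.mul_left_cancel key2

lemma psd_diag_nonneg {n : ℕ} {M : Matrix (Fin n) (Fin n) ℂ} (hM : M.PosSemidef) (k : Fin n) :
    0 ≤ M k k := by
  have := hM.dotProduct_mulVec_nonneg (Pi.single k 1)
  simpa [dotProduct, Matrix.mulVec, Pi.single_apply, Finset.sum_ite_eq,
    Finset.sum_ite_eq'] using this

open scoped MatrixOrder in
lemma key {n : ℕ} (E Q : Matrix (Fin n) (Fin n) ℂ)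
    (hreg : ∃ μ : ℂ, (μ • E - Q).det ≠ 0) (hherm : Eᴴ * Q = Qᴴ * E) :
    ∃ U X : Matrix (Fin n) (Fin n) ℂ,
      U ∈ Matrix.unitaryGroup (Fin n) ℂ ∧ IsUnit X ∧
      (∀ i j, i ≠ j → (U * E * X) i j = 0) ∧
      (∀ i j, i ≠ j → (U * Q * X) i j = 0) ∧
      (∀ i j, ((U * E * X) i j).im = 0) ∧
      (∀ i j, ((U * Q * X) i j).im = 0) ∧
      (U * E * X) ^ 2 + (U * Q * X) ^ 2 = 1 ∧
      ((Eᴴ * Q).PosSemidef →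
        (∀ i, 0 ≤ ((U * E * X) i i).re) ∧ (∀ i, 0 ≤ ((U * Q * X) i i).re)) := by
  classical
  have hT := pencil_posDef E Q hreg
  set T := Eᴴ * E + Qᴴ * Q with hTdef
  set S := CFC.sqrt T with hSdef
  have hSsq : S * S = T := CFC.sqrt_mul_sqrt_self T hT.posSemidef.nonneg
  have hSH : Sᴴ = S := (CFC.sqrt_nonneg T).posSemidef.1
  have hdetS : IsUnit S.det := by
    have hTdet : T.det ≠ 0 := ne_of_gt hT.det_pos
    have : S.det * S.det = T.det := by rw [← Matrix.det_mul, hSsq]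
    exact isUnit_iff_ne_zero.2 (fun h => hTdet (by rw [← this, h, mul_zero]))
  set R := S⁻¹ with hRdef
  have hSR : S * R = 1 := Matrix.mul_nonsing_inv _ hdetS
  have hRS : R * S = 1 := Matrix.nonsing_inv_mul _ hdetS
  have hRH : Rᴴ = R := by rw [hRdef, Matrix.conjTranspose_nonsing_inv, hSH]
  -- P and N
  set P := E + Complex.I • Q with hPdef
  set N := E - Complex.I • Q with hNdef
  have hstarI : (star Complex.I : ℂ) = -Complex.I := by
    simp [Complex.star_def, Complex.conj_I]
  have hPH : Pᴴ = Eᴴ - Complex.I • Qᴴ := by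
    rw [hPdef, conjTranspose_add, conjTranspose_smul, hstarI]
    module
  have hNH : Nᴴ = Eᴴ + Complex.I • Qᴴ := by
    rw [hNdef, conjTranspose_sub, conjTranspose_smul, hstarI]
    module
  have hPP : Pᴴ * P = T := by
    rw [hPH, hPdef, hTdef]
    rw [sub_mul, mul_add, mul_add, smul_mul_assoc, smul_mul_assoc,
      mul_smul_comm, mul_smul_comm, smul_smul, hherm]
    have hII : Complex.I * Complex.I = -1 := Complex.I_mul_I
    rw [hII]
    module
  have hNN : Nᴴ * N = T := by
    rw [hNH, hNdef, hTdef]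
    rw [add_mul, mul_sub, mul_sub, smul_mul_assoc, smul_mul_assoc,
      mul_smul_comm, mul_smul_comm, smul_smul, hherm]
    have hII : Complex.I * Complex.I = -1 := Complex.I_mul_I
    rw [hII]
    module
  set Z := P * R with hZdef
  set Y := N * R with hYdef
  have sandwich : ∀ M : Matrix (Fin n) (Fin n) ℂ, Mᴴ * M = T → (M * R)ᴴ * (M * R) = 1 := by
    intro M hM
    rw [conjTranspose_mul, hRH]
    calc R * Mᴴ * (M * R) = R * (Mᴴ * M) * R := by simp only [Matrix.mul_assoc]
      _ = R * (S * S) * R := by rw [hM, hSsq]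
      _ = (R * S) * (S * R) := by simp only [Matrix.mul_assoc]
      _ = 1 := by rw [hRS, hSR, one_mul]
  have hZZ1 : Zᴴ * Z = 1 := sandwich P hPP
  have hYY1 : Yᴴ * Y = 1 := sandwich N hNN
  have hZ1Z : Z * Zᴴ = 1 := mul_eq_one_comm.1 hZZ1
  have hY1Y : Y * Yᴴ = 1 := mul_eq_one_comm.1 hYY1
  set V := Zᴴ * Y with hVdef
  have hVmem : V ∈ Matrix.unitaryGroup (Fin n) ℂ := by
    rw [Matrix.mem_unitaryGroup_iff']
    show Vᴴ * V = 1
    rw [hVdef, conjTranspose_mul, conjTranspose_conjTranspose]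
    calc Yᴴ * Z * (Zᴴ * Y) = Yᴴ * (Z * Zᴴ) * Y := by simp only [Matrix.mul_assoc]
      _ = Yᴴ * Y := by rw [hZ1Z, mul_one]
      _ = 1 := hYY1
  obtain ⟨W, hWmem, d, hVW⟩ := unitary_diag V hVmem
  have hWW1 : Wᴴ * W = 1 := by
    rw [← Matrix.star_eq_conjTranspose]; exact mem_unitaryGroup_iff'.1 hWmem
  have hW1W : W * Wᴴ = 1 := by
    rw [← Matrix.star_eq_conjTranspose]; exact mem_unitaryGroup_iff.1 hWmem
  have hDeq : Wᴴ * V * W = Matrix.diagonal d := by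
    rw [Matrix.mul_assoc, hVW, ← Matrix.mul_assoc, hWW1, one_mul]
  have hVV1 : Vᴴ * V = 1 := mem_unitaryGroup_iff'.1 hVmem
  have hdd : ∀ k, star (d k) * d k = 1 := by
    intro k
    have h1 : (Matrix.diagonal d)ᴴ * Matrix.diagonal d = 1 := by
      rw [← hDeq]
      rw [conjTranspose_mul, conjTranspose_mul, conjTranspose_conjTranspose]
      calc Wᴴ * (Vᴴ * W) * (Wᴴ * V * W) = Wᴴ * Vᴴ * (W * Wᴴ) * V * W := by
            simp only [Matrix.mul_assoc]
        _ = Wᴴ * (Vᴴ * V) * W := by rw [hW1W]; simp only [Matrix.mul_assoc, Matrix.one_mul]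
        _ = 1 := by rw [hVV1, mul_one, hWW1]
    have := congrFun (congrFun h1 k) k
    simpa [Matrix.diagonal_conjTranspose, Matrix.diagonal_mul_diagonal,
      Matrix.diagonal_apply_eq, Matrix.one_apply_eq] using this
  -- choose square roots
  have hex : ∀ k, ∃ z : ℂ, z ^ 2 = star (d k) := fun k =>
    IsAlgClosed.exists_pow_nat_eq (star (d k)) (n := 2) (by norm_num)
  choose f hf using hex
  set c : Fin n → ℂ := fun k => f k * (1 + d k) / 2 with hcdef
  set s : Fin n → ℂ := fun k => -Complex.I * f k * (1 - d k) / 2 with hsdef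
  have hcconj : ∀ k, (starRingEnd ℂ) (c k) = c k := fun k => (cx_facts _ _ (hdd k) (hf k)).1
  have hsconj : ∀ k, (starRingEnd ℂ) (s k) = s k := fun k => (cx_facts _ _ (hdd k) (hf k)).2.1
  have hcs1 : ∀ k, c k ^ 2 + s k ^ 2 = 1 := fun k => (cx_facts _ _ (hdd k) (hf k)).2.2.1
  have hff : ∀ k, (starRingEnd ℂ) (f k) * f k = 1 := fun k => (cx_facts _ _ (hdd k) (hf k)).2.2.2
  set ε : Fin n → ℂ := fun k => if (c k).re < 0 ∨ (s k).re < 0 then -1 else 1 with hεdef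
  have hεcases : ∀ k, ε k = 1 ∨ ε k = -1 := by
    intro k
    by_cases h : (c k).re < 0 ∨ (s k).re < 0
    · right; simp [hεdef, h]
    · left; simp [hεdef, h]
  have hε2 : ∀ k, ε k * ε k = 1 := by
    intro k; rcases hεcases k with h | h <;> rw [h] <;> norm_num
  have hεconj : ∀ k, (starRingEnd ℂ) (ε k) = ε k := by
    intro k; rcases hεcases k with h | h <;> rw [h] <;> simp
  set g : Fin n → ℂ := fun k => ε k * f k with hgdef
  have hgg : ∀ k, g k * star (g k) = 1 := by
    intro k
    have h1 : (star (g k) : ℂ) = (starRingEnd ℂ) (ε k) * (starRingEnd ℂ) (f k) := by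
      rw [hgdef]; exact map_mul (starRingEnd ℂ) _ _
    rw [hgdef, h1, hεconj]
    have h2 : f k * (starRingEnd ℂ) (f k) = 1 := by rw [mul_comm]; exact hff k
    calc ε k * f k * (ε k * (starRingEnd ℂ) (f k))
        = (ε k * ε k) * (f k * (starRingEnd ℂ) (f k)) := by ring
      _ = 1 := by rw [hε2, h2, one_mul]
  set U := Matrix.diagonal g * Wᴴ * Zᴴ with hUdef
  set X := R * W with hXdef
  have hUH : Uᴴ = Z * (W * Matrix.diagonal (star g)) := by
    rw [hUdef, Matrix.conjTranspose_mul (Matrix.diagonal g * Wᴴ) Zᴴ,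
      Matrix.conjTranspose_mul (Matrix.diagonal g) Wᴴ,
      Matrix.conjTranspose_conjTranspose, Matrix.conjTranspose_conjTranspose,
      Matrix.diagonal_conjTranspose]
  have hUU : U * Uᴴ = 1 := by
    rw [hUH, hUdef]
    calc Matrix.diagonal g * Wᴴ * Zᴴ * (Z * (W * Matrix.diagonal (star g)))
        = Matrix.diagonal g * Wᴴ * ((Zᴴ * Z) * (W * Matrix.diagonal (star g))) := by
          simp only [Matrix.mul_assoc]
      _ = Matrix.diagonal g * ((Wᴴ * W) * Matrix.diagonal (star g)) := by
          rw [hZZ1, one_mul]; simp only [Matrix.mul_assoc]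
      _ = Matrix.diagonal g * Matrix.diagonal (star g) := by rw [hWW1, one_mul]
      _ = 1 := by
          rw [Matrix.diagonal_mul_diagonal]
          have : (fun k => g k * star g k) = fun _ : Fin n => (1 : ℂ) := by
            funext k; exact hgg k
          rw [this, Matrix.diagonal_one]
  have hUmem : U ∈ Matrix.unitaryGroup (Fin n) ℂ := by
    rw [Matrix.mem_unitaryGroup_iff, Matrix.star_eq_conjTranspose]
    exact hUU
  have hU'U : Uᴴ * U = 1 := mul_eq_one_comm.1 hUU
  have hXinv : X * (Wᴴ * S) = 1 := by
    rw [hXdef]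
    calc R * W * (Wᴴ * S) = R * ((W * Wᴴ) * S) := by simp only [Matrix.mul_assoc]
      _ = R * S := by rw [hW1W, one_mul]
      _ = 1 := hRS
  have hXunit : IsUnit X := by
    rw [Matrix.isUnit_iff_isUnit_det]
    exact IsUnit.of_mul_eq_one (Wᴴ * S).det (by rw [← Matrix.det_mul, hXinv, Matrix.det_one])
  have hPN : P + N = (2 : ℂ) • E := by rw [hPdef, hNdef]; module
  have hPNm : P - N = (2 * Complex.I) • Q := by rw [hPdef, hNdef]; module
  have hEReq : Z + Y = (2 : ℂ) • (E * R) := by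
    rw [hZdef, hYdef, ← add_mul, hPN, smul_mul_assoc]
  have hQReq : Z - Y = (2 * Complex.I) • (Q * R) := by
    rw [hZdef, hYdef, ← sub_mul, hPNm, smul_mul_assoc]
  have hER : E * R = (1/2 : ℂ) • (Z + Y) := by
    rw [hEReq, smul_smul]
    norm_num
  have hQR : Q * R = (-Complex.I/2 : ℂ) • (Z - Y) := by
    rw [hQReq, smul_smul]
    have h1 : (-Complex.I/2 : ℂ) * (2 * Complex.I) = 1 := by
      have h2 : Complex.I * Complex.I = -1 := Complex.I_mul_I
      calc (-Complex.I/2 : ℂ) * (2 * Complex.I) = -(Complex.I * Complex.I) := by ring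
        _ = 1 := by rw [h2]; norm_num
    rw [h1, one_smul]
  have hZE : Zᴴ * (E * R) = (1/2 : ℂ) • (1 + V) := by
    rw [hER, mul_smul_comm, mul_add, hZZ1, ← hVdef]
  have hZQ : Zᴴ * (Q * R) = (-Complex.I/2 : ℂ) • (1 - V) := by
    rw [hQR, mul_smul_comm, mul_sub, hZZ1, ← hVdef]
  have hWVW : Wᴴ * ((1 : Matrix (Fin n) (Fin n) ℂ) + V) * W = 1 + Matrix.diagonal d := by
    rw [mul_add, mul_one, add_mul, hWW1, hDeq]
  have hWVW' : Wᴴ * ((1 : Matrix (Fin n) (Fin n) ℂ) - V) * W = 1 - Matrix.diagonal d := by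
    rw [mul_sub, mul_one, sub_mul, hWW1, hDeq]
  have hUEX : U * E * X = Matrix.diagonal (fun k => ε k * c k) := by
    have h1 : U * E * X = Matrix.diagonal g * Wᴴ * (Zᴴ * (E * R)) * W := by
      rw [hUdef, hXdef]; simp only [Matrix.mul_assoc]
    rw [h1, hZE, mul_smul_comm, smul_mul_assoc]
    have h2 : Matrix.diagonal g * Wᴴ * (1 + V) * W
        = Matrix.diagonal g * (Wᴴ * (1 + V) * W) := by simp only [Matrix.mul_assoc]
    rw [h2, hWVW, mul_add, mul_one, Matrix.diagonal_mul_diagonal, Matrix.diagonal_add,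
      ← Matrix.diagonal_smul]
    exact congrArg Matrix.diagonal (funext fun k => by
      simp only [Pi.smul_apply, smul_eq_mul]
      ring)
  have hUQX : U * Q * X = Matrix.diagonal (fun k => ε k * s k) := by
    have h1 : U * Q * X = Matrix.diagonal g * Wᴴ * (Zᴴ * (Q * R)) * W := by
      rw [hUdef, hXdef]; simp only [Matrix.mul_assoc]
    rw [h1, hZQ, mul_smul_comm, smul_mul_assoc]
    have h2 : Matrix.diagonal g * Wᴴ * (1 - V) * W
        = Matrix.diagonal g * (Wᴴ * (1 - V) * W) := by simp only [Matrix.mul_assoc]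
    rw [h2, hWVW', mul_sub, mul_one, Matrix.diagonal_mul_diagonal, Matrix.diagonal_sub,
      ← Matrix.diagonal_smul]
    exact congrArg Matrix.diagonal (funext fun k => by
      simp only [Pi.smul_apply, smul_eq_mul]
      ring)
  -- real entries
  have hcim : ∀ k, (ε k * c k).im = 0 := by
    intro k
    rw [← Complex.conj_eq_iff_im, _root_.map_mul, hεconj, hcconj]
  have hsim : ∀ k, (ε k * s k).im = 0 := by
    intro k
    rw [← Complex.conj_eq_iff_im, _root_.map_mul, hεconj, hsconj]
  refine ⟨U, X, hUmem, hXunit, ?_, ?_, ?_, ?_, ?_, ?_⟩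
  · intro i j hij; rw [hUEX]; exact Matrix.diagonal_apply_ne _ hij
  · intro i j hij; rw [hUQX]; exact Matrix.diagonal_apply_ne _ hij
  · intro i j
    rw [hUEX]
    rcases eq_or_ne i j with rfl | hij
    · rw [Matrix.diagonal_apply_eq]; exact hcim i
    · rw [Matrix.diagonal_apply_ne _ hij]; rfl
  · intro i j
    rw [hUQX]
    rcases eq_or_ne i j with rfl | hij
    · rw [Matrix.diagonal_apply_eq]; exact hsim i
    · rw [Matrix.diagonal_apply_ne _ hij]; rfl
  · rw [hUEX, hUQX, pow_two, pow_two, Matrix.diagonal_mul_diagonal,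
      Matrix.diagonal_mul_diagonal, Matrix.diagonal_add]
    have heq : (fun k => (ε k * c k) * (ε k * c k) + (ε k * s k) * (ε k * s k))
        = fun _ : Fin n => (1 : ℂ) := by
      funext k
      calc (ε k * c k) * (ε k * c k) + (ε k * s k) * (ε k * s k)
          = (ε k * ε k) * (c k ^ 2 + s k ^ 2) := by ring
        _ = 1 := by rw [hε2, hcs1, one_mul]
    rw [heq, Matrix.diagonal_one]
  · intro hpsd
    have hXEQX : (Xᴴ * (Eᴴ * Q) * X).PosSemidef := hpsd.conjTranspose_mul_mul_same X
    have hdiag : Xᴴ * (Eᴴ * Q) * X = Matrix.diagonal (fun k => c k * s k) := by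
      rw [← conj_reduce U X E Q hU'U, hUEX, hUQX, Matrix.diagonal_conjTranspose,
        Matrix.diagonal_mul_diagonal]
      refine congrArg Matrix.diagonal (funext fun k => ?_)
      have h1 : (star (fun k => ε k * c k) k : ℂ) = ε k * c k := by
        show (starRingEnd ℂ) (ε k * c k) = ε k * c k
        rw [_root_.map_mul, hεconj, hcconj]
      calc (star (fun k => ε k * c k) k : ℂ) * (ε k * s k)
          = (ε k * c k) * (ε k * s k) := by rw [h1]
        _ = (ε k * ε k) * (c k * s k) := by ring
        _ = c k * s k := by rw [hε2, one_mul]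
    have hnn : ∀ k, 0 ≤ (c k).re * (s k).re := by
      intro k
      have h0 : (0 : ℂ) ≤ Matrix.diagonal (fun k => c k * s k) k k := by
        rw [← hdiag]; exact psd_diag_nonneg hXEQX k
      rw [Matrix.diagonal_apply_eq] at h0
      have hre := (Complex.le_def.1 h0).1
      have hc : (c k).im = 0 := by rw [← Complex.conj_eq_iff_im]; exact hcconj k
      have hs : (s k).im = 0 := by rw [← Complex.conj_eq_iff_im]; exact hsconj k
      have : (c k * s k).re = (c k).re * (s k).re := by
        rw [Complex.mul_re, hc, hs]; ring
      rw [this] at hre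
      simpa using hre
    have hsign : ∀ k, 0 ≤ (ε k * c k).re ∧ 0 ≤ (ε k * s k).re := by
      intro k
      by_cases h : (c k).re < 0 ∨ (s k).re < 0
      · have hεk : ε k = -1 := by simp [hεdef, h]
        rw [hεk, neg_one_mul, neg_one_mul, Complex.neg_re, Complex.neg_re]
        have := hnn k
        rcases h with h | h
        · constructor
          · linarith
          · nlinarith
        · constructor
          · nlinarith
          · linarith
      · have hεk : ε k = 1 := by simp [hεdef, h]
        push_neg at h
        rw [hεk, one_mul, one_mul]
        exact ⟨le_of_not_gt (by simpa using h.1), le_of_not_gt (by simpa using h.2)⟩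
    constructor
    · intro i
      rw [hUEX, Matrix.diagonal_apply_eq]
      exact (hsign i).1
    · intro i
      rw [hUQX, Matrix.diagonal_apply_eq]
      exact (hsign i).2

/-- Proposition 3.1 (canonical form for regular pencils `λE - Q` with `EᴴQ = QᴴE`). -/
theorem stmt_0 {n : ℕ} (E Q : Matrix (Fin n) (Fin n) ℂ)
    (hreg : ∃ μ : ℂ, (μ • E - Q).det ≠ 0) :
    (Eᴴ * Q = Qᴴ * E ↔
      ∃ U X : Matrix (Fin n) (Fin n) ℂ,
        U ∈ Matrix.unitaryGroup (Fin n) ℂ ∧ IsUnit X ∧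
        (∀ i j, i ≠ j → (U * E * X) i j = 0) ∧
        (∀ i j, i ≠ j → (U * Q * X) i j = 0) ∧
        (∀ i j, ((U * E * X) i j).im = 0) ∧
        (∀ i j, ((U * Q * X) i j).im = 0) ∧
        (U * E * X) ^ 2 + (U * Q * X) ^ 2 = 1) ∧
    (Eᴴ * Q = Qᴴ * E → (Eᴴ * Q).PosSemidef →
      ∃ U X : Matrix (Fin n) (Fin n) ℂ,
        U ∈ Matrix.unitaryGroup (Fin n) ℂ ∧ IsUnit X ∧
        (∀ i j, i ≠ j → (U * E * X) i j = 0) ∧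
        (∀ i j, i ≠ j → (U * Q * X) i j = 0) ∧
        (∀ i j, ((U * E * X) i j).im = 0) ∧
        (∀ i j, ((U * Q * X) i j).im = 0) ∧
        (U * E * X) ^ 2 + (U * Q * X) ^ 2 = 1 ∧
        (∀ i, 0 ≤ ((U * E * X) i i).re) ∧
        (∀ i, 0 ≤ ((U * Q * X) i i).re)) := by
  constructor
  · constructor
    · intro hherm
      obtain ⟨U, X, h1, h2, h3, h4, h5, h6, h7, _⟩ := key E Q hreg hherm
      exact ⟨U, X, h1, h2, h3, h4, h5, h6, h7⟩
    · rintro ⟨U, X, hU, hX, hoffE, hoffQ, himE, himQ, _⟩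
      exact reverse_dir E Q U X hU hX hoffE hoffQ himE himQ
  · intro hherm hpsd
    obtain ⟨U, X, h1, h2, h3, h4, h5, h6, h7, h8⟩ := key E Q hreg hherm
    obtain ⟨h9, h10⟩ := h8 hpsd
    exact ⟨U, X, h1, h2, h3, h4, h5, h6, h7, h9, h10⟩
end

section
/- Let E, Q ∈ ℂ^{m×n} be such that EᴴQ = QᴴE and EQᴴ = QEᴴ. Then there exist unitary matrices U ∈ ℂ^{m×m} and V ∈ ℂ^{n×n} such that UEV and UQV are diagonal with real entries (i.e., all entries with row index different from column index vanish, and the diagonal entries are real). Moreover, if in addition EᴴQ is positive semidefinite, then U and V can be chosen so that all entries of UEV and of UQV are nonnegative. -/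
open Matrix ComplexOrder
open Module LinearMap

section AuxLemmas

theorem aux_basis {E : Type*} [NormedAddCommGroup E] [InnerProductSpace ℂ E]
    [FiniteDimensional ℂ E] {n d : ℕ} (hn : Module.finrank ℂ E = n)
    (L : Fin d → E →ₗ[ℂ] E) (hsym : ∀ i, (L i).IsSymmetric)
    (hcomm : Pairwise (Function.onFun Commute L)) :
    ∃ (v : Fin n → E) (χ : Fin n → Fin d → ℂ),
      Orthonormal ℂ v ∧ ∀ j i, L i (v j) = χ j i • v j := by
  classical
  let S : Set (Fin d → ℂ) := {χ | (⨅ i, Module.End.eigenspace (L i) (χ i)) ≠ ⊥}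
  have hSfin : S.Finite := by
    apply Set.Finite.subset (Set.Finite.pi (fun i => Module.End.finite_hasEigenvalue (L i)))
    intro χ hχ
    have h0 : (⨅ i, Module.End.eigenspace (L i) (χ i)) ≠ ⊥ := hχ
    rw [Submodule.ne_bot_iff] at h0
    obtain ⟨x, hx, hx0⟩ := h0
    exact fun i _ => Module.End.hasEigenvalue_of_hasEigenvector
      ⟨(Submodule.mem_iInf _).1 hx i, hx0⟩
  haveI : Fintype ↥S := hSfin.fintype
  let V : ↥S → Submodule ℂ E := fun χ => ⨅ i, Module.End.eigenspace (L i) (χ.1 i)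
  have hV' : OrthogonalFamily ℂ (fun χ : ↥S => V χ) (fun χ => (V χ).subtypeₗᵢ) :=
    OrthogonalFamily.comp
      (LinearMap.IsSymmetric.orthogonalFamily_iInf_eigenspaces hsym) Subtype.val_injective
  have hVsup : (⨆ χ : ↥S, V χ) = ⊤ := by
    rw [← LinearMap.IsSymmetric.iSup_iInf_eq_top_of_commute hsym hcomm]
    apply le_antisymm
    · exact iSup_le fun χ => le_iSup_of_le χ.1 le_rfl
    · refine iSup_le fun χ => ?_
      by_cases h : χ ∈ S
      · exact le_iSup_of_le ⟨χ, h⟩ le_rfl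
      · simp only [S, Set.mem_setOf_eq, not_not] at h
        rw [h]
        exact bot_le
  have hV : DirectSum.IsInternal V := by
    rw [hV'.isInternal_iff]
    rw [hVsup, Submodule.top_orthogonal_eq_bot]
  let b := hV.subordinateOrthonormalBasis hn hV'
  refine ⟨fun j => b j, fun j => (hV.subordinateOrthonormalBasisIndex hn j hV').1,
    b.orthonormal, ?_⟩
  intro j i
  have hmem := hV.subordinateOrthonormalBasis_subordinate hn j hV'
  exact Module.End.mem_eigenspace_iff.1 ((Submodule.mem_iInf _).1 hmem i)

theorem aux_joint_eigen {n d : ℕ} (T : Fin d → Matrix (Fin n) (Fin n) ℂ)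
    (hherm : ∀ i, (T i).IsHermitian) (hcomm : ∀ i j, T i * T j = T j * T i) :
    ∃ (v : Fin n → (Fin n → ℂ)) (χ : Fin n → Fin d → ℂ),
      (∀ j k, star (v j) ⬝ᵥ v k = if j = k then 1 else 0) ∧
      (∀ j i, (T i) *ᵥ (v j) = χ j i • v j) := by
  classical
  let L : Fin d → (EuclideanSpace ℂ (Fin n) →ₗ[ℂ] EuclideanSpace ℂ (Fin n)) :=
    fun i => Matrix.toEuclideanLin (T i)
  have hsym : ∀ i, (L i).IsSymmetric := fun i => (Matrix.isHermitian_iff_isSymmetric).1 (hherm i)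
  have hmul : ∀ a b : Fin d, L a * L b = Matrix.toEuclideanLin (T a * T b) := by
    intro a b
    apply LinearMap.ext
    intro x
    show Matrix.toEuclideanLin (T a) (Matrix.toEuclideanLin (T b) x) = _
    rw [Matrix.toEuclideanLin_apply, Matrix.toEuclideanLin_apply, Matrix.toEuclideanLin_apply]
    simp [Matrix.mulVec_mulVec]
  have hLcomm : Pairwise (Function.onFun Commute L) := by
    intro i j _
    show L i * L j = L j * L i
    rw [hmul, hmul, hcomm i j]
  obtain ⟨v, χ, hON, heig⟩ := aux_basis (E := EuclideanSpace ℂ (Fin n))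
    finrank_euclideanSpace_fin L hsym hLcomm
  refine ⟨fun j => WithLp.equiv 2 _ (v j), χ, ?_, ?_⟩
  · intro j k
    have hb := hON
    rw [orthonormal_iff_ite] at hb
    rw [dotProduct_comm, ← EuclideanSpace.inner_eq_star_dotProduct]
    exact hb j k
  · intro j i
    have h2 := heig j i
    have h3 := congrArg (WithLp.equiv 2 (Fin n → ℂ)) h2
    simpa [L, Matrix.toEuclideanLin_apply] using h3

theorem aux_dp {m n : ℕ} (A B : Matrix (Fin m) (Fin n) ℂ) (x y : Fin n → ℂ) :
    star (A *ᵥ x) ⬝ᵥ (B *ᵥ y) = star x ⬝ᵥ ((Aᴴ * B) *ᵥ y) := by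
  rw [star_mulVec, Matrix.dotProduct_mulVec, Matrix.vecMul_vecMul, ← Matrix.dotProduct_mulVec]

theorem aux_selfdot {p : ℕ} (x : Fin p → ℂ) :
    star x ⬝ᵥ x = ((∑ i, Complex.normSq (x i) : ℝ) : ℂ) := by
  simp [dotProduct, Complex.normSq_eq_conj_mul_self]

theorem aux_conj_dot {p : ℕ} (x y : Fin p → ℂ) :
    (starRingEnd ℂ) (star x ⬝ᵥ y) = star y ⬝ᵥ x := by
  simp [dotProduct, map_sum, mul_comm]

theorem aux_card_le {m k : ℕ} (u : Fin k → (Fin m → ℂ))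
    (h : ∀ j j', star (u j) ⬝ᵥ u j' = if j = j' then 1 else 0) : k ≤ m := by
  have horth : Orthonormal ℂ (fun j => (WithLp.equiv 2 (Fin m → ℂ)).symm (u j)) := by
    rw [orthonormal_iff_ite]
    intro j j'
    rw [WithLp.equiv_symm_apply, EuclideanSpace.inner_toLp_toLp, dotProduct_comm, h j j']
  have := horth.linearIndependent.fintype_card_le_finrank
  simpa using this

theorem aux_norm {p : ℕ} (x : Fin p → ℂ) (s : ℝ)
    (hss : (s : ℂ) * (s : ℂ) = star x ⬝ᵥ x) (hsne : (s : ℂ) ≠ 0) :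
    star (((s : ℂ))⁻¹ • x) ⬝ᵥ (((s : ℂ))⁻¹ • x) = 1 := by
  rw [star_smul, smul_dotProduct, dotProduct_smul, ← hss]
  have : star ((s : ℂ))⁻¹ = ((s : ℂ))⁻¹ := by
    rw [RCLike.star_def, map_inv₀, Complex.conj_ofReal]
  rw [this]
  simp only [smul_eq_mul]
  field_simp

theorem aux_extend {m : ℕ} (k : ℕ) (u₀ : Fin m → (Fin m → ℂ))
    (h : ∀ i i' : Fin m, (i : ℕ) < k → (i' : ℕ) < k →
      star (u₀ i) ⬝ᵥ u₀ i' = if i = i' then 1 else 0) :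
    ∃ u : Fin m → (Fin m → ℂ),
      (∀ i i', star (u i) ⬝ᵥ u i' = if i = i' then 1 else 0) ∧
      (∀ i : Fin m, (i : ℕ) < k → u i = u₀ i) := by
  classical
  have hON : Orthonormal ℂ (Set.restrict {i : Fin m | (i : ℕ) < k}
      (fun i => (WithLp.equiv 2 (Fin m → ℂ)).symm (u₀ i))) := by
    rw [orthonormal_iff_ite]
    intro i i'
    simp only [Set.restrict, Set.domRestrict_apply]
    rw [WithLp.equiv_symm_apply, EuclideanSpace.inner_toLp_toLp, dotProduct_comm,
      h i.1 i'.1 i.2 i'.2]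
    by_cases hii : (i : Fin m) = (i' : Fin m)
    · rw [if_pos hii, if_pos (Subtype.ext hii)]
    · rw [if_neg hii, if_neg (fun hc => hii (congrArg Subtype.val hc))]
  obtain ⟨B, hB⟩ := hON.exists_orthonormalBasis_extension_of_card_eq (by simp)
  refine ⟨fun i => WithLp.equiv 2 _ (B i), ?_, ?_⟩
  · intro i i'
    have hb := B.orthonormal
    rw [orthonormal_iff_ite] at hb
    rw [← hb i i', EuclideanSpace.inner_eq_star_dotProduct, dotProduct_comm]; rfl
  · intro i hi
    have hBi := hB i hi
    show WithLp.equiv 2 _ (B i) = u₀ i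
    rw [hBi]
    simp

set_option maxHeartbeats 1600000 in
theorem aux_main {m n : ℕ} (E Q : Matrix (Fin m) (Fin n) ℂ)
    (h1 : Eᴴ * Q = Qᴴ * E) (h2 : E * Qᴴ = Q * Eᴴ) :
    ∃ (U : Matrix (Fin m) (Fin m) ℂ) (V : Matrix (Fin n) (Fin n) ℂ),
      U ∈ Matrix.unitaryGroup (Fin m) ℂ ∧ V ∈ Matrix.unitaryGroup (Fin n) ℂ ∧
      (∀ (i : Fin m) (j : Fin n), (i : ℕ) ≠ (j : ℕ) → (U * E * V) i j = 0) ∧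
      (∀ (i : Fin m) (j : Fin n), (i : ℕ) ≠ (j : ℕ) → (U * Q * V) i j = 0) ∧
      (∀ i j, ((U * E * V) i j).im = 0) ∧
      (∀ i j, ((U * Q * V) i j).im = 0) ∧
      ((Eᴴ * Q).PosSemidef →
        (∀ i j, 0 ≤ ((U * E * V) i j).re) ∧ (∀ i j, 0 ≤ ((U * Q * V) i j).re)) := by
  classical
  -- Hermitian-ness
  have hMh : (Eᴴ * Q).IsHermitian := by
    rw [Matrix.IsHermitian, conjTranspose_mul, conjTranspose_conjTranspose, ← h1]
  -- commutation relations
  have hMN : (Eᴴ * Q) * (Eᴴ * E) = (Eᴴ * E) * (Eᴴ * Q) := by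
    calc (Eᴴ * Q) * (Eᴴ * E) = Eᴴ * ((Q * Eᴴ) * E) := by simp only [Matrix.mul_assoc]
      _ = Eᴴ * ((E * Qᴴ) * E) := by rw [h2]
      _ = (Eᴴ * E) * (Qᴴ * E) := by simp only [Matrix.mul_assoc]
      _ = (Eᴴ * E) * (Eᴴ * Q) := by rw [h1]
  have hMP : (Eᴴ * Q) * (Qᴴ * Q) = (Qᴴ * Q) * (Eᴴ * Q) := by
    calc (Eᴴ * Q) * (Qᴴ * Q) = Qᴴ * ((E * Qᴴ) * Q) := by
          rw [h1]; simp only [Matrix.mul_assoc]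
      _ = Qᴴ * ((Q * Eᴴ) * Q) := by rw [h2]
      _ = (Qᴴ * Q) * (Eᴴ * Q) := by simp only [Matrix.mul_assoc]
  have hNP : (Eᴴ * E) * (Qᴴ * Q) = (Eᴴ * Q) * (Eᴴ * Q) := by
    calc (Eᴴ * E) * (Qᴴ * Q) = Eᴴ * ((E * Qᴴ) * Q) := by simp only [Matrix.mul_assoc]
      _ = Eᴴ * ((Q * Eᴴ) * Q) := by rw [h2]
      _ = (Eᴴ * Q) * (Eᴴ * Q) := by simp only [Matrix.mul_assoc]
  have hPN : (Qᴴ * Q) * (Eᴴ * E) = (Eᴴ * Q) * (Eᴴ * Q) := by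
    calc (Qᴴ * Q) * (Eᴴ * E) = Qᴴ * ((Q * Eᴴ) * E) := by simp only [Matrix.mul_assoc]
      _ = Qᴴ * ((E * Qᴴ) * E) := by rw [h2]
      _ = (Qᴴ * E) * (Qᴴ * E) := by simp only [Matrix.mul_assoc]
      _ = (Eᴴ * Q) * (Eᴴ * Q) := by rw [← h1]
  -- joint eigenbasis
  obtain ⟨v, χ, hvON, hveig⟩ := aux_joint_eigen (T := ![Eᴴ * E, Eᴴ * Q, Qᴴ * Q])
    (by
      intro i
      fin_cases i
      · exact isHermitian_conjTranspose_mul_self E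
      · exact hMh
      · exact isHermitian_conjTranspose_mul_self Q)
    (by
      intro i j
      fin_cases i <;> fin_cases j <;> simp <;>
      first
        | rfl
        | exact hMN.symm
        | exact hMN
        | exact hMP.symm
        | exact hMP
        | rw [hNP, hPN]
        | rw [hPN, hNP])
  set α : Fin n → ℂ := fun j => χ j 0 with hα
  set β : Fin n → ℂ := fun j => χ j 1 with hβ
  set γ : Fin n → ℂ := fun j => χ j 2 with hγ
  have heN : ∀ j, (Eᴴ * E) *ᵥ v j = α j • v j := by
    intro j; have := hveig j 0; simpa using this
  have heM : ∀ j, (Eᴴ * Q) *ᵥ v j = β j • v j := by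
    intro j; have := hveig j 1; simpa using this
  have heP : ∀ j, (Qᴴ * Q) *ᵥ v j = γ j • v j := by
    intro j; have := hveig j 2; simpa using this
  -- inner products between images
  have haa : ∀ j k, star (E *ᵥ v j) ⬝ᵥ (E *ᵥ v k) = α k * (if j = k then 1 else 0) := by
    intro j k
    rw [aux_dp, heN k, dotProduct_smul, hvON j k, smul_eq_mul]
  have hab : ∀ j k, star (E *ᵥ v j) ⬝ᵥ (Q *ᵥ v k) = β k * (if j = k then 1 else 0) := by
    intro j k
    rw [aux_dp, heM k, dotProduct_smul, hvON j k, smul_eq_mul]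
  have hba : ∀ j k, star (Q *ᵥ v j) ⬝ᵥ (E *ᵥ v k) = β k * (if j = k then 1 else 0) := by
    intro j k
    rw [aux_dp, ← h1, heM k, dotProduct_smul, hvON j k, smul_eq_mul]
  have hbb : ∀ j k, star (Q *ᵥ v j) ⬝ᵥ (Q *ᵥ v k) = γ k * (if j = k then 1 else 0) := by
    intro j k
    rw [aux_dp, heP k, dotProduct_smul, hvON j k, smul_eq_mul]
  -- reality and positivity facts for eigenvalues
  have hαval : ∀ j, α j = star (E *ᵥ v j) ⬝ᵥ (E *ᵥ v j) := by
    intro j; have := haa j j; rw [if_pos rfl, mul_one] at this; exact this.symm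
  have hγval : ∀ j, γ j = star (Q *ᵥ v j) ⬝ᵥ (Q *ᵥ v j) := by
    intro j; have := hbb j j; rw [if_pos rfl, mul_one] at this; exact this.symm
  have hβval : ∀ j, β j = star (E *ᵥ v j) ⬝ᵥ (Q *ᵥ v j) := by
    intro j; have := hab j j; rw [if_pos rfl, mul_one] at this; exact this.symm
  have hβreal : ∀ j, (starRingEnd ℂ) (β j) = β j := by
    intro j
    have h5 := aux_conj_dot (E *ᵥ v j) (Q *ᵥ v j)
    rw [hba j j, if_pos rfl, mul_one, ← hβval j] at h5
    exact h5
  have hβsq : ∀ j, β j * β j = α j * γ j := by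
    intro j
    have hx : (Eᴴ * E) *ᵥ ((Qᴴ * Q) *ᵥ v j) = (Eᴴ * Q) *ᵥ ((Eᴴ * Q) *ᵥ v j) := by
      rw [Matrix.mulVec_mulVec, Matrix.mulVec_mulVec, hNP]
    rw [heP j, Matrix.mulVec_smul, heN j, heM j, Matrix.mulVec_smul, heM j,
      smul_smul, smul_smul] at hx
    have hv0 : v j ≠ 0 := by
      intro h0
      have := hvON j j
      rw [h0] at this
      simp at this
    have h4 : star (v j) ⬝ᵥ ((γ j * α j) • v j) = star (v j) ⬝ᵥ ((β j * β j) • v j) := by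
      rw [hx]
    rw [dotProduct_smul, dotProduct_smul, hvON j j, if_pos rfl] at h4
    simp only [smul_eq_mul, mul_one] at h4
    linear_combination -h4
  -- indices with nonzero images
  set S₀ : Finset (Fin n) := Finset.univ.filter (fun j => E *ᵥ v j ≠ 0 ∨ Q *ᵥ v j ≠ 0) with hS₀
  have hmemS₀ : ∀ j, j ∈ S₀ ↔ (E *ᵥ v j ≠ 0 ∨ Q *ᵥ v j ≠ 0) := by
    intro j; simp [hS₀]
  have hβpos : (Eᴴ * Q).PosSemidef → ∀ j, 0 ≤ (β j).re := by
    intro hpsd j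
    have h0 := hpsd.dotProduct_mulVec_nonneg (v j)
    rw [heM j, dotProduct_smul, hvON j j, if_pos rfl, smul_eq_mul, mul_one] at h0
    rw [Complex.le_def] at h0
    exact h0.1
  have hβim : ∀ j, (β j).im = 0 := by
    intro j
    have := hβreal j
    rwa [Complex.conj_eq_iff_im] at this
  -- choice of diagonal data
  have hchoice : ∀ j : Fin n, ∃ (e q : ℂ) (u : Fin m → ℂ),
      E *ᵥ v j = e • u ∧ Q *ᵥ v j = q • u ∧
      e.im = 0 ∧ q.im = 0 ∧ 0 ≤ e.re ∧
      (j ∈ S₀ → star u ⬝ᵥ u = 1 ∧ ∃ c : ℂ, u = c • (E *ᵥ v j) ∨ u = c • (Q *ᵥ v j)) ∧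
      (j ∉ S₀ → u = 0) ∧
      ((Eᴴ * Q).PosSemidef → 0 ≤ q.re) := by
    intro j
    by_cases ha : E *ᵥ v j = 0
    · by_cases hb : Q *ᵥ v j = 0
      · refine ⟨0, 0, 0, by simp [ha], by simp [hb], by simp, by simp, le_refl _, ?_,
          fun _ => rfl, fun _ => by simp⟩
        intro hj
        rw [hmemS₀] at hj
        tauto
      · -- E image zero, Q image nonzero
        set r : ℝ := (∑ i, Complex.normSq ((Q *ᵥ v j) i)) with hr
        have hγr : γ j = (r : ℝ) := by rw [hγval j, aux_selfdot]
        have hγ0 : γ j ≠ 0 := by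
          intro h0
          apply hb
          rw [← dotProduct_star_self_eq_zero (v := Q *ᵥ v j), ← hγval j, h0]
        have hrpos : 0 < r := by
          rcases lt_or_eq_of_le (Finset.sum_nonneg fun i _ => Complex.normSq_nonneg ((Q *ᵥ v j) i)) with h|h
          · exact h
          · exact absurd (by rw [hγr, hr, ← h]; simp) hγ0
        set s : ℝ := Real.sqrt r with hs
        have hspos : 0 < s := Real.sqrt_pos.2 hrpos
        have hss : (s : ℂ) * (s : ℂ) = star (Q *ᵥ v j) ⬝ᵥ (Q *ᵥ v j) := by
          rw [← Complex.ofReal_mul, Real.mul_self_sqrt hrpos.le, ← hγval j, hγr]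
        have hsne : (s : ℂ) ≠ 0 := by
          simpa using hspos.ne'
        refine ⟨0, (s : ℂ), ((s : ℂ))⁻¹ • (Q *ᵥ v j), by simp [ha], ?_, by simp, by simp,
          le_refl _, ?_, ?_, fun _ => by simp [hspos.le]⟩
        · rw [smul_smul, mul_inv_cancel₀ hsne, one_smul]
        · intro _
          exact ⟨aux_norm _ s hss hsne, ((s : ℂ))⁻¹, Or.inr rfl⟩
        · intro hj
          exact absurd ((hmemS₀ j).2 (Or.inr hb)) hj
    · -- E image nonzero
      set r : ℝ := (∑ i, Complex.normSq ((E *ᵥ v j) i)) with hr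
      have hαr : α j = (r : ℝ) := by rw [hαval j, aux_selfdot]
      have hα0 : α j ≠ 0 := by
        intro h0
        apply ha
        rw [← dotProduct_star_self_eq_zero (v := E *ᵥ v j), ← hαval j, h0]
      have hrpos : 0 < r := by
        rcases lt_or_eq_of_le (Finset.sum_nonneg fun i _ => Complex.normSq_nonneg ((E *ᵥ v j) i)) with h|h
        · exact h
        · exact absurd (by rw [hαr, hr, ← h]; simp) hα0
      set s : ℝ := Real.sqrt r with hs
      have hspos : 0 < s := Real.sqrt_pos.2 hrpos
      have hss : (s : ℂ) * (s : ℂ) = star (E *ᵥ v j) ⬝ᵥ (E *ᵥ v j) := by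
        rw [← Complex.ofReal_mul, Real.mul_self_sqrt hrpos.le, ← hαval j, hαr]
      have hαs : α j = (s : ℂ) * (s : ℂ) := by rw [hss, ← hαval j]
      have hsne : (s : ℂ) ≠ 0 := by simpa using hspos.ne'
      -- Q image is parallel to E image
      have hpar : Q *ᵥ v j = (β j * (α j)⁻¹) • (E *ᵥ v j) := by
        have hz : star (Q *ᵥ v j - (β j * (α j)⁻¹) • (E *ᵥ v j)) ⬝ᵥ
            (Q *ᵥ v j - (β j * (α j)⁻¹) • (E *ᵥ v j)) = 0 := by
          have hconj : (starRingEnd ℂ) (β j * (α j)⁻¹) = β j * (α j)⁻¹ := by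
            rw [_root_.map_mul, map_inv₀, hβreal j, hαr]
            simp
          rw [star_sub, star_smul, sub_dotProduct, dotProduct_sub,
            dotProduct_sub, smul_dotProduct, smul_dotProduct,
            dotProduct_smul, dotProduct_smul,
            hbb j j, hba j j, hab j j, haa j j, if_pos rfl]
          rw [show star (β j * (α j)⁻¹) = (starRingEnd ℂ) (β j * (α j)⁻¹) from rfl, hconj]
          simp only [smul_eq_mul, mul_one]
          field_simp
          linear_combination -hβsq j
        rw [dotProduct_star_self_eq_zero, sub_eq_zero] at hz
        exact hz
      refine ⟨(s : ℂ), β j * ((s : ℂ))⁻¹, ((s : ℂ))⁻¹ • (E *ᵥ v j), ?_, ?_, by simp,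
        ?_, by simp [hspos.le], ?_, ?_, ?_⟩
      · rw [smul_smul, mul_inv_cancel₀ hsne, one_smul]
      · rw [hpar, smul_smul, hαs, mul_inv, ← mul_assoc]
      · -- q.im = 0
        rw [← Complex.ofReal_inv, Complex.mul_im, hβim j]
        simp
      · intro _
        exact ⟨aux_norm _ s hss hsne, ((s : ℂ))⁻¹, Or.inl rfl⟩
      · intro hj
        exact absurd ((hmemS₀ j).2 (Or.inl ha)) hj
      · intro hpsd
        rw [← Complex.ofReal_inv, Complex.mul_re, hβim j]
        simp only [Complex.ofReal_re, Complex.ofReal_im, mul_zero, zero_mul, sub_zero]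
        exact mul_nonneg (hβpos hpsd j) (by positivity)
  choose ev qv uv hEv hQv hevim hqvim hevre huvS huvz hqvpos using hchoice
  -- orthogonality of the chosen direction vectors
  have huorth : ∀ j k, j ∈ S₀ → k ∈ S₀ → j ≠ k → star (uv j) ⬝ᵥ uv k = 0 := by
    intro j k hj hk hjk
    obtain ⟨-, c, hc⟩ := huvS j hj
    obtain ⟨-, c', hc'⟩ := huvS k hk
    rcases hc with h|h <;> rcases hc' with h'|h' <;> rw [h, h'] <;>
      simp [star_smul, smul_dotProduct, dotProduct_smul,
        haa j k, hab j k, hba j k, hbb j k, hjk]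
  have hunorm : ∀ j, j ∈ S₀ → star (uv j) ⬝ᵥ uv j = 1 := fun j hj => (huvS j hj).1
  -- cardinality bounds
  have hkm : S₀.card ≤ m := by
    apply aux_card_le (fun t : Fin S₀.card => uv ((S₀.orderIsoOfFin rfl) t : Fin n))
    intro t t'
    by_cases h : t = t'
    · subst h; rw [if_pos rfl]; exact hunorm _ (Finset.coe_mem _)
    · rw [if_neg h]
      refine huorth _ _ (Finset.coe_mem _) (Finset.coe_mem _) ?_
      intro hcontra
      exact h ((S₀.orderIsoOfFin rfl).injective (Subtype.ext hcontra))
  have hkn : S₀.card ≤ n := by simpa using S₀.card_le_univ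
  have hcompl : S₀ᶜ.card = n - S₀.card := by rw [Finset.card_compl]; simp
  -- the reordering
  set σ : Fin n → Fin n := fun j =>
    if h : (j : ℕ) < S₀.card then ((S₀.orderIsoOfFin rfl) ⟨j, h⟩ : Fin n)
    else ((S₀ᶜ.orderIsoOfFin hcompl) ⟨(j : ℕ) - S₀.card, by
      have := j.isLt; omega⟩ : Fin n) with hσ
  have hσS : ∀ j : Fin n, (j : ℕ) < S₀.card → σ j ∈ S₀ := by
    intro j h
    simp only [hσ, dif_pos h]
    exact Finset.coe_mem _
  have hσnS : ∀ j : Fin n, ¬((j : ℕ) < S₀.card) → σ j ∉ S₀ := by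
    intro j h
    simp only [hσ, dif_neg h]
    exact Finset.mem_compl.1 (Finset.coe_mem _)
  have hσinj : Function.Injective σ := by
    intro j j' hjj
    simp only [hσ] at hjj
    by_cases h : (j : ℕ) < S₀.card <;> by_cases h' : (j' : ℕ) < S₀.card
    · rw [dif_pos h, dif_pos h'] at hjj
      have h5 := (S₀.orderIsoOfFin rfl).injective (Subtype.ext hjj)
      have h6 := congrArg (fun t : Fin S₀.card => (t : ℕ)) h5
      exact Fin.ext h6
    · rw [dif_pos h, dif_neg h'] at hjj
      have mS : ((S₀.orderIsoOfFin rfl) ⟨j, h⟩ : Fin n) ∈ S₀ := Finset.coe_mem _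
      rw [hjj] at mS
      exact absurd mS (Finset.mem_compl.1 (Finset.coe_mem _))
    · rw [dif_neg h, dif_pos h'] at hjj
      have mS : ((S₀.orderIsoOfFin rfl) ⟨j', h'⟩ : Fin n) ∈ S₀ := Finset.coe_mem _
      rw [← hjj] at mS
      exact absurd mS (Finset.mem_compl.1 (Finset.coe_mem _))
    · rw [dif_neg h, dif_neg h'] at hjj
      have h5 := (S₀ᶜ.orderIsoOfFin hcompl).injective (Subtype.ext hjj)
      have h6 : (j : ℕ) - S₀.card = (j' : ℕ) - S₀.card := by
        simpa using congrArg (fun t : Fin (n - S₀.card) => (t : ℕ)) h5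
      have := j.isLt
      have := j'.isLt
      exact Fin.ext (by omega)
  -- extend the rows to an orthonormal family
  set u₀ : Fin m → (Fin m → ℂ) := fun i =>
    if h : (i : ℕ) < S₀.card then uv (σ ⟨(i : ℕ), lt_of_lt_of_le h hkn⟩) else 0 with hu₀
  obtain ⟨uu, huu, huu0⟩ := aux_extend S₀.card u₀ (by
    intro i i' hi hi'
    simp only [hu₀, dif_pos hi, dif_pos hi']
    by_cases h : i = i'
    · subst h
      rw [if_pos rfl]
      exact hunorm _ (hσS _ hi)
    · rw [if_neg h]
      apply huorth _ _ (hσS _ hi) (hσS _ hi')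
      intro hc
      apply h
      have := hσinj hc
      have h6 := congrArg (fun t : Fin n => (t : ℕ)) this
      exact Fin.ext h6)
  have huuv : ∀ (i : Fin m) (hi : (i : ℕ) < S₀.card),
      uu i = uv (σ ⟨(i : ℕ), lt_of_lt_of_le hi hkn⟩) := by
    intro i hi
    rw [huu0 i hi]
    simp only [hu₀, dif_pos hi]
  -- the unitary matrices
  set U : Matrix (Fin m) (Fin m) ℂ := Matrix.of (fun i l => star (uu i l)) with hUdef
  set V : Matrix (Fin n) (Fin n) ℂ := Matrix.of (fun l j => v (σ j) l) with hVdef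
  have hUmem : U ∈ Matrix.unitaryGroup (Fin m) ℂ := by
    rw [Matrix.mem_unitaryGroup_iff]
    ext i i'
    have h7 : (U * star U) i i' = star (uu i) ⬝ᵥ uu i' := by
      simp [hUdef, Matrix.mul_apply, Matrix.star_apply, dotProduct]
    rw [h7, huu i i', Matrix.one_apply]
  have hVmem : V ∈ Matrix.unitaryGroup (Fin n) ℂ := by
    rw [Matrix.mem_unitaryGroup_iff']
    ext j j'
    have h7 : (star V * V) j j' = star (v (σ j)) ⬝ᵥ v (σ j') := by
      simp [hVdef, Matrix.mul_apply, Matrix.star_apply, dotProduct]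
    rw [h7, hvON (σ j) (σ j'), Matrix.one_apply]
    by_cases h : j = j'
    · simp [h]
    · rw [if_neg (fun hc => h (hσinj hc)), if_neg h]
  have hent : ∀ (A : Matrix (Fin m) (Fin n) ℂ) i j,
      (U * A * V) i j = star (uu i) ⬝ᵥ (A *ᵥ v (σ j)) := by
    intro A i j
    simp only [Matrix.mul_apply, hUdef, hVdef, Matrix.of_apply, Matrix.mulVec,
      dotProduct, Finset.sum_mul, Finset.mul_sum, Pi.star_apply]
    rw [Finset.sum_comm]
    apply Finset.sum_congr rfl
    intro l _
    apply Finset.sum_congr rfl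
    intro t _
    ring
  -- diagonal structure
  have hDiag : ∀ (A : Matrix (Fin m) (Fin n) ℂ) (c : Fin n → ℂ),
      (∀ j, A *ᵥ v j = c j • uv j) →
      ∀ i j, (U * A * V) i j =
        if (i : ℕ) = (j : ℕ) ∧ (j : ℕ) < S₀.card then c (σ j) else 0 := by
    intro A c hA i j
    rw [hent]
    by_cases hj : (j : ℕ) < S₀.card
    · rw [hA (σ j)]
      by_cases hij : (i : ℕ) = (j : ℕ)
      · rw [if_pos ⟨hij, hj⟩]
        have hi : (i : ℕ) < S₀.card := by omega
        have h9 : (⟨(i : ℕ), lt_of_lt_of_le hi hkn⟩ : Fin n) = j := Fin.ext hij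
        have h8 : uu i = uv (σ j) := by
          rw [huuv i hi, h9]
        rw [← h8, dotProduct_smul, huu i i, if_pos rfl, smul_eq_mul, mul_one]
      · rw [if_neg (by tauto)]
        set i₀ : Fin m := ⟨(j : ℕ), lt_of_lt_of_le hj hkm⟩ with hi₀
        have hj' : (i₀ : ℕ) < S₀.card := by simp [hi₀, hj]
        have h9 : (⟨(i₀ : ℕ), lt_of_lt_of_le hj' hkn⟩ : Fin n) = j := Fin.ext (by simp [hi₀])
        have h8 : uu i₀ = uv (σ j) := by
          rw [huuv i₀ hj', h9]
        have hii₀ : i ≠ i₀ := fun hc => hij (by rw [hc, hi₀])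
        rw [← h8, dotProduct_smul, huu i i₀, if_neg hii₀, smul_eq_mul, mul_zero]
    · rw [if_neg (by tauto)]
      have hz : A *ᵥ v (σ j) = 0 := by
        rw [hA (σ j), huvz (σ j) (hσnS j hj), smul_zero]
      rw [hz, dotProduct_zero]
  have hDE := hDiag E ev hEv
  have hDQ := hDiag Q qv hQv
  refine ⟨U, V, hUmem, hVmem, ?_, ?_, ?_, ?_, ?_⟩
  · intro i j hij; rw [hDE i j, if_neg (by tauto)]
  · intro i j hij; rw [hDQ i j, if_neg (by tauto)]
  · intro i j
    rw [hDE i j]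
    split_ifs
    · exact hevim _
    · simp
  · intro i j
    rw [hDQ i j]
    split_ifs
    · exact hqvim _
    · simp
  · intro hpsd
    constructor <;> intro i j
    · rw [hDE i j]
      split_ifs
      · exact hevre _
      · simp
    · rw [hDQ i j]
      split_ifs
      · exact hqvpos _ hpsd
      · simp

end AuxLemmas

/-- Proposition 3.3: simultaneous real diagonalization of rectangular `E, Q`
with `EᴴQ = QᴴE` and `EQᴴ = QEᴴ` by unitary equivalence. -/
theorem stmt_2 {m n : ℕ} (E Q : Matrix (Fin m) (Fin n) ℂ)
    (h1 : Eᴴ * Q = Qᴴ * E) (h2 : E * Qᴴ = Q * Eᴴ) :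
    (∃ (U : Matrix (Fin m) (Fin m) ℂ) (V : Matrix (Fin n) (Fin n) ℂ),
      U ∈ Matrix.unitaryGroup (Fin m) ℂ ∧ V ∈ Matrix.unitaryGroup (Fin n) ℂ ∧
      (∀ (i : Fin m) (j : Fin n), (i : ℕ) ≠ (j : ℕ) → (U * E * V) i j = 0) ∧
      (∀ (i : Fin m) (j : Fin n), (i : ℕ) ≠ (j : ℕ) → (U * Q * V) i j = 0) ∧
      (∀ i j, ((U * E * V) i j).im = 0) ∧
      (∀ i j, ((U * Q * V) i j).im = 0)) ∧
    ((Eᴴ * Q).PosSemidef →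
      ∃ (U : Matrix (Fin m) (Fin m) ℂ) (V : Matrix (Fin n) (Fin n) ℂ),
        U ∈ Matrix.unitaryGroup (Fin m) ℂ ∧ V ∈ Matrix.unitaryGroup (Fin n) ℂ ∧
        (∀ (i : Fin m) (j : Fin n), (i : ℕ) ≠ (j : ℕ) → (U * E * V) i j = 0) ∧
        (∀ (i : Fin m) (j : Fin n), (i : ℕ) ≠ (j : ℕ) → (U * Q * V) i j = 0) ∧
        (∀ i j, ((U * E * V) i j).im = 0) ∧
        (∀ i j, ((U * Q * V) i j).im = 0) ∧
        (∀ i j, 0 ≤ ((U * E * V) i j).re) ∧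
        (∀ i j, 0 ≤ ((U * Q * V) i j).re)) := by
  obtain ⟨U, V, hU, hV, hE0, hQ0, hEim, hQim, hpos⟩ := aux_main E Q h1 h2
  constructor
  · exact ⟨U, V, hU, hV, hE0, hQ0, hEim, hQim⟩
  · intro hpsd
    obtain ⟨hEre, hQre⟩ := hpos hpsd
    exact ⟨U, V, hU, hV, hE0, hQ0, hEim, hQim, hEre, hQre⟩
end

section
/- Let E, Q ∈ ℂ^{n×n} be such that EᴴQ = QᴴE. If the pencil λE − Q is singular, i.e., det(μE − Q) = 0 for every μ ∈ ℂ, then E and Q have a common nullspace: there exists a nonzero vector x ∈ ℂⁿ with Ex = 0 and Qx = 0. -/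
open Matrix

/-- Corollary 3.6: if `EᴴQ = QᴴE` and the square pencil `λE - Q` is singular,
then `E` and `Q` have a common nullspace. -/
theorem stmt_4 {n : ℕ} (E Q : Matrix (Fin n) (Fin n) ℂ)
    (hH : Eᴴ * Q = Qᴴ * E)
    (hsing : ∀ μ : ℂ, (μ • E - Q).det = 0) :
    ∃ x : Fin n → ℂ, x ≠ 0 ∧ E *ᵥ x = 0 ∧ Q *ᵥ x = 0 := by
  obtain ⟨x, hx0, hx⟩ := (Matrix.exists_mulVec_eq_zero_iff).2 (hsing Complex.I)
  have hQx : Q *ᵥ x = Complex.I • (E *ᵥ x) := by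
    have := hx
    rw [sub_mulVec, smul_mulVec, sub_eq_zero] at this
    exact this.symm
  set y := E *ᵥ x with hy
  -- s := star y ⬝ᵥ (Q *ᵥ x)
  have key : star y ⬝ᵥ (Q *ᵥ x) = star x ⬝ᵥ ((Eᴴ * Q) *ᵥ x) := by
    rw [star_mulVec, ← mulVec_mulVec, dotProduct_mulVec, dotProduct_mulVec,
      dotProduct_mulVec, vecMul_vecMul]
  have key2 : star x ⬝ᵥ ((Qᴴ * E) *ᵥ x) = star (Q *ᵥ x) ⬝ᵥ y := by
    rw [star_mulVec, ← mulVec_mulVec, dotProduct_mulVec, dotProduct_mulVec]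
  have h1 : star y ⬝ᵥ (Q *ᵥ x) = Complex.I * (star y ⬝ᵥ y) := by
    rw [hQx, dotProduct_smul, smul_eq_mul]
  have h2 : star y ⬝ᵥ (Q *ᵥ x) = -Complex.I * (star y ⬝ᵥ y) := by
    rw [key, hH, key2, hQx, star_smul, smul_dotProduct, smul_eq_mul]
    simp [Complex.conj_I]
  have ht : star y ⬝ᵥ y = 0 := by
    have h12 := h1.symm.trans h2
    have h3 : ((2 : ℂ) * Complex.I) * (star y ⬝ᵥ y) = 0 := by linear_combination h12
    rcases mul_eq_zero.1 h3 with h | h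
    · exact absurd h (by simp [Complex.I_ne_zero])
    · exact h
  have hy0 : y = 0 := by
    open scoped ComplexOrder in
    exact (dotProduct_star_self_eq_zero).1 ht
  refine ⟨x, hx0, hy0, ?_⟩
  rw [hQx, hy0, smul_zero]
end

section
/- For k ≥ 2, let E₀, Q₀ ∈ ℂ^{k×(k−1)} be the matrices with (E₀)_{ij} = 1 if i = j and 0 otherwise, and (Q₀)_{ij} = 1 if i = j + 1 and 0 otherwise (so that λE₀ − Q₀ is the Kronecker block 𝓛ᵀ_{k−1} associated with a left minimal index k − 1). Let S ∈ ℂ^{l×k} and set E₁ = S·E₀ and Q₁ = S·Q₀. Then E₁ᴴQ₁ = Q₁ᴴE₁ if and only if H := SᴴS is a real Hankel matrix, i.e., there exist real numbers a₀, a₁, …, a_{2k−2} such that H_{ij} = a_{i+j−2} for all 1 ≤ i, j ≤ k. -/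
open Matrix

def stmt6eL {k : ℕ} (j : Fin (k-1)) : Fin k :=
  ⟨(j : ℕ), lt_of_lt_of_le j.isLt (Nat.sub_le k 1)⟩

def stmt6eR {k : ℕ} (j : Fin (k-1)) : Fin k :=
  ⟨(j : ℕ) + 1, by have := j.isLt; omega⟩

@[simp] lemma stmt6eL_val {k : ℕ} (j : Fin (k-1)) : (stmt6eL j : ℕ) = (j : ℕ) := rfl
@[simp] lemma stmt6eR_val {k : ℕ} (j : Fin (k-1)) : (stmt6eR j : ℕ) = (j : ℕ) + 1 := rfl

/-- Proposition 3.8 (i): with `λE₀ - Q₀` the Kronecker block `𝓛ᵀ_{k-1}`, the matrices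
`E₁ = S·E₀`, `Q₁ = S·Q₀` satisfy `E₁ᴴQ₁ = Q₁ᴴE₁` if and only if `SᴴS` is a real Hankel
matrix. -/
theorem stmt_6 {k l : ℕ} (hk : 2 ≤ k) (S : Matrix (Fin l) (Fin k) ℂ)
    (E₀ Q₀ : Matrix (Fin k) (Fin (k - 1)) ℂ)
    (hE₀ : ∀ (i : Fin k) (j : Fin (k - 1)), E₀ i j = if (i : ℕ) = (j : ℕ) then 1 else 0)
    (hQ₀ : ∀ (i : Fin k) (j : Fin (k - 1)), Q₀ i j = if (i : ℕ) = (j : ℕ) + 1 then 1 else 0) :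
    (S * E₀)ᴴ * (S * Q₀) = (S * Q₀)ᴴ * (S * E₀) ↔
      ∃ a : ℕ → ℝ, ∀ i j : Fin k, (Sᴴ * S) i j = ((a ((i : ℕ) + (j : ℕ)) : ℝ) : ℂ) := by
  set H := Sᴴ * S with hHdef
  have hHerm : ∀ i j : Fin k, H j i = star (H i j) := by
    intro i j
    have h : Hᴴ = H := Matrix.isHermitian_conjTranspose_mul_self S
    have := congrFun (congrFun h.symm j) i
    simpa [conjTranspose_apply] using this
  have keyQ : ∀ (p : Fin k) (j : Fin (k-1)), (H * Q₀) p j = H p (stmt6eR j) := by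
    intro p j
    rw [mul_apply, Fintype.sum_eq_single (stmt6eR j)]
    · rw [hQ₀]; simp
    · intro q hq
      rw [hQ₀]
      have : ¬ ((q : ℕ) = (j : ℕ) + 1) := fun h => hq (Fin.ext h)
      simp [this]
  have keyE : ∀ (p : Fin k) (j : Fin (k-1)), (H * E₀) p j = H p (stmt6eL j) := by
    intro p j
    rw [mul_apply, Fintype.sum_eq_single (stmt6eL j)]
    · rw [hE₀]; simp
    · intro q hq
      rw [hE₀]
      have : ¬ ((q : ℕ) = (j : ℕ)) := fun h => hq (Fin.ext h)
      simp [this]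
  have key1 : ∀ i j : Fin (k-1), ((S * E₀)ᴴ * (S * Q₀)) i j = H (stmt6eL i) (stmt6eR j) := by
    intro i j
    have hprod : (S * E₀)ᴴ * (S * Q₀) = E₀ᴴ * (H * Q₀) := by
      rw [conjTranspose_mul, Matrix.mul_assoc, ← Matrix.mul_assoc Sᴴ S Q₀, ← hHdef]
    rw [hprod, mul_apply, Fintype.sum_eq_single (stmt6eL i)]
    · rw [keyQ, conjTranspose_apply, hE₀]; simp
    · intro q hq
      rw [conjTranspose_apply, hE₀]
      have : ¬ ((q : ℕ) = (i : ℕ)) := fun h => hq (Fin.ext h)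
      simp [this]
  have key2 : ∀ i j : Fin (k-1), ((S * Q₀)ᴴ * (S * E₀)) i j = H (stmt6eR i) (stmt6eL j) := by
    intro i j
    have hprod : (S * Q₀)ᴴ * (S * E₀) = Q₀ᴴ * (H * E₀) := by
      rw [conjTranspose_mul, Matrix.mul_assoc, ← Matrix.mul_assoc Sᴴ S E₀, ← hHdef]
    rw [hprod, mul_apply, Fintype.sum_eq_single (stmt6eR i)]
    · rw [keyE, conjTranspose_apply, hQ₀]; simp
    · intro q hq
      rw [conjTranspose_apply, hQ₀]
      have : ¬ ((q : ℕ) = (i : ℕ) + 1) := fun h => hq (Fin.ext h)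
      simp [this]
  constructor
  · intro heq
    have C : ∀ a b : ℕ, (ha : a + 1 < k) → (hb : b + 1 < k) →
        H ⟨a, by omega⟩ ⟨b + 1, by omega⟩ = H ⟨a + 1, by omega⟩ ⟨b, by omega⟩ := by
      intro a b ha hb
      have h := congrFun (congrFun heq ⟨a, by omega⟩) ⟨b, by omega⟩
      rw [key1, key2] at h
      convert h using 2 <;> exact Fin.ext (by simp [stmt6eL, stmt6eR])
    have shift : ∀ (n a b : ℕ), (ha : a + n < k) → (hb : b + n < k) →
        H ⟨a, by omega⟩ ⟨b + n, by omega⟩ = H ⟨a + n, by omega⟩ ⟨b, by omega⟩ := by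
      intro n
      induction n with
      | zero => intro a b ha hb; rfl
      | succ n ih =>
        intro a b ha hb
        have h1 : H ⟨a, by omega⟩ ⟨b + (n+1), by omega⟩
            = H ⟨a + 1, by omega⟩ ⟨b + n, by omega⟩ := C a (b + n) (by omega) (by omega)
        have h2 : H ⟨a + 1, by omega⟩ ⟨b + n, by omega⟩
            = H ⟨a + 1 + n, by omega⟩ ⟨b, by omega⟩ := ih (a+1) b (by omega) (by omega)
        rw [h1, h2]
        congr 1
        exact Fin.ext (by simp only [Fin.val_mk]; omega)
    have const : ∀ (i j i' j' : Fin k), (i : ℕ) + (j : ℕ) = (i' : ℕ) + (j' : ℕ) →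
        H i j = H i' j' := by
      intro i j i' j' hsum
      rcases le_total (i : ℕ) (i' : ℕ) with h | h
      · obtain ⟨n, hn⟩ := Nat.exists_eq_add_of_le h
        have hi' := i'.isLt; have hj := j.isLt
        have hs := shift n (i : ℕ) (j' : ℕ) (by omega) (by omega)
        calc H i j = H ⟨(i : ℕ), by omega⟩ ⟨(j' : ℕ) + n, by omega⟩ := by
              congr 1 <;> exact Fin.ext (by simp only [Fin.val_mk]; omega)
          _ = H ⟨(i : ℕ) + n, by omega⟩ ⟨(j' : ℕ), by omega⟩ := hs
          _ = H i' j' := by congr 1 <;> exact Fin.ext (by simp only [Fin.val_mk]; omega)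
      · obtain ⟨n, hn⟩ := Nat.exists_eq_add_of_le h
        have hi := i.isLt; have hj' := j'.isLt
        have hs := shift n (i' : ℕ) (j : ℕ) (by omega) (by omega)
        calc H i j = H ⟨(i' : ℕ) + n, by omega⟩ ⟨(j : ℕ), by omega⟩ := by
              congr 1 <;> exact Fin.ext (by simp only [Fin.val_mk]; omega)
          _ = H ⟨(i' : ℕ), by omega⟩ ⟨(j : ℕ) + n, by omega⟩ := hs.symm
          _ = H i' j' := by congr 1 <;> exact Fin.ext (by simp only [Fin.val_mk]; omega)
    have hreal : ∀ i j : Fin k, star (H i j) = H i j := by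
      intro i j
      rw [← hHerm]
      exact const j i i j (Nat.add_comm _ _)
    refine ⟨fun s => (H ⟨min s (k-1), by omega⟩
        ⟨min s (2*k-2) - min s (k-1), by omega⟩).re, ?_⟩
    intro i j
    have hi := i.isLt; have hj := j.isLt
    have h1 : H i j = H ⟨min ((i:ℕ)+(j:ℕ)) (k-1), by omega⟩
        ⟨min ((i:ℕ)+(j:ℕ)) (2*k-2) - min ((i:ℕ)+(j:ℕ)) (k-1), by omega⟩ :=
      const _ _ _ _ (by simp only [Fin.val_mk]; omega)
    rw [h1]
    have h2 : (starRingEnd ℂ) (H ⟨min ((i:ℕ)+(j:ℕ)) (k-1), by omega⟩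
        ⟨min ((i:ℕ)+(j:ℕ)) (2*k-2) - min ((i:ℕ)+(j:ℕ)) (k-1), by omega⟩)
        = H ⟨min ((i:ℕ)+(j:ℕ)) (k-1), by omega⟩
        ⟨min ((i:ℕ)+(j:ℕ)) (2*k-2) - min ((i:ℕ)+(j:ℕ)) (k-1), by omega⟩ := hreal _ _
    exact (Complex.conj_eq_iff_re.mp h2).symm
  · rintro ⟨a, ha⟩
    ext i j
    rw [key1, key2, ha, ha]
    simp only [stmt6eL_val, stmt6eR_val]
    congr 2
    omega
end

section
/- Let E, Q, L ∈ ℂ^{n×n} with EᴴQ = QᴴE and L + Lᴴ negative semidefinite. If the pencil P(λ) = λE − LQ is regular (i.e., det(λ₀E − LQ) ≠ 0 for some λ₀ ∈ ℂ), then the pencil λE − Q is regular as well (i.e., det(μ₀E − Q) ≠ 0 for some μ₀ ∈ ℂ). -/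
open Matrix ComplexOrder

/-- Proposition 4.1: if `P(λ) = λE - LQ` is regular, `EᴴQ = QᴴE` and `L + Lᴴ ⪯ 0`,
then the pencil `λE - Q` is regular as well. -/
theorem stmt_9 {n : ℕ} (E Q L : Matrix (Fin n) (Fin n) ℂ)
    (hH : Eᴴ * Q = Qᴴ * E)
    (hL : (-(L + Lᴴ)).PosSemidef)
    (hreg : ∃ lam0 : ℂ, (lam0 • E - L * Q).det ≠ 0) :
    ∃ mu0 : ℂ, (mu0 • E - Q).det ≠ 0 := by
  obtain ⟨lam0, hlam0⟩ := hreg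
  by_contra hcon
  push_neg at hcon
  have hdet : (Complex.I • E - Q).det = 0 := hcon Complex.I
  obtain ⟨x, hx0, hx⟩ := (Matrix.exists_mulVec_eq_zero_iff).2 hdet
  -- From (iE - Q) x = 0 we get Q x = i • (E x)
  have hQx : Q *ᵥ x = Complex.I • (E *ᵥ x) := by
    have := hx
    rw [Matrix.sub_mulVec, sub_eq_zero, Matrix.smul_mulVec] at this
    exact this.symm
  set y := E *ᵥ x with hy
  -- Use the Hermitian condition
  have key : star x ⬝ᵥ ((Eᴴ * Q) *ᵥ x) = star x ⬝ᵥ ((Qᴴ * E) *ᵥ x) := by rw [hH]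
  have lhs : star x ⬝ᵥ ((Eᴴ * Q) *ᵥ x) = Complex.I * (star y ⬝ᵥ y) := by
    rw [← Matrix.mulVec_mulVec, hQx, Matrix.dotProduct_mulVec, ← Matrix.star_mulVec,
      dotProduct_smul]
    simp [hy]
  have rhs : star x ⬝ᵥ ((Qᴴ * E) *ᵥ x) = -Complex.I * (star y ⬝ᵥ y) := by
    rw [← Matrix.mulVec_mulVec, Matrix.dotProduct_mulVec, ← Matrix.star_mulVec, hQx]
    rw [star_smul]
    simp [smul_dotProduct, hy, Complex.star_def, Complex.conj_I]
  have hs : star y ⬝ᵥ y = 0 := by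
    have h := key
    rw [lhs, rhs] at h
    have : (2 * Complex.I) * (star y ⬝ᵥ y) = 0 := by ring_nf; linear_combination h
    rcases mul_eq_zero.1 this with h2 | h2
    · exfalso; simp at h2
    · exact h2
  have hyz : y = 0 := (dotProduct_star_self_eq_zero (v := y)).1 hs
  have hEx : E *ᵥ x = 0 := hyz
  have hQx0 : Q *ᵥ x = 0 := by rw [hQx, hyz, smul_zero]
  have : (lam0 • E - L * Q) *ᵥ x = 0 := by
    rw [Matrix.sub_mulVec, Matrix.smul_mulVec, hEx, ← Matrix.mulVec_mulVec, hQx0]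
    simp
  exact hlam0 ((Matrix.exists_mulVec_eq_zero_iff).1 ⟨x, hx0, this⟩)
end

section
/- Let E, Q, L ∈ ℂ^{n×n} satisfy EᴴQ = QᴴE with EᴴQ positive semidefinite, let R := −(L + Lᴴ)/2 be positive semidefinite, and assume the pencil P(λ) = λE − LQ is regular (det(λ₀E − LQ) ≠ 0 for some λ₀ ∈ ℂ). Let ω ∈ ℝ with ω ≠ 0. Then: (a) every v ∈ ℂⁿ with (iω E − LQ)v = 0 satisfies RQv = 0; (b) the eigenvalue iω is semisimple, i.e., the multiplicity of iω as a root of the polynomial p(λ) = det(λE − LQ) equals the dimension of ker(iω E − LQ). -/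
open Matrix ComplexOrder Polynomial

namespace Stmt11

variable {n : ℕ}

lemma adj (A : Matrix (Fin n) (Fin n) ℂ) (x y : Fin n → ℂ) :
    star x ⬝ᵥ (A *ᵥ y) = star (Aᴴ *ᵥ x) ⬝ᵥ y := by
  rw [dotProduct_mulVec, star_mulVec, conjTranspose_conjTranspose]

lemma conj_eq_of_nonneg {s : ℂ} (h : 0 ≤ s) : (starRingEnd ℂ) s = s := by
  rw [Complex.le_def] at h
  exact Complex.conj_eq_iff_im.mpr h.2.symm

/-- Part (a): eigenvectors for purely imaginary nonzero eigenvalues satisfy `R (Q v) = 0`. -/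
lemma partA (E Q L : Matrix (Fin n) (Fin n) ℂ)
    (hH : Eᴴ * Q = Qᴴ * E) (hpsd : (Eᴴ * Q).PosSemidef)
    (R : Matrix (Fin n) (Fin n) ℂ) (hR : R = (-(1 / 2) : ℂ) • (L + Lᴴ))
    (hRpsd : R.PosSemidef)
    (lam : ℂ) (hstar : star lam = -lam)
    (v : Fin n → ℂ) (hv : (lam • E - L * Q) *ᵥ v = 0) :
    R *ᵥ (Q *ᵥ v) = 0 := by
  have hLQ : (L * Q) *ᵥ v = lam • (E *ᵥ v) := by
    rw [sub_mulVec, smul_mulVec, sub_eq_zero] at hv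
    exact hv.symm
  set u := Q *ᵥ v with hu
  set s := star v ⬝ᵥ ((Eᴴ * Q) *ᵥ v) with hs
  have hs_nonneg : 0 ≤ s := hpsd.dotProduct_mulVec_nonneg v
  have hs_conj : (starRingEnd ℂ) s = s := conj_eq_of_nonneg hs_nonneg
  have hLu : L *ᵥ u = lam • (E *ᵥ v) := by rw [hu, mulVec_mulVec, hLQ]
  have quadL : star u ⬝ᵥ (L *ᵥ u) = lam * s := by
    have h1 : star u ⬝ᵥ (L *ᵥ u) = star v ⬝ᵥ (Qᴴ *ᵥ (L *ᵥ u)) := by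
      rw [adj Qᴴ v (L *ᵥ u), conjTranspose_conjTranspose]
    rw [h1, hLu, mulVec_smul, dotProduct_smul, mulVec_mulVec, ← hH]
    rw [hs]
    simp [smul_eq_mul]
  have quadLH : star u ⬝ᵥ (Lᴴ *ᵥ u) = -lam * s := by
    have h1 : star u ⬝ᵥ (Lᴴ *ᵥ u) = star (L *ᵥ u) ⬝ᵥ u := by
      rw [adj Lᴴ u u, conjTranspose_conjTranspose]
    have h2 : star (L *ᵥ u) ⬝ᵥ u = star (star u ⬝ᵥ (L *ᵥ u)) := by
      rw [star_dotProduct]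
    rw [h1, h2, quadL]
    simp only [star_mul', hstar]
    rw [show (star s : ℂ) = (starRingEnd ℂ) s from rfl, hs_conj]
  have quadR : star u ⬝ᵥ (R *ᵥ u) = 0 := by
    rw [hR, smul_mulVec, dotProduct_smul, add_mulVec, dotProduct_add, quadL, quadLH]
    ring_nf
  exact (hRpsd.dotProduct_mulVec_zero_iff u).mp quadR


lemma mulVec_injective_of_det {G : Matrix (Fin n) (Fin n) ℂ} (hG : G.det ≠ 0)
    (x : Fin n → ℂ) (hx : G *ᵥ x = 0) : x = 0 := by
  have hGu : IsUnit G.det := isUnit_iff_ne_zero.mpr hG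
  have : G⁻¹ *ᵥ (G *ᵥ x) = x := by
    rw [mulVec_mulVec, nonsing_inv_mul G hGu, one_mulVec]
  rw [hx, mulVec_zero] at this
  exact this.symm

/-- No Jordan chains of length 2 at nonzero purely imaginary eigenvalues. -/
lemma noChain (E Q L : Matrix (Fin n) (Fin n) ℂ)
    (hH : Eᴴ * Q = Qᴴ * E) (hpsd : (Eᴴ * Q).PosSemidef)
    (R : Matrix (Fin n) (Fin n) ℂ) (hR : R = (-(1 / 2) : ℂ) • (L + Lᴴ))
    (hRpsd : R.PosSemidef)
    (mu0 : ℂ) (hmu0 : (mu0 • E - L * Q).det ≠ 0)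
    (lam : ℂ) (hlam0 : lam ≠ 0) (hstar : star lam = -lam)
    (v w : Fin n → ℂ) (hv : (lam • E - L * Q) *ᵥ v = 0)
    (hw : (lam • E - L * Q) *ᵥ w = E *ᵥ v) :
    v = 0 := by
  have hLQ : (L * Q) *ᵥ v = lam • (E *ᵥ v) := by
    rw [sub_mulVec, smul_mulVec, sub_eq_zero] at hv
    exact hv.symm
  set u := Q *ᵥ v with hu
  have hRu : R *ᵥ u = 0 := partA E Q L hH hpsd R hR hRpsd lam hstar v hv
  -- (L + Lᴴ) u = 0
  have hsum : (L + Lᴴ) *ᵥ u = 0 := by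
    have : (-(1 / 2) : ℂ) • ((L + Lᴴ) *ᵥ u) = 0 := by
      rw [← smul_mulVec, ← hR, hRu]
    rcases smul_eq_zero.mp this with h | h
    · norm_num at h
    · exact h
  have hLH : Lᴴ *ᵥ u = -(L *ᵥ u) := by
    rw [add_mulVec] at hsum
    exact eq_neg_of_add_eq_zero_right hsum
  have hLu : L *ᵥ u = lam • (E *ᵥ v) := by rw [hu, mulVec_mulVec, hLQ]
  have hTHu : (lam • E - L * Q)ᴴ *ᵥ u = 0 := by
    rw [conjTranspose_sub, conjTranspose_smul, conjTranspose_mul, sub_mulVec, smul_mulVec,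
      hstar]
    have h1 : Eᴴ *ᵥ u = (Eᴴ * Q) *ᵥ v := by rw [hu, mulVec_mulVec]
    have h2 : (Qᴴ * Lᴴ) *ᵥ u = -(lam • ((Eᴴ * Q) *ᵥ v)) := by
      rw [← mulVec_mulVec, hLH, mulVec_neg, hLu, mulVec_smul, mulVec_mulVec, ← hH]
    rw [h1, h2, neg_smul, sub_neg_eq_add, neg_add_cancel]
  have hs0 : star v ⬝ᵥ ((Eᴴ * Q) *ᵥ v) = 0 := by
    have h1 : star u ⬝ᵥ ((lam • E - L * Q) *ᵥ w) = 0 := by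
      rw [adj, hTHu]
      simp
    rw [hw] at h1
    have h2 : star u ⬝ᵥ (E *ᵥ v) = star v ⬝ᵥ ((Qᴴ * E) *ᵥ v) := by
      calc star (Q *ᵥ v) ⬝ᵥ (E *ᵥ v)
          = star ((Qᴴ)ᴴ *ᵥ v) ⬝ᵥ (E *ᵥ v) := by rw [conjTranspose_conjTranspose]
        _ = star v ⬝ᵥ (Qᴴ *ᵥ (E *ᵥ v)) := (adj Qᴴ v _).symm
        _ = star v ⬝ᵥ ((Qᴴ * E) *ᵥ v) := by rw [mulVec_mulVec]
    rw [h2, ← hH] at h1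
    exact h1
  have hEQv : (Eᴴ * Q) *ᵥ v = 0 := (hpsd.dotProduct_mulVec_zero_iff v).mp hs0
  have hGHu : (mu0 • E - L * Q)ᴴ *ᵥ u = 0 := by
    rw [conjTranspose_sub, conjTranspose_smul, conjTranspose_mul, sub_mulVec, smul_mulVec]
    have h1 : Eᴴ *ᵥ u = 0 := by rw [hu, mulVec_mulVec, hEQv]
    have h2 : (Qᴴ * Lᴴ) *ᵥ u = 0 := by
      rw [← mulVec_mulVec, hLH, mulVec_neg, hLu, mulVec_smul, mulVec_mulVec, ← hH, hEQv,
        smul_zero, neg_zero]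
    rw [h1, h2, smul_zero, sub_zero]
  have hu0 : u = 0 := by
    refine mulVec_injective_of_det (G := (mu0 • E - L * Q)ᴴ) ?_ u hGHu
    rw [det_conjTranspose]
    exact star_ne_zero.mpr hmu0
  have hEv : E *ᵥ v = 0 := by
    have h : lam • (E *ᵥ v) = 0 := by rw [← hLu, hu0, mulVec_zero]
    exact (smul_eq_zero.mp h).resolve_left hlam0
  have hGv : (mu0 • E - L * Q) *ᵥ v = 0 := by
    rw [sub_mulVec, smul_mulVec, hEv, ← mulVec_mulVec, ← hu, hu0]
    simp
  exact mulVec_injective_of_det hmu0 v hGv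


lemma eval_det' (Pm : Matrix (Fin n) (Fin n) (Polynomial ℂ)) (z : ℂ) :
    (Pm.det).eval z = (Pm.map (Polynomial.eval z)).det := by
  have h := RingHom.map_det (Polynomial.evalRingHom z) Pm
  simpa [RingHom.mapMatrix_apply, Polynomial.coe_evalRingHom] using h

lemma charpoly_eval (N : Matrix (Fin n) (Fin n) ℂ) (z : ℂ) :
    N.charpoly.eval z = (z • (1 : Matrix (Fin n) (Fin n) ℂ) - N).det := by
  rw [Matrix.charpoly, eval_det']
  congr 1
  ext i j
  by_cases h : i = j <;>
    simp [charmatrix_apply, Matrix.diagonal_apply, Matrix.one_apply, h, Matrix.sub_apply,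
      Matrix.smul_apply]

lemma rm_multiset_prod (a : ℂ) (s : Multiset (Polynomial ℂ)) (h : s.prod ≠ 0) :
    Polynomial.rootMultiplicity a s.prod = (s.map (Polynomial.rootMultiplicity a)).sum := by
  induction s using Multiset.induction_on with
  | empty => simp
  | cons p s ih =>
    rw [Multiset.prod_cons] at h ⊢
    rw [Polynomial.rootMultiplicity_mul h, Multiset.map_cons, Multiset.sum_cons,
      ih (right_ne_zero_of_mul h)]

lemma count_indicator (s : Multiset ℂ) :
    (s.map fun μ => if μ = 0 then 1 else 0).sum = s.count 0 := by
  induction s using Multiset.induction_on with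
  | empty => simp
  | cons b s ih =>
    by_cases hb : b = 0 <;>
      simp [hb, Multiset.count_cons, ih, eq_comm, Nat.add_comm]


lemma mult_eq_finrank (E A : Matrix (Fin n) (Fin n) ℂ) (lam mu0 : ℂ)
    (hmu : (mu0 • E - A).det ≠ 0)
    (hchain : ∀ v w : Fin n → ℂ, (lam • E - A) *ᵥ v = 0 → (lam • E - A) *ᵥ w = E *ᵥ v → v = 0) :
    Polynomial.rootMultiplicity lam
        ((Polynomial.X : Polynomial ℂ) • E.map Polynomial.C - A.map Polynomial.C).det
      = Module.finrank ℂ (LinearMap.ker (lam • E - A).mulVecLin) := by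
  classical
  set P : Matrix (Fin n) (Fin n) (Polynomial ℂ) :=
    (Polynomial.X : Polynomial ℂ) • E.map Polynomial.C - A.map Polynomial.C with hPdef
  have hPmap : ∀ z : ℂ, P.map (Polynomial.eval z) = z • E - A := by
    intro z
    ext i j
    simp only [hPdef, Matrix.map_apply, Matrix.sub_apply, Matrix.smul_apply, smul_eq_mul,
      Polynomial.eval_sub, Polynomial.eval_mul, Polynomial.eval_X, Polynomial.eval_C]
  have hPdet_eval : ∀ z : ℂ, (P.det).eval z = (z • E - A).det := by
    intro z
    rw [eval_det', hPmap]
  by_cases hlamdet : (lam • E - A).det = 0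
  case neg =>
    have h1 : Polynomial.rootMultiplicity lam P.det = 0 := by
      apply Polynomial.rootMultiplicity_eq_zero
      intro hroot
      rw [Polynomial.IsRoot.def, hPdet_eval lam] at hroot
      exact hlamdet hroot
    have h2 : LinearMap.ker (lam • E - A).mulVecLin = ⊥ := by
      rw [Submodule.eq_bot_iff]
      intro x hx
      rw [LinearMap.mem_ker, mulVecLin_apply] at hx
      exact mulVec_injective_of_det hlamdet x hx
    rw [h1, h2, finrank_bot]
  case pos =>
  have hlamne : mu0 ≠ lam := by
    rintro rfl
    exact hmu hlamdet
  set t : ℂ := mu0 - lam with htdef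
  have ht : t ≠ 0 := sub_ne_zero.mpr hlamne
  set θ : ℂ := t⁻¹ with hθdef
  have hθt : t * θ = 1 := mul_inv_cancel₀ ht
  have hθ0 : θ ≠ 0 := inv_ne_zero ht
  set G : Matrix (Fin n) (Fin n) ℂ := mu0 • E - A with hGdef
  have hGu : IsUnit G.det := isUnit_iff_ne_zero.mpr hmu
  set M : Matrix (Fin n) (Fin n) ℂ := G⁻¹ * E with hMdef
  have hGM : G * M = E := by
    rw [hMdef, ← Matrix.mul_assoc, mul_nonsing_inv G hGu, Matrix.one_mul]
  set N : Matrix (Fin n) (Fin n) ℂ := M - θ • (1 : Matrix (Fin n) (Fin n) ℂ) with hNdef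
  have hfac : ∀ z : ℂ, z • E - A
      = G * (((1 : ℂ) - (mu0 - z) * θ) • (1 : Matrix (Fin n) (Fin n) ℂ) - (mu0 - z) • N) := by
    intro z
    have h1 : ((1 : ℂ) - (mu0 - z) * θ) • (1 : Matrix (Fin n) (Fin n) ℂ) - (mu0 - z) • N
        = 1 - (mu0 - z) • M := by
      rw [hNdef]
      module
    rw [h1, Matrix.mul_sub, Matrix.mul_one, mul_smul_comm, hGM, hGdef]
    module
  have hTN : lam • E - A = G * ((-t) • N) := by
    have h0 : (1 : ℂ) - (mu0 - lam) * θ = 0 := by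
      rw [← htdef, hθt]
      ring
    have := hfac lam
    rw [h0, ← htdef, zero_smul, zero_sub, ← neg_smul] at this
    exact this
  -- characteristic polynomial of N
  set χ : Polynomial ℂ := N.charpoly with hχdef
  have hmono : χ.Monic := N.charpoly_monic
  have hsplit : Polynomial.Splits χ := IsAlgClosed.splits χ
  have hcard : Multiset.card χ.roots = n := by
    rw [Polynomial.splits_iff_card_roots.mp hsplit, hχdef,
      Matrix.charpoly_natDegree_eq_dim, Fintype.card_fin]
  have hprodχ : χ = (χ.roots.map fun μ => Polynomial.X - Polynomial.C μ).prod :=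
    hsplit.eq_prod_roots_of_monic hmono
  set FF : ℂ → Polynomial ℂ := fun μ =>
    Polynomial.C θ * (Polynomial.X - Polynomial.C lam)
      - Polynomial.C μ * (Polynomial.C mu0 - Polynomial.X) with hFFdef
  have key : P.det = Polynomial.C G.det * (χ.roots.map FF).prod := by
    apply Polynomial.eq_of_infinite_eval_eq
    have hsub : {z : ℂ | z ≠ mu0} ⊆
        {z : ℂ | Polynomial.eval z P.det
          = Polynomial.eval z (Polynomial.C G.det * (χ.roots.map FF).prod)} := by
      intro z hz
      have hc : mu0 - z ≠ 0 := sub_ne_zero.mpr (Ne.symm hz)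
      set c : ℂ := mu0 - z with hcdef
      set α : ℂ := 1 - c * θ with hαdef
      have hca : c * (α / c) = α := by field_simp
      have hsm : c • ((α / c) • (1 : Matrix (Fin n) (Fin n) ℂ) - N) = α • 1 - c • N := by
        rw [smul_sub, smul_smul, hca]
      have hlhs : Polynomial.eval z P.det = G.det * (c ^ n * ((α / c) • (1 : Matrix (Fin n) (Fin n) ℂ) - N).det) := by
        rw [hPdet_eval z, hfac z, det_mul, ← hcdef, ← hαdef, ← hsm, det_smul, Fintype.card_fin]
      have hev : ((α / c) • (1 : Matrix (Fin n) (Fin n) ℂ) - N).det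
          = (χ.roots.map fun μ => α / c - μ).prod := by
        rw [← charpoly_eval, ← hχdef]
        conv_lhs => rw [hprodχ]
        rw [Polynomial.eval_multiset_prod, Multiset.map_map]
        congr 1
        apply Multiset.map_congr rfl
        intro μ _
        simp
      have hpow : (c : ℂ) ^ n * (χ.roots.map fun μ => α / c - μ).prod
          = (χ.roots.map fun μ => α - c * μ).prod := by
        rw [← hcard, ← Multiset.prod_replicate, ← Multiset.map_const']
        rw [← Multiset.prod_map_mul]
        congr 1
        apply Multiset.map_congr rfl
        intro μ _
        field_simp
      have hrhs : Polynomial.eval z (Polynomial.C G.det * (χ.roots.map FF).prod)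
          = G.det * (χ.roots.map fun μ => α - c * μ).prod := by
        rw [Polynomial.eval_mul, Polynomial.eval_C, Polynomial.eval_multiset_prod,
          Multiset.map_map]
        congr 2
        apply Multiset.map_congr rfl
        intro μ _
        simp only [Function.comp_apply, hFFdef, Polynomial.eval_sub, Polynomial.eval_mul,
          Polynomial.eval_C, Polynomial.eval_X]
        have hzl : θ * (z - lam) = α := by
          rw [hαdef, hcdef]
          have hzt : z - lam = t - (mu0 - z) := by rw [htdef]; ring
          rw [hzt, mul_sub, mul_comm θ t, hθt]
          ring
        rw [← hzl]
        ring
      rw [Set.mem_setOf_eq, hlhs, hrhs, hev, hpow]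
    apply Set.Infinite.mono hsub
    have heq : {z : ℂ | z ≠ mu0} = ({mu0} : Set ℂ)ᶜ := by
      ext z
      simp
    rw [heq]
    exact (Set.finite_singleton mu0).infinite_compl
  have hPdet0 : P.det ≠ 0 := by
    intro h0
    have := hPdet_eval mu0
    rw [h0] at this
    simp only [Polynomial.eval_zero] at this
    exact hmu this.symm
  have hprodne : (χ.roots.map FF).prod ≠ 0 := by
    intro h0
    rw [key, h0, mul_zero] at hPdet0
    exact hPdet0 rfl
  have hFF : ∀ μ : ℂ, Polynomial.rootMultiplicity lam (FF μ) = if μ = 0 then 1 else 0 := by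
    intro μ
    by_cases hμ : μ = 0
    · rw [if_pos hμ, hμ, hFFdef]
      simp only [map_zero, zero_mul, sub_zero]
      rw [Polynomial.rootMultiplicity_mul
        (mul_ne_zero (Polynomial.C_ne_zero.mpr hθ0) (Polynomial.X_sub_C_ne_zero lam)),
        Polynomial.rootMultiplicity_C, Polynomial.rootMultiplicity_X_sub_C_self, zero_add]
    · rw [if_neg hμ]
      apply Polynomial.rootMultiplicity_eq_zero
      simp only [Polynomial.IsRoot.def, hFFdef, Polynomial.eval_sub, Polynomial.eval_mul,
        Polynomial.eval_C, Polynomial.eval_X, sub_self, mul_zero, zero_sub, neg_eq_zero]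
      exact mul_ne_zero hμ (by rw [← htdef]; exact ht)
  have hcount : Polynomial.rootMultiplicity lam P.det = Multiset.count 0 χ.roots := by
    rw [key, Polynomial.rootMultiplicity_mul (by rw [← key]; exact hPdet0),
      Polynomial.rootMultiplicity_C, zero_add, rm_multiset_prod _ _ hprodne, Multiset.map_map]
    rw [Multiset.map_congr rfl (fun μ _ => by
      simp only [Function.comp_apply]
      exact hFF μ)]
    exact count_indicator χ.roots
  -- kernel side
  have hGinj : ∀ x : Fin n → ℂ, G *ᵥ x = 0 → x = 0 := fun x hx =>
    mulVec_injective_of_det hmu x hx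
  have hkerT : LinearMap.ker (lam • E - A).mulVecLin = LinearMap.ker N.mulVecLin := by
    ext x
    simp only [LinearMap.mem_ker, mulVecLin_apply]
    constructor
    · intro hx
      rw [hTN, ← mulVec_mulVec, smul_mulVec] at hx
      have h1 : (-t) • (N *ᵥ x) = 0 := hGinj _ hx
      rcases smul_eq_zero.mp h1 with h | h
      · exact absurd (neg_eq_zero.mp h) ht
      · exact h
    · intro hx
      rw [hTN, ← mulVec_mulVec, smul_mulVec, hx, smul_zero, mulVec_zero]
  have hN2 : ∀ x : Fin n → ℂ, N *ᵥ (N *ᵥ x) = 0 → N *ᵥ x = 0 := by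
    intro x hx
    set v : Fin n → ℂ := N *ᵥ x with hvdef
    have hvker : (lam • E - A) *ᵥ v = 0 := by
      rw [hTN, ← mulVec_mulVec, smul_mulVec, hvdef, hx, smul_zero, mulVec_zero]
    have hGE : G = (lam • E - A) + t • E := by
      rw [hGdef, htdef]
      module
    have hGv : G *ᵥ v = t • (E *ᵥ v) := by
      rw [hGE, add_mulVec, hvker, smul_mulVec, zero_add]
    have hTx : (lam • E - A) *ᵥ x = (-(t * t)) • (E *ᵥ v) := by
      rw [hTN, ← mulVec_mulVec, smul_mulVec, ← hvdef, mulVec_smul, hGv, smul_smul]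
      module
    have hw : (lam • E - A) *ᵥ ((-(t * t))⁻¹ • x) = E *ᵥ v := by
      rw [mulVec_smul, hTx, smul_smul,
        inv_mul_cancel₀ (neg_ne_zero.mpr (mul_ne_zero ht ht)), one_smul]
    exact hchain v _ hvker hw
  set f : Module.End ℂ (Fin n → ℂ) := N.mulVecLin with hfdef
  have hker_pow : ∀ k : ℕ, LinearMap.ker (f ^ (k + 1)) = LinearMap.ker f := by
    intro k
    induction k with
    | zero => rw [pow_one]
    | succ k ih =>
      apply le_antisymm
      · intro x hx
        rw [LinearMap.mem_ker] at hx ⊢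
        have h1 : (f ^ (k + 1)) (f x) = 0 := by
          rw [← Module.End.mul_apply, ← pow_succ]
          exact hx
        have h2 : f x ∈ LinearMap.ker (f ^ (k + 1)) := h1
        rw [ih, LinearMap.mem_ker] at h2
        exact hN2 x h2
      · intro x hx
        rw [LinearMap.mem_ker] at hx ⊢
        rw [pow_succ, Module.End.mul_apply, hx, map_zero]
  have hmax : Module.End.maxGenEigenspace f 0 = LinearMap.ker f := by
    ext x
    rw [Module.End.mem_maxGenEigenspace, LinearMap.mem_ker]
    simp only [zero_smul, sub_zero]
    constructor
    · rintro ⟨k, hk⟩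
      cases k with
      | zero =>
        rw [pow_zero, Module.End.one_apply] at hk
        rw [hk, map_zero]
      | succ k =>
        have hx : x ∈ LinearMap.ker (f ^ (k + 1)) := hk
        rw [hker_pow k, LinearMap.mem_ker] at hx
        exact hx
    · intro hx
      exact ⟨1, by rwa [pow_one]⟩
  have hcharf : f.charpoly = χ := by
    have hmat : LinearMap.toMatrix (Pi.basisFun ℂ (Fin n)) (Pi.basisFun ℂ (Fin n)) f = N := by
      rw [LinearMap.toMatrix_eq_toMatrix', hfdef, ← Matrix.toLin'_apply',
        LinearMap.toMatrix'_toLin']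
    rw [← LinearMap.charpoly_toMatrix f (Pi.basisFun ℂ (Fin n)), hmat, hχdef]
  have hfin : Module.finrank ℂ (LinearMap.ker N.mulVecLin) = χ.natTrailingDegree := by
    rw [show (N.mulVecLin : Module.End ℂ (Fin n → ℂ)) = f from rfl, ← hmax,
      LinearMap.finrank_maxGenEigenspace_zero_eq, hcharf]
  rw [hcount, hkerT, hfin, ← Polynomial.rootMultiplicity_eq_natTrailingDegree',
    ← Polynomial.count_roots]

end Stmt11

/-- Theorem 4.3 (ii) in the regular case: nonzero purely imaginary eigenvalues `iω` of
`P(λ) = λE - LQ` are semisimple and any vector in `ker(iωE - LQ)` satisfies `RQv = 0`. -/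
theorem stmt_11 {n : ℕ} (E Q L : Matrix (Fin n) (Fin n) ℂ)
    (hH : Eᴴ * Q = Qᴴ * E) (hpsd : (Eᴴ * Q).PosSemidef)
    (R : Matrix (Fin n) (Fin n) ℂ) (hR : R = (-(1 / 2) : ℂ) • (L + Lᴴ))
    (hRpsd : R.PosSemidef)
    (hreg : ∃ mu0 : ℂ, (mu0 • E - L * Q).det ≠ 0)
    (ω : ℝ) (hω : ω ≠ 0) :
    (∀ v : Fin n → ℂ, ((Complex.I * (ω : ℂ)) • E - L * Q) *ᵥ v = 0 → R *ᵥ (Q *ᵥ v) = 0) ∧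
    Polynomial.rootMultiplicity (Complex.I * (ω : ℂ))
        ((Polynomial.X : Polynomial ℂ) • E.map Polynomial.C - (L * Q).map Polynomial.C).det =
      Module.finrank ℂ
        (LinearMap.ker (Matrix.mulVecLin ((Complex.I * (ω : ℂ)) • E - L * Q))) := by
  obtain ⟨mu0, hmu0⟩ := hreg
  have hlam0 : Complex.I * (ω : ℂ) ≠ 0 :=
    mul_ne_zero Complex.I_ne_zero (Complex.ofReal_ne_zero.mpr hω)
  have hstar : star (Complex.I * (ω : ℂ)) = -(Complex.I * (ω : ℂ)) := by
    simp [Complex.star_def, _root_.map_mul, Complex.conj_I, Complex.conj_ofReal]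
  constructor
  · intro v hv
    exact Stmt11.partA E Q L hH hpsd R hR hRpsd _ hstar v hv
  · exact Stmt11.mult_eq_finrank E (L * Q) _ mu0 hmu0
      (fun v w hv hw =>
        Stmt11.noChain E Q L hH hpsd R hR hRpsd mu0 hmu0 _ hlam0 hstar v w hv hw)
end

section
/- Let E, Q, L ∈ ℂ^{n×n} satisfy EᴴQ = QᴴE with EᴴQ positive semidefinite, let L + Lᴴ be negative semidefinite, and assume the pencil P(λ) = λE − LQ is regular (det(λ₀E − LQ) ≠ 0 for some λ₀ ∈ ℂ). Then the index of P(λ) is at most two, in the following sense: for all vectors x₁, x₂, x₃ ∈ ℂⁿ with Ex₁ = 0, Ex₂ = LQx₁ and Ex₃ = LQx₂, one has x₁ = 0. (For a regular pencil this condition is equivalent to the absence of Jordan chains of length at least three at the eigenvalue ∞.) -/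
open Matrix ComplexOrder

/-- Theorem 4.3 (iii): under the dissipativity assumptions, the regular pencil
`P(λ) = λE - LQ` has index at most two. -/
theorem stmt_12 {n : ℕ} (E Q L : Matrix (Fin n) (Fin n) ℂ)
    (hH : Eᴴ * Q = Qᴴ * E) (hpsd : (Eᴴ * Q).PosSemidef)
    (hL : (-(L + Lᴴ)).PosSemidef)
    (hreg : ∃ lam0 : ℂ, (lam0 • E - L * Q).det ≠ 0) :
    ∀ x₁ x₂ x₃ : Fin n → ℂ,
      E *ᵥ x₁ = 0 → E *ᵥ x₂ = (L * Q) *ᵥ x₁ → E *ᵥ x₃ = (L * Q) *ᵥ x₂ → x₁ = 0 := by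
  intro x₁ x₂ x₃ h1 h2 h3
  obtain ⟨lam0, hdet⟩ := hreg
  set z : Fin n → ℂ := Q *ᵥ x₁ with hz
  -- `Eᴴ z = 0`
  have hEz : Eᴴ *ᵥ z = 0 := by
    rw [hz, mulVec_mulVec, hH, ← mulVec_mulVec, h1, mulVec_zero]
  -- hence `star z ᵥ* E = 0`
  have hzE : star z ᵥ* E = 0 := by
    have := congrArg star hEz
    rwa [star_mulVec, conjTranspose_conjTranspose, star_zero] at this
  -- `L z = E x₂`
  have hLz : L *ᵥ z = E *ᵥ x₂ := by
    rw [hz, mulVec_mulVec, ← h2]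
  -- `star z ⬝ᵥ L z = 0`
  have hq : star z ⬝ᵥ L *ᵥ z = 0 := by
    rw [hLz, dotProduct_mulVec, hzE, zero_dotProduct]
  -- `star z ⬝ᵥ Lᴴ z = 0`
  have hq' : star z ⬝ᵥ Lᴴ *ᵥ z = 0 := by
    have : star z ⬝ᵥ Lᴴ *ᵥ z = star (star z ⬝ᵥ L *ᵥ z) := by
      rw [dotProduct_mulVec, ← star_mulVec]
      exact star_dotProduct _ _
    rw [this, hq, star_zero]
  -- the kernel argument for `-(L + Lᴴ)`
  have hker : (-(L + Lᴴ)) *ᵥ z = 0 := by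
    rw [← hL.dotProduct_mulVec_zero_iff]
    rw [neg_mulVec, add_mulVec, dotProduct_neg, dotProduct_add, hq, hq', add_zero, neg_zero]
  -- hence `Lᴴ z = - E x₂`
  have hLHz : Lᴴ *ᵥ z = -(E *ᵥ x₂) := by
    have := hker
    rw [neg_mulVec, add_mulVec, neg_eq_zero] at this
    have h' : L *ᵥ z + Lᴴ *ᵥ z = 0 := this
    rw [← hLz]
    linear_combination (norm := module) h'
  -- `star (E x₂) = - star z ᵥ* L`
  have hstarEx₂ : star (E *ᵥ x₂) = -(star z ᵥ* L) := by
    have := congrArg star hLHz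
    rw [star_mulVec, conjTranspose_conjTranspose, star_neg] at this
    rw [this, neg_neg]
  -- `star x₂ ⬝ᵥ (Eᴴ Q) x₂ = 0`
  have hq2 : star x₂ ⬝ᵥ (Eᴴ * Q) *ᵥ x₂ = 0 := by
    have e1 : star x₂ ᵥ* Eᴴ = star (E *ᵥ x₂) := (star_mulVec E x₂).symm
    rw [← mulVec_mulVec, dotProduct_mulVec, e1, hstarEx₂, neg_dotProduct,
      ← dotProduct_mulVec, mulVec_mulVec, ← h3, dotProduct_mulVec, hzE,
      zero_dotProduct, neg_zero]
  -- kernel of the psd matrix `Eᴴ Q`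
  have hker2 : (Eᴴ * Q) *ᵥ x₂ = 0 := (hpsd.dotProduct_mulVec_zero_iff x₂).mp hq2
  -- `z` is in the kernel of `(lam0 • E - L * Q)ᴴ`
  have hzero : (lam0 • E - L * Q)ᴴ *ᵥ z = 0 := by
    rw [conjTranspose_sub, conjTranspose_smul, conjTranspose_mul, sub_mulVec,
      smul_mulVec, hEz, smul_zero, ← mulVec_mulVec, hLHz, mulVec_neg,
      mulVec_mulVec, ← hH, hker2, neg_zero, sub_zero]
  have hdet' : ((lam0 • E - L * Q)ᴴ).det ≠ 0 := by
    rw [det_conjTranspose]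
    exact star_ne_zero.mpr hdet
  have hz0 : z = 0 := eq_zero_of_mulVec_eq_zero hdet' hzero
  -- finally, `x₁` is in the kernel of the regular pencil
  have hx0 : (lam0 • E - L * Q) *ᵥ x₁ = 0 := by
    rw [sub_mulVec, smul_mulVec, h1, smul_zero, ← mulVec_mulVec, ← hz, hz0,
      mulVec_zero, sub_zero]
  exact eq_zero_of_mulVec_eq_zero hdet hx0
end

section
/- Let E, Q, L ∈ ℂ^{n×n} satisfy EᴴQ = QᴴE with EᴴQ positive semidefinite, let L + Lᴴ be negative semidefinite, and assume that the pencil λE − Q is regular (det(μ₀E − Q) ≠ 0 for some μ₀ ∈ ℂ). Then all left minimal indices of the pencil P(λ) = λE − LQ are zero, in the following sense: for every μ ∈ ℂ with rank(μE − LQ) ≥ rank(νE − LQ) for all ν ∈ ℂ, every y ∈ ℂⁿ with yᴴ(μE − LQ) = 0 satisfies yᴴE = 0 and yᴴ(LQ) = 0. -/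
open Matrix ComplexOrder Polynomial

private lemma vecMul_smulMat {n : ℕ} (c : ℂ) (M : Matrix (Fin n) (Fin n) ℂ)
    (x : Fin n → ℂ) : x ᵥ* (c • M) = c • (x ᵥ* M) := by
  ext j
  simp [Matrix.vecMul, dotProduct, Finset.mul_sum, Matrix.smul_apply]
  congr 1; ext i; ring

private lemma exists_pos_det_ne {n : ℕ} (E Q : Matrix (Fin n) (Fin n) ℂ)
    (hreg : ∃ mu0 : ℂ, (mu0 • E - Q).det ≠ 0) :
    ∃ s : ℝ, 0 < s ∧ (((s : ℂ) • E + Q)).det ≠ 0 := by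
  obtain ⟨μ0, h0⟩ := hreg
  set p : Polynomial ℂ := ((X : ℂ[X]) • E.map C - Q.map C).det with hp
  have hev : ∀ z : ℂ, p.eval z = (z • E - Q).det := by
    intro z
    have h1 := RingHom.map_det (evalRingHom z) ((X : ℂ[X]) • E.map C - Q.map C)
    have h2 : ((X : ℂ[X]) • E.map C - Q.map C).map (eval z) = z • E - Q := by
      ext i j
      simp only [Matrix.map_apply, Matrix.sub_apply, Matrix.smul_apply, smul_eq_mul,
        eval_sub, eval_mul, eval_X, eval_C]
    rw [hp]
    simpa [RingHom.mapMatrix_apply, coe_evalRingHom, h2] using h1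
  have hpne : p ≠ 0 := by
    intro h
    apply h0
    rw [← hev μ0, h, eval_zero]
  have hfin : Set.Finite {x : ℂ | p.IsRoot x} := p.finite_setOf_isRoot hpne
  have hfin2 : Set.Finite {s : ℝ | p.IsRoot (-(s:ℂ))} := by
    have : {s : ℝ | p.IsRoot (-(s:ℂ))} = (fun s : ℝ => (-(s:ℂ))) ⁻¹' {x : ℂ | p.IsRoot x} := rfl
    rw [this]
    apply Set.Finite.preimage _ hfin
    intro a _ b _ hab
    have := neg_injective hab
    exact_mod_cast this
  have hIoi : (Set.Ioi (0:ℝ)).Infinite := Set.Ioi_infinite 0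
  obtain ⟨s, hs1, hs2⟩ := (hIoi.diff hfin2).nonempty
  refine ⟨s, hs1, ?_⟩
  have hroot : ¬ p.IsRoot (-(s:ℂ)) := hs2
  have hd : ((-(s:ℂ)) • E - Q).det ≠ 0 := by
    rw [← hev]; exact hroot
  have heq : (-(s:ℂ)) • E - Q = -((s:ℂ) • E + Q) := by
    ext i j; simp; ring
  rw [heq, Matrix.det_neg] at hd
  intro h
  apply hd
  rw [h, mul_zero]

private lemma psd_real_smul {n : ℕ} {M : Matrix (Fin n) (Fin n) ℂ} (hM : M.PosSemidef)
    {s : ℝ} (hs : 0 ≤ s) : ((s : ℂ) • M).PosSemidef := by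
  constructor
  · unfold Matrix.IsHermitian
    rw [Matrix.conjTranspose_smul, hM.1]
    congr 1
    simp [Complex.star_def, Complex.conj_ofReal]
  · intro x
    exact (hM.smul (Complex.zero_le_real.mpr hs)).2 x

private lemma diag_lemma {n : ℕ} (s : ℝ) (hs : 0 < s) (g : Fin n → ℝ)
    (hg : ∀ i, 0 ≤ g i) (hgc : ∀ i, 0 ≤ g i * (1 - s * g i))
    (M : Matrix (Fin n) (Fin n) ℂ)
    (hM : ∀ x : Fin n → ℂ, ((x ᵥ* M) ⬝ᵥ star x).re ≤ 0)
    (z : Fin n → ℂ)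
    (heq : ∀ i, z i * ((g i : ℝ) : ℂ) = (z ᵥ* M) i * ((1 - s * g i : ℝ) : ℂ)) :
    ∀ i, z i * ((g i : ℝ) : ℂ) = 0 := by
  classical
  set w := z ᵥ* M with hw
  -- if 1 - s g i = 0 then z i = 0
  have hzero : ∀ i, 1 - s * g i = 0 → z i = 0 := by
    intro i hi
    have h1 : z i * ((g i : ℝ) : ℂ) = 0 := by
      rw [heq i, hi]
      simp
    have h2 : g i ≠ 0 := by
      intro h
      rw [h] at hi
      norm_num at hi
    have : ((g i : ℝ) : ℂ) ≠ 0 := by exact_mod_cast h2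
    exact (mul_eq_zero.mp h1).resolve_right this
  -- denominators nonnegative
  have hcnn : ∀ i, 1 - s * g i ≠ 0 → 0 ≤ 1 - s * g i := by
    intro i hi
    rcases eq_or_lt_of_le (hg i) with h|h
    · rw [← h]; simp
    · nlinarith [hgc i]
  set r : Fin n → ℝ := fun i => if 1 - s * g i = 0 then 0 else g i / (1 - s * g i) with hr
  have hrnn : ∀ i, 0 ≤ r i := by
    intro i
    rw [hr]
    by_cases hi : 1 - s * g i = 0
    · simp [hi]
    · simp only [hi, if_false]
      exact div_nonneg (hg i) (hcnn i hi)
  have hterm : ∀ i, w i * star (z i) = ((r i * Complex.normSq (z i) : ℝ) : ℂ) := by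
    intro i
    by_cases hi : 1 - s * g i = 0
    · have hz := hzero i hi
      simp [hz, hr, hi]
    · have hci : ((1 - s * g i : ℝ) : ℂ) ≠ 0 := by exact_mod_cast hi
      have hwi : w i = z i * ((g i : ℝ) : ℂ) / ((1 - s * g i : ℝ) : ℂ) := by
        rw [eq_div_iff hci]
        exact (heq i).symm
      have hzz : z i * star (z i) = ((Complex.normSq (z i) : ℝ) : ℂ) := by
        simp [Complex.star_def, Complex.mul_conj]
      have h3 : w i * star (z i) = (z i * star (z i)) * (((g i / (1 - s * g i) : ℝ)) : ℂ) := by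
        rw [hwi]
        push_cast
        field_simp
      rw [h3, hzz, hr]
      simp only [hi, if_false]
      push_cast
      ring
  -- sum of terms
  have hsum : (w ⬝ᵥ star z) = ((∑ i, r i * Complex.normSq (z i) : ℝ) : ℂ) := by
    rw [dotProduct]
    push_cast
    apply Finset.sum_congr rfl
    intro i _
    rw [Pi.star_apply, hterm i]
    push_cast
    ring
  have hre : (∑ i, r i * Complex.normSq (z i)) ≤ 0 := by
    have := hM z
    rw [← hw, hsum] at this
    simpa using this
  have hall : ∀ i ∈ Finset.univ, r i * Complex.normSq (z i) = 0 := by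
    rw [← Finset.sum_eq_zero_iff_of_nonneg]
    · exact le_antisymm hre (Finset.sum_nonneg fun i _ =>
        mul_nonneg (hrnn i) (Complex.normSq_nonneg _))
    · intro i _
      exact mul_nonneg (hrnn i) (Complex.normSq_nonneg _)
  intro i
  by_cases hi : 1 - s * g i = 0
  · rw [hzero i hi]; ring
  · by_cases hgi : g i = 0
    · rw [hgi]; simp
    · have hgpos : 0 < g i := lt_of_le_of_ne (hg i) (Ne.symm hgi)
      have hcpos : 0 < 1 - s * g i := lt_of_le_of_ne (hcnn i hi) (Ne.symm hi)
      have hrpos : 0 < r i := by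
        rw [hr]; simp only [hi, if_false]
        exact div_pos hgpos hcpos
      have := hall i (Finset.mem_univ i)
      have hnz : Complex.normSq (z i) = 0 := by
        rcases mul_eq_zero.mp this with h|h
        · exact absurd h (ne_of_gt hrpos)
        · exact h
      have : z i = 0 := Complex.normSq_eq_zero.mp hnz
      rw [this]; ring
private lemma key_s13 {n : ℕ} (E Q L : Matrix (Fin n) (Fin n) ℂ)
    (hpsd : (Eᴴ * Q).PosSemidef)
    (hL : (-(L + Lᴴ)).PosSemidef)
    (hreg : ∃ mu0 : ℂ, (mu0 • E - Q).det ≠ 0) :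
    ∀ z : Fin n → ℂ, z ᵥ* E = z ᵥ* (L * Q) → z ᵥ* E = 0 ∧ z ᵥ* (L * Q) = 0 := by
  classical
  obtain ⟨s, hs, hdet⟩ := exists_pos_det_ne E Q hreg
  set A : Matrix (Fin n) (Fin n) ℂ := (s : ℂ) • E + Q with hA
  have hAdet : IsUnit A.det := isUnit_iff_ne_zero.mpr hdet
  set K : Matrix (Fin n) (Fin n) ℂ := A⁻¹ with hK
  have hAK : A * K = 1 := Matrix.mul_nonsing_inv A hAdet
  have hKA : K * A = 1 := Matrix.nonsing_inv_mul A hAdet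
  set G : Matrix (Fin n) (Fin n) ℂ := E * K with hG
  set Cm : Matrix (Fin n) (Fin n) ℂ := Q * K with hCm
  have hsum : (s : ℂ) • G + Cm = 1 := by
    rw [hG, hCm, ← Matrix.smul_mul, ← Matrix.add_mul, ← hA, hAK]
  have hCm1 : Cm = 1 - (s : ℂ) • G := by
    rw [← hsum]; abel
  have hPSD1 : (Gᴴ * Cm).PosSemidef := by
    have h1 : Gᴴ * Cm = Kᴴ * (Eᴴ * Q) * K := by
      rw [hG, hCm, Matrix.conjTranspose_mul]
      simp only [Matrix.mul_assoc]
    rw [h1]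
    exact hpsd.conjTranspose_mul_mul_same K
  have hGC : Gᴴ * Cm = Gᴴ - (s : ℂ) • (Gᴴ * G) := by
    rw [hCm1, Matrix.mul_sub, Matrix.mul_one, Matrix.mul_smul]
  have hGH : G.IsHermitian := by
    have h1 : (Gᴴ * Cm)ᴴ = Gᴴ * Cm := hPSD1.1
    rw [hGC, Matrix.conjTranspose_sub, Matrix.conjTranspose_conjTranspose,
      Matrix.conjTranspose_smul, Matrix.conjTranspose_mul,
      Matrix.conjTranspose_conjTranspose] at h1
    have h2 : star ((s : ℂ)) = (s : ℂ) := by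
      simp [Complex.star_def, Complex.conj_ofReal]
    rw [h2] at h1
    have h3 : G - (s : ℂ) • (Gᴴ * G) = Gᴴ - (s : ℂ) • (Gᴴ * G) := h1
    unfold Matrix.IsHermitian
    exact (sub_left_inj.mp h3).symm
  have hGpsd : G.PosSemidef := by
    have h1 : G = (Gᴴ * Cm) + (s : ℂ) • (Gᴴ * G) := by
      rw [hGC, hGH.eq]
      abel
    rw [h1]
    exact hPSD1.add (psd_real_smul (Matrix.posSemidef_conjTranspose_mul_self G) (le_of_lt hs))
  have hGCpsd : (G * Cm).PosSemidef := by
    rw [← hGH.eq]; exact hPSD1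
  -- spectral decomposition
  set U : Matrix (Fin n) (Fin n) ℂ := (hGH.eigenvectorUnitary : Matrix (Fin n) (Fin n) ℂ) with hU
  set g : Fin n → ℝ := hGH.eigenvalues with hg
  set D : Matrix (Fin n) (Fin n) ℂ := Matrix.diagonal (RCLike.ofReal ∘ g) with hD
  have hspec : G = U * D * star U := hGH.spectral_theorem
  have hUU' : U * star U = 1 := Matrix.mem_unitaryGroup_iff.mp (hGH.eigenvectorUnitary).2
  have hUU : star U * U = 1 := Matrix.mem_unitaryGroup_iff'.mp (hGH.eigenvectorUnitary).2
  have hdiagG : star U * G * U = D := by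
    rw [hspec]; simp only [Matrix.mul_assoc]
    rw [hUU, Matrix.mul_one, ← Matrix.mul_assoc, hUU, Matrix.one_mul]
  have hgnn : ∀ i, 0 ≤ g i := fun i => hGpsd.eigenvalues_nonneg i
  -- eigenvalues of G * Cm
  have hgc : ∀ i, 0 ≤ g i * (1 - s * g i) := by
    intro i
    have h1 : star U * (G * Cm) * U =
        Matrix.diagonal (fun i => ((g i * (1 - s * g i) : ℝ) : ℂ)) := by
      have hGG : star U * (G * G) * U = D * D := by
        calc star U * (G * G) * U = (star U * G * U) * (star U * G * U) := by
              rw [Matrix.mul_assoc (star U * G) U _]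
              rw [show U * (star U * G * U) = (U * star U) * (G * U) by
                simp only [Matrix.mul_assoc]]
              rw [hUU', Matrix.one_mul]
              simp only [Matrix.mul_assoc]
        _ = D * D := by rw [hdiagG]
      have h2 : G * Cm = G - (s : ℂ) • (G * G) := by
        rw [hCm1, Matrix.mul_sub, Matrix.mul_one, Matrix.mul_smul]
      rw [h2]
      have expand : star U * (G - (s:ℂ) • (G * G)) * U =
          star U * G * U - (s:ℂ) • (star U * (G * G) * U) := by
        rw [Matrix.mul_sub, Matrix.sub_mul, Matrix.mul_smul, Matrix.smul_mul]
      rw [expand, hdiagG, hGG, hD]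
      rw [Matrix.diagonal_mul_diagonal]
      ext j k
      by_cases hjk : j = k
      · subst hjk
        simp [Matrix.diagonal_apply_eq]
        push_cast
        ring
      · simp [Matrix.diagonal_apply_ne _ hjk, hjk]
    have hpsd2 : (star U * (G * Cm) * U).PosSemidef := by
      have := hGCpsd.conjTranspose_mul_mul_same U
      rwa [← Matrix.star_eq_conjTranspose] at this
    rw [h1] at hpsd2
    have := Matrix.posSemidef_diagonal_iff.mp hpsd2 i
    exact_mod_cast this
  -- dissipativity
  have hdiss : ∀ v : Fin n → ℂ, ((v ᵥ* L) ⬝ᵥ star v).re ≤ 0 := by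
    intro v
    have h0 := hL.dotProduct_mulVec_nonneg (star v)
    rw [star_star] at h0
    have hexp : (-(L + Lᴴ)) *ᵥ star v = -(L *ᵥ star v) - (Lᴴ *ᵥ star v) := by
      rw [Matrix.neg_mulVec, Matrix.add_mulVec, neg_add]
      abel
    rw [hexp, dotProduct_sub, dotProduct_neg] at h0
    have hq : v ⬝ᵥ (Lᴴ *ᵥ star v) = star (v ⬝ᵥ (L *ᵥ star v)) := by
      simp only [dotProduct, Matrix.mulVec, Matrix.conjTranspose_apply, star_sum,
        star_mul', star_star, Finset.mul_sum]
      rw [Finset.sum_comm]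
      apply Finset.sum_congr rfl
      intro j _
      apply Finset.sum_congr rfl
      intro k _
      simp only [Pi.star_apply, star_star]
      ring
    rw [hq] at h0
    have h1 := (Complex.le_def.mp h0).1
    simp only [Complex.zero_re, Complex.neg_re, Complex.sub_re, Complex.add_re] at h1
    have h2 : (v ⬝ᵥ (L *ᵥ star v)).re ≤ 0 := by
      have := Complex.conj_re (v ⬝ᵥ (L *ᵥ star v))
      simp only [Complex.star_def] at h1 ⊢
      linarith [this, h1]
    rw [Matrix.dotProduct_mulVec] at h2
    exact h2
  set Lh : Matrix (Fin n) (Fin n) ℂ := star U * L * U with hLh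
  have hML : ∀ x : Fin n → ℂ, ((x ᵥ* Lh) ⬝ᵥ star x).re ≤ 0 := by
    intro x
    have e1 : x ᵥ* Lh = ((x ᵥ* star U) ᵥ* L) ᵥ* U := by
      rw [hLh, ← Matrix.vecMul_vecMul, ← Matrix.vecMul_vecMul]
    have e2 : (((x ᵥ* star U) ᵥ* L) ᵥ* U) ⬝ᵥ star x
        = ((x ᵥ* star U) ᵥ* L) ⬝ᵥ (U *ᵥ star x) :=
      (Matrix.dotProduct_mulVec _ U (star x)).symm
    have e3 : U *ᵥ star x = star (x ᵥ* star U) := by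
      rw [Matrix.star_vecMul, Matrix.star_eq_conjTranspose, Matrix.conjTranspose_conjTranspose]
    rw [e1, e2, e3]
    exact hdiss (x ᵥ* star U)
  -- the kernel vector
  intro z hz
  have hzG : z ᵥ* G = z ᵥ* (L * Cm) := by
    have h1 := congrArg (fun v => v ᵥ* K) hz
    simp only [Matrix.vecMul_vecMul] at h1
    rw [hG, hCm, ← Matrix.mul_assoc]
    exact h1
  set zh : Fin n → ℂ := z ᵥ* U with hzh
  have hGU : G * U = U * D := by
    rw [hspec, Matrix.mul_assoc, Matrix.mul_assoc, hUU, Matrix.mul_one]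
  have hLCmU : L * Cm * U = U * Lh - (s : ℂ) • (U * (Lh * D)) := by
    have hCmU : Cm * U = U - (s : ℂ) • (U * D) := by
      rw [hCm1, Matrix.sub_mul, Matrix.one_mul, Matrix.smul_mul, hGU]
    have hLU : L * U = U * Lh := by
      rw [hLh, ← Matrix.mul_assoc, ← Matrix.mul_assoc, hUU', Matrix.one_mul]
    rw [Matrix.mul_assoc, hCmU, Matrix.mul_sub, Matrix.mul_smul, ← Matrix.mul_assoc L U D,
      hLU, Matrix.mul_assoc U Lh D]
  have heqmat : zh ᵥ* D = zh ᵥ* Lh - (s : ℂ) • ((zh ᵥ* Lh) ᵥ* D) := by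
    have h1 := congrArg (fun v => v ᵥ* U) hzG
    simp only [Matrix.vecMul_vecMul] at h1
    rw [hGU, hLCmU] at h1
    rw [Matrix.vecMul_sub] at h1
    rw [vecMul_smulMat] at h1
    simp only [← Matrix.vecMul_vecMul] at h1
    exact h1
  have heqc : ∀ i, zh i * ((g i : ℝ) : ℂ) = (zh ᵥ* Lh) i * ((1 - s * g i : ℝ) : ℂ) := by
    intro i
    have h1 := congrFun heqmat i
    rw [Matrix.vecMul_diagonal] at h1
    simp only [Pi.sub_apply, Pi.smul_apply] at h1
    rw [Matrix.vecMul_diagonal] at h1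
    have h2 : (RCLike.ofReal ∘ g) i = ((g i : ℝ) : ℂ) := rfl
    rw [h2] at h1
    rw [h1]
    simp only [smul_eq_mul]
    push_cast
    ring
  have hres := diag_lemma s hs g hgnn hgc Lh hML zh heqc
  have hzhD : zh ᵥ* D = 0 := by
    ext i
    rw [Matrix.vecMul_diagonal]
    exact hres i
  have hzG0 : z ᵥ* G = 0 := by
    rw [hspec, ← Matrix.vecMul_vecMul, ← Matrix.vecMul_vecMul, ← hzh, hzhD,
      Matrix.zero_vecMul]
  have hGA : G * A = E := by
    rw [hG, Matrix.mul_assoc, hKA, Matrix.mul_one]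
  have hE0 : z ᵥ* E = 0 := by
    rw [← hGA, ← Matrix.vecMul_vecMul, hzG0, Matrix.zero_vecMul]
  exact ⟨hE0, hz ▸ hE0⟩
private lemma rank_add_ker {n : ℕ} (M : Matrix (Fin n) (Fin n) ℂ) :
    M.rank + Module.finrank ℂ (LinearMap.ker M.vecMulLinear) = n := by
  have h1 : LinearMap.ker M.vecMulLinear = LinearMap.ker Mᵀ.mulVecLin := by
    ext x
    simp [Matrix.vecMulLinear_apply, Matrix.mulVecLin_apply, Matrix.mulVec_transpose]
  rw [h1, ← Matrix.rank_transpose M]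
  have h3 : Mᵀ.rank = Module.finrank ℂ (LinearMap.range Mᵀ.mulVecLin) := rfl
  rw [h3, LinearMap.finrank_range_add_finrank_ker (Mᵀ.mulVecLin)]
  simp [Module.finrank_pi]

/-- Theorem 4.3 (v): if in addition `λE - Q` is regular, all left minimal indices of
`P(λ) = λE - LQ` are zero. -/
theorem stmt_13 {n : ℕ} (E Q L : Matrix (Fin n) (Fin n) ℂ)
    (hH : Eᴴ * Q = Qᴴ * E) (hpsd : (Eᴴ * Q).PosSemidef)
    (hL : (-(L + Lᴴ)).PosSemidef)
    (hreg : ∃ mu0 : ℂ, (mu0 • E - Q).det ≠ 0) :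
    ∀ μ : ℂ, (∀ ν : ℂ, (ν • E - L * Q).rank ≤ (μ • E - L * Q).rank) →
      ∀ y : Fin n → ℂ, star y ᵥ* (μ • E - L * Q) = 0 →
        star y ᵥ* E = 0 ∧ star y ᵥ* (L * Q) = 0 := by
  intro μ hμ y hy
  classical
  set Kinf : Submodule ℂ (Fin n → ℂ) :=
    LinearMap.ker E.vecMulLinear ⊓ LinearMap.ker (L * Q).vecMulLinear with hKinf
  have hsmul : ∀ (ν : ℂ) (z : Fin n → ℂ), z ᵥ* (ν • E - L * Q) = ν • (z ᵥ* E) - z ᵥ* (L * Q) := by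
    intro ν z
    rw [Matrix.vecMul_sub]
    congr 1
    ext j
    simp [Matrix.vecMul, dotProduct, Finset.mul_sum, Finset.smul_sum, Matrix.smul_apply]
    congr 1; ext i; ring
  have hinfK : ∀ ν : ℂ, Kinf ≤ LinearMap.ker (ν • E - L * Q).vecMulLinear := by
    intro ν z hz
    rw [Submodule.mem_inf] at hz
    obtain ⟨ha, hb⟩ := hz
    rw [LinearMap.mem_ker, Matrix.vecMulLinear_apply] at ha hb ⊢
    rw [hsmul, ha, hb]
    simp
  have hK1inf : LinearMap.ker ((1 : ℂ) • E - L * Q).vecMulLinear ≤ Kinf := by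
    intro z hz
    rw [LinearMap.mem_ker, Matrix.vecMulLinear_apply] at hz
    rw [hsmul, one_smul, sub_eq_zero] at hz
    obtain ⟨h1, h2⟩ := key_s13 E Q L hpsd hL hreg z hz
    rw [Submodule.mem_inf]
    constructor <;> rw [LinearMap.mem_ker, Matrix.vecMulLinear_apply]
    · exact h1
    · exact h2
  have hK1 : LinearMap.ker ((1 : ℂ) • E - L * Q).vecMulLinear = Kinf :=
    le_antisymm hK1inf (hinfK 1)
  have hd1 := rank_add_ker ((1 : ℂ) • E - L * Q)
  have hdmu := rank_add_ker (μ • E - L * Q)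
  have hrank := hμ 1
  have hdim : Module.finrank ℂ (LinearMap.ker (μ • E - L * Q).vecMulLinear)
      ≤ Module.finrank ℂ Kinf := by
    rw [← hK1]
    omega
  have heq : Kinf = LinearMap.ker (μ • E - L * Q).vecMulLinear :=
    Submodule.eq_of_le_of_finrank_le (hinfK μ) hdim
  have hy' : star y ∈ Kinf := by
    rw [heq, LinearMap.mem_ker, Matrix.vecMulLinear_apply]
    exact hy
  rw [Submodule.mem_inf] at hy'
  obtain ⟨h1, h2⟩ := hy'
  rw [LinearMap.mem_ker, Matrix.vecMulLinear_apply] at h1 h2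
  exact ⟨h1, h2⟩
end

section
/- Let E, A ∈ ℂ^{n×m} and λ₀ ∈ ℂ. Suppose there exist an integer k ≥ 1, invertible matrices Y ∈ ℂ^{n×n} and X ∈ ℂ^{m×m}, matrices R₁, R₀ ∈ ℂ^{k×k} and Ẽ, Ã ∈ ℂ^{(n−k)×(m−k)} such that Y·E·X = diag(R₁, Ẽ) and Y·A·X = diag(R₀, Ã) (block diagonal), det(λR₁ − R₀) = c·(λ − λ₀)^k for some c ≠ 0, and rank(λ₀Ẽ − Ã) ≥ rank(μẼ − Ã) for all μ ∈ ℂ. Let 𝒳 ⊆ ℂ^m be the span of the first k columns of X (a regular deflating subspace of λE − A associated with λ₀). Then 𝒳 intersects trivially the span of all kernels associated with other eigenvalues including ∞: 𝒳 ∩ span( ker E ∪ ⋃_{λ ∈ ℂ, λ ≠ λ₀} ker(λE − A) ) = {0}. -/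
open Matrix

/-- Vectors `v` whose coordinates `(Xi *ᵥ v) i` vanish for all `i` satisfying `P`. -/
noncomputable def stmt14_zeroSet {m : ℕ} (Xi : Matrix (Fin m) (Fin m) ℂ) (P : Fin m → Prop) :
    Submodule ℂ (Fin m → ℂ) where
  carrier := {v | ∀ i, P i → (Xi *ᵥ v) i = 0}
  add_mem' := by
    intro a b ha hb i hi
    simp [Matrix.mulVec_add, ha i hi, hb i hi]
  zero_mem' := by intro i hi; simp
  smul_mem' := by
    intro c v hv i hi
    simp [Matrix.mulVec_smul, hv i hi]

lemma stmt14_mem_zeroSet {m : ℕ} (Xi : Matrix (Fin m) (Fin m) ℂ) (P : Fin m → Prop)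
    (v : Fin m → ℂ) : v ∈ stmt14_zeroSet Xi P ↔ ∀ i, P i → (Xi *ᵥ v) i = 0 := Iff.rfl

lemma stmt14_inj {k : ℕ} {B : Matrix (Fin k) (Fin k) ℂ} (hB : IsUnit B.det)
    {w : Fin k → ℂ} (h : B *ᵥ w = 0) : w = 0 := by
  have := congrArg (fun u => B⁻¹ *ᵥ u) h
  simpa [Matrix.mulVec_mulVec, Matrix.nonsing_inv_mul B hB] using this

/-- If `M` has block form with top-left `B` invertible and zero top-right, then any vector in
`ker M` has zero first `k` coordinates. -/
lemma stmt14_block_ker {n m k : ℕ} (hkn : k ≤ n) (hkm : k ≤ m)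
    (M : Matrix (Fin n) (Fin m) ℂ) (B : Matrix (Fin k) (Fin k) ℂ)
    (htl : ∀ (i j : Fin k) (hi : (i : ℕ) < n) (hj : (j : ℕ) < m),
      M ⟨(i : ℕ), hi⟩ ⟨(j : ℕ), hj⟩ = B i j)
    (htr : ∀ (i : Fin n) (j : Fin m), (i : ℕ) < k → k ≤ (j : ℕ) → M i j = 0)
    (hB : IsUnit B.det) (w : Fin m → ℂ) (hw : M *ᵥ w = 0) :
    ∀ j : Fin m, (j : ℕ) < k → w j = 0 := by
  set w1 : Fin k → ℂ := fun j => w (Fin.castLE hkm j) with hw1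
  have himg : ∀ j : Fin m, j ∈ Finset.univ.map (Fin.castLEEmb hkm) ↔ (j : ℕ) < k := by
    intro j
    constructor
    · rintro hj
      simp only [Finset.mem_map, Finset.mem_univ, true_and] at hj
      obtain ⟨a, ha⟩ := hj
      rw [← ha]
      exact a.2
    · intro hj
      simp only [Finset.mem_map, Finset.mem_univ, true_and]
      exact ⟨⟨(j : ℕ), hj⟩, by ext; simp⟩
  have hBw : B *ᵥ w1 = 0 := by
    funext i
    have hin : (i : ℕ) < n := lt_of_lt_of_le i.2 hkn
    have h0 : (M *ᵥ w) ⟨(i : ℕ), hin⟩ = 0 := by rw [hw]; rfl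
    have hsum : ∑ j : Fin m, M ⟨(i : ℕ), hin⟩ j * w j = 0 := h0
    have hsub : Finset.univ.map (Fin.castLEEmb hkm) ⊆ (Finset.univ : Finset (Fin m)) :=
      Finset.subset_univ _
    have hzero : ∀ j ∈ (Finset.univ : Finset (Fin m)),
        j ∉ Finset.univ.map (Fin.castLEEmb hkm) → M ⟨(i : ℕ), hin⟩ j * w j = 0 := by
      intro j _ hj
      rw [htr _ j i.2 (le_of_not_gt (fun h => hj ((himg j).mpr h))), zero_mul]
    have heq : ∑ j ∈ Finset.univ.map (Fin.castLEEmb hkm), M ⟨(i : ℕ), hin⟩ j * w j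
        = ∑ j : Fin m, M ⟨(i : ℕ), hin⟩ j * w j := Finset.sum_subset hsub hzero
    have hmap : ∑ j ∈ Finset.univ.map (Fin.castLEEmb hkm), M ⟨(i : ℕ), hin⟩ j * w j
        = ∑ j : Fin k, M ⟨(i : ℕ), hin⟩ (Fin.castLE hkm j) * w (Fin.castLE hkm j) :=
      Finset.sum_map _ _ _
    have hcast : ∀ j : Fin k, M ⟨(i : ℕ), hin⟩ (Fin.castLE hkm j) * w (Fin.castLE hkm j)
        = B i j * w1 j := by
      intro j
      have hjm : (j : ℕ) < m := lt_of_lt_of_le j.2 hkm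
      have h1 : M ⟨(i : ℕ), hin⟩ (Fin.castLE hkm j) = B i j := htl i j hin hjm
      rw [h1]
    show ∑ j : Fin k, B i j * w1 j = 0
    calc ∑ j : Fin k, B i j * w1 j
        = ∑ j : Fin k, M ⟨(i : ℕ), hin⟩ (Fin.castLE hkm j) * w (Fin.castLE hkm j) := by
          exact Finset.sum_congr rfl (fun j _ => (hcast j).symm)
      _ = ∑ j ∈ Finset.univ.map (Fin.castLEEmb hkm), M ⟨(i : ℕ), hin⟩ j * w j := hmap.symm
      _ = ∑ j : Fin m, M ⟨(i : ℕ), hin⟩ j * w j := heq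
      _ = 0 := hsum
  have hw10 : w1 = 0 := stmt14_inj hB hBw
  intro j hj
  have h2 := congrFun hw10 ⟨(j : ℕ), hj⟩
  simpa [hw1, show Fin.castLE hkm ⟨(j : ℕ), hj⟩ = j from Fin.ext rfl] using h2

/-- Lemma 2.3: a regular deflating subspace associated with the eigenvalue `λ₀` intersects
trivially the span of the kernels associated with all other eigenvalues (including `∞`,
whose kernel is `ker E`). -/
theorem stmt_14 {n m : ℕ} (E A : Matrix (Fin n) (Fin m) ℂ) (lam0 : ℂ)
    (k : ℕ) (hk : 1 ≤ k) (hkn : k ≤ n) (hkm : k ≤ m)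
    (Y : Matrix (Fin n) (Fin n) ℂ) (X : Matrix (Fin m) (Fin m) ℂ)
    (hY : IsUnit Y) (hX : IsUnit X)
    (R1 R0 : Matrix (Fin k) (Fin k) ℂ)
    (Et At : Matrix (Fin (n - k)) (Fin (m - k)) ℂ)
    -- block diagonal structure of Y (λE - A) X
    (h11 : ∀ (i j : Fin k) (hi : (i : ℕ) < n) (hj : (j : ℕ) < m),
      (Y * E * X) ⟨(i : ℕ), hi⟩ ⟨(j : ℕ), hj⟩ = R1 i j ∧
      (Y * A * X) ⟨(i : ℕ), hi⟩ ⟨(j : ℕ), hj⟩ = R0 i j)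
    (h12 : ∀ (i : Fin n) (j : Fin m), (i : ℕ) < k → k ≤ (j : ℕ) →
      (Y * E * X) i j = 0 ∧ (Y * A * X) i j = 0)
    (h21 : ∀ (i : Fin n) (j : Fin m), k ≤ (i : ℕ) → (j : ℕ) < k →
      (Y * E * X) i j = 0 ∧ (Y * A * X) i j = 0)
    (h22 : ∀ (i : Fin (n - k)) (j : Fin (m - k)) (hi : k + (i : ℕ) < n) (hj : k + (j : ℕ) < m),
      (Y * E * X) ⟨k + (i : ℕ), hi⟩ ⟨k + (j : ℕ), hj⟩ = Et i j ∧
      (Y * A * X) ⟨k + (i : ℕ), hi⟩ ⟨k + (j : ℕ), hj⟩ = At i j)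
    -- λR1 - R0 is regular with λ₀ as its only eigenvalue
    (hdet : ∃ c : ℂ, c ≠ 0 ∧
      ((Polynomial.X : Polynomial ℂ) • R1.map Polynomial.C - R0.map Polynomial.C).det =
        Polynomial.C c * (Polynomial.X - Polynomial.C lam0) ^ k)
    -- λ₀ is not an eigenvalue of λẼ - Ã
    (hrank : ∀ μ : ℂ, (μ • Et - At).rank ≤ (lam0 • Et - At).rank) :
    Submodule.span ℂ {v : Fin m → ℂ | ∃ j : Fin m, (j : ℕ) < k ∧ v = fun i => X i j} ⊓
      Submodule.span ℂ ({x : Fin m → ℂ | E *ᵥ x = 0} ∪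
        ⋃ (μ : ℂ) (_ : μ ≠ lam0), {x : Fin m → ℂ | (μ • E - A) *ᵥ x = 0}) = ⊥ := by
  obtain ⟨c, hc, hdet⟩ := hdet
  have hXd : IsUnit X.det := (Matrix.isUnit_iff_isUnit_det X).mp hX
  have hXiX : X⁻¹ * X = 1 := Matrix.nonsing_inv_mul X hXd
  have hXXi : X * X⁻¹ = 1 := Matrix.mul_nonsing_inv X hXd
  -- Step 1: evaluate the pencil determinant
  have hEval : ∀ μ : ℂ, (μ • R1 - R0).det = c * (μ - lam0) ^ k := by
    intro μ
    have hmap : ((Polynomial.X : Polynomial ℂ) • R1.map Polynomial.C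
        - R0.map Polynomial.C).map (Polynomial.evalRingHom μ) = μ • R1 - R0 := by
      ext i j
      simp [Matrix.map_apply, Matrix.sub_apply, Matrix.smul_apply, smul_eq_mul]
      ring
    calc (μ • R1 - R0).det
        = (Polynomial.evalRingHom μ)
            (((Polynomial.X : Polynomial ℂ) • R1.map Polynomial.C
              - R0.map Polynomial.C).det) := by
          rw [RingHom.map_det, RingHom.mapMatrix_apply, hmap]
      _ = c * (μ - lam0) ^ k := by
          rw [hdet]; simp
  -- Step 2: R1 is invertible
  have hR1 : IsUnit R1.det := by
    have hq : ∀ t : ℂ, t ≠ 0 → (R1 - t • R0).det = c * (1 - lam0 * t) ^ k := by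
      intro t ht
      have h1 : R1 - t • R0 = t • (t⁻¹ • R1 - R0) := by
        rw [smul_sub, smul_smul, mul_inv_cancel₀ ht, one_smul]
      rw [h1, Matrix.det_smul, Fintype.card_fin, hEval t⁻¹]
      rw [← mul_assoc, mul_comm (t ^ k) c, mul_assoc, ← mul_pow]
      congr 2
      field_simp
    -- two polynomials agreeing off 0
    set p : Polynomial ℂ := (R1.map Polynomial.C
        - (Polynomial.X : Polynomial ℂ) • R0.map Polynomial.C).det with hp
    set q : Polynomial ℂ :=
        Polynomial.C c * (1 - Polynomial.C lam0 * Polynomial.X) ^ k with hq'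
    have hevalp : ∀ t : ℂ, p.eval t = (R1 - t • R0).det := by
      intro t
      have hmap : (R1.map Polynomial.C
          - (Polynomial.X : Polynomial ℂ) • R0.map Polynomial.C).map
            (Polynomial.evalRingHom t) = R1 - t • R0 := by
        ext i j
        simp [Matrix.map_apply, Matrix.sub_apply, Matrix.smul_apply, smul_eq_mul]
        ring
      have := (RingHom.map_det (Polynomial.evalRingHom t)
        (R1.map Polynomial.C - (Polynomial.X : Polynomial ℂ) • R0.map Polynomial.C)).symm
      rw [RingHom.mapMatrix_apply, hmap] at this
      exact this.symm
    have hpq : p = q := by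
      apply Polynomial.eq_of_infinite_eval_eq
      apply Set.Infinite.mono (s := {(0 : ℂ)}ᶜ)
      · intro t ht
        have ht' : t ≠ 0 := ht
        simp only [Set.mem_setOf_eq]
        rw [hevalp t, hq t ht', hq']
        simp
      · exact Set.Finite.infinite_compl (Set.finite_singleton 0)
    have h0 : p.eval 0 = R1.det := by rw [hevalp 0]; simp
    have h0' : q.eval 0 = c := by rw [hq']; simp
    rw [hpq, h0'] at h0
    exact isUnit_iff_ne_zero.mpr (h0 ▸ hc)
  -- Step 3: the second span lies in the set of vectors with vanishing first k coordinates
  have hS2 : Submodule.span ℂ ({x : Fin m → ℂ | E *ᵥ x = 0} ∪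
      ⋃ (μ : ℂ) (_ : μ ≠ lam0), {x : Fin m → ℂ | (μ • E - A) *ᵥ x = 0}) ≤
      stmt14_zeroSet X⁻¹ (fun i => (i : ℕ) < k) := by
    apply Submodule.span_le.mpr
    intro v hv
    rw [SetLike.mem_coe, stmt14_mem_zeroSet]
    have key : ∀ (M : Matrix (Fin n) (Fin m) ℂ) (B : Matrix (Fin k) (Fin k) ℂ),
        (∀ (i j : Fin k) (hi : (i : ℕ) < n) (hj : (j : ℕ) < m),
          (Y * M * X) ⟨(i : ℕ), hi⟩ ⟨(j : ℕ), hj⟩ = B i j) →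
        (∀ (i : Fin n) (j : Fin m), (i : ℕ) < k → k ≤ (j : ℕ) → (Y * M * X) i j = 0) →
        IsUnit B.det → M *ᵥ v = 0 → ∀ i : Fin m, (i : ℕ) < k → (X⁻¹ *ᵥ v) i = 0 := by
      intro M B htl htr hB hv0
      have hw : (Y * M * X) *ᵥ (X⁻¹ *ᵥ v) = 0 := by
        rw [Matrix.mulVec_mulVec, Matrix.mul_assoc, Matrix.mul_assoc, hXXi, Matrix.mul_one,
          ← Matrix.mulVec_mulVec, hv0, Matrix.mulVec_zero]
      exact stmt14_block_ker hkn hkm (Y * M * X) B htl htr hB (X⁻¹ *ᵥ v) hw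
    rcases hv with hv | hv
    · -- kernel of E
      exact key E R1 (fun i j hi hj => (h11 i j hi hj).1)
        (fun i j hi hj => (h12 i j hi hj).1) hR1 hv
    · -- kernel of μE - A for μ ≠ lam0
      simp only [Set.mem_iUnion] at hv
      obtain ⟨μ, hμ, hv⟩ := hv
      have hBdet : IsUnit (μ • R1 - R0).det := by
        rw [hEval μ]
        exact isUnit_iff_ne_zero.mpr (mul_ne_zero hc (pow_ne_zero _ (sub_ne_zero.mpr hμ)))
      have hM : Y * (μ • E - A) * X = μ • (Y * E * X) - Y * A * X := by
        rw [Matrix.mul_sub, Matrix.sub_mul, Matrix.mul_smul, Matrix.smul_mul]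
      refine key (μ • E - A) (μ • R1 - R0) ?_ ?_ hBdet hv
      · intro i j hi hj
        rw [hM]
        simp only [Matrix.sub_apply, Matrix.smul_apply, smul_eq_mul]
        rw [(h11 i j hi hj).1, (h11 i j hi hj).2]
      · intro i j hi hj
        rw [hM]
        simp only [Matrix.sub_apply, Matrix.smul_apply, smul_eq_mul]
        rw [(h12 i j hi hj).1, (h12 i j hi hj).2]
        ring
  -- Step 4: the first span lies in the set of vectors with vanishing last coordinates
  have hS1 : Submodule.span ℂ {v : Fin m → ℂ | ∃ j : Fin m, (j : ℕ) < k ∧ v = fun i => X i j} ≤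
      stmt14_zeroSet X⁻¹ (fun i => k ≤ (i : ℕ)) := by
    apply Submodule.span_le.mpr
    rintro v ⟨j, hj, rfl⟩
    rw [SetLike.mem_coe, stmt14_mem_zeroSet]
    intro i hi
    have hcol : (fun l => X l j) = X *ᵥ Pi.single j 1 := by
      funext l
      simp [Matrix.mulVec_single]
    rw [hcol, Matrix.mulVec_mulVec, hXiX, Matrix.one_mulVec]
    have hij : i ≠ j := by
      intro h
      rw [h] at hi
      omega
    exact Pi.single_eq_of_ne hij 1
  -- Combine
  rw [eq_bot_iff]
  intro v hv
  obtain ⟨h1, h2⟩ := hv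
  have m1 := (stmt14_mem_zeroSet _ _ v).mp (hS1 h1)
  have m2 := (stmt14_mem_zeroSet _ _ v).mp (hS2 h2)
  have hXiv : X⁻¹ *ᵥ v = 0 := by
    funext i
    rcases lt_or_ge (i : ℕ) k with h | h
    · exact m2 i h
    · exact m1 i h
  have : v = 0 := by
    have := congrArg (fun u => X *ᵥ u) hXiv
    simpa [Matrix.mulVec_mulVec, hXXi] using this
  rw [Submodule.mem_bot]
  exact this
end

section
/- Let M, D, K ∈ ℂ^{n×n} be Hermitian positive semidefinite matrices and consider the quadratic matrix polynomial S(λ) = λ²M + λD + K. Then all eigenvalues of S lie in the closed left half-plane: for every λ₀ ∈ ℂ with Re(λ₀) > 0 and every μ ∈ ℂ, rank(μ²M + μD + K) ≤ rank(λ₀²M + λ₀D + K) (i.e., λ₀ is not an eigenvalue of S). -/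
open Matrix ComplexOrder

lemma rank_le_of_ker_le {m : ℕ} (A B : Matrix (Fin m) (Fin m) ℂ)
    (h : LinearMap.ker A.mulVecLin ≤ LinearMap.ker B.mulVecLin) : B.rank ≤ A.rank := by
  have hA := LinearMap.finrank_range_add_finrank_ker A.mulVecLin
  have hB := LinearMap.finrank_range_add_finrank_ker B.mulVecLin
  have hk := Submodule.finrank_mono h
  rw [Matrix.rank, Matrix.rank]
  omega

/-- Corollary 4.9 (i), first part: all eigenvalues of `S(λ) = λ²M + λD + K` with
`M, D, K ⪰ 0` lie in the closed left half-plane. -/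
theorem stmt_15 {n : ℕ} (M D K : Matrix (Fin n) (Fin n) ℂ)
    (hM : M.PosSemidef) (hD : D.PosSemidef) (hK : K.PosSemidef) :
    ∀ lam0 : ℂ, 0 < lam0.re →
      ∀ μ : ℂ, (μ ^ 2 • M + μ • D + K).rank ≤ (lam0 ^ 2 • M + lam0 • D + K).rank := by
  intro lam0 hre μ
  apply rank_le_of_ker_le
  intro x hx
  simp only [LinearMap.mem_ker, mulVecLin_apply] at hx ⊢
  -- expand S(λ₀) x = 0
  rw [add_mulVec, add_mulVec, smul_mulVec, smul_mulVec] at hx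
  -- take inner product with star x
  have hdot : lam0 ^ 2 * (star x ⬝ᵥ M *ᵥ x) + lam0 * (star x ⬝ᵥ D *ᵥ x)
      + (star x ⬝ᵥ K *ᵥ x) = 0 := by
    have := congrArg (fun v => star x ⬝ᵥ v) hx
    simpa [dotProduct_add, dotProduct_smul, smul_eq_mul, add_assoc] using this
  set a := star x ⬝ᵥ M *ᵥ x with ha_def
  set b := star x ⬝ᵥ D *ᵥ x with hb_def
  set c := star x ⬝ᵥ K *ᵥ x with hc_def
  have ha : 0 ≤ a := hM.dotProduct_mulVec_nonneg x
  have hb : 0 ≤ b := hD.dotProduct_mulVec_nonneg x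
  have hc : 0 ≤ c := hK.dotProduct_mulVec_nonneg x
  rw [Complex.nonneg_iff] at ha hb hc
  obtain ⟨haR, haI⟩ := ha; obtain ⟨hbR, hbI⟩ := hb; obtain ⟨hcR, hcI⟩ := hc
  replace haI := haI.symm; replace hbI := hbI.symm; replace hcI := hcI.symm
  have hRe : (lam0.re ^ 2 - lam0.im ^ 2) * a.re + lam0.re * b.re + c.re = 0 := by
    have := congrArg Complex.re hdot
    simp [Complex.add_re, Complex.mul_re, pow_two, Complex.mul_im, haI, hbI] at this
    ring_nf at this ⊢
    linarith
  have hIm : lam0.im * (2 * lam0.re * a.re + b.re) = 0 := by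
    have := congrArg Complex.im hdot
    simp [Complex.add_im, Complex.mul_im, Complex.mul_re, pow_two, haI, hbI, hcI] at this
    ring_nf at this ⊢
    linarith
  have habc : a.re = 0 ∧ b.re = 0 ∧ c.re = 0 := by
    rcases eq_or_ne lam0.im 0 with h0 | h0
    · rw [h0] at hRe
      refine ⟨?_, ?_, ?_⟩ <;> nlinarith [sq_nonneg lam0.re, mul_pos hre hre]
    · have h1 : 2 * lam0.re * a.re + b.re = 0 := by
        rcases mul_eq_zero.mp hIm with h | h
        · exact absurd h h0
        · exact h
      have hA : a.re = 0 := by nlinarith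
      have hB : b.re = 0 := by nlinarith
      refine ⟨hA, hB, ?_⟩
      nlinarith
  obtain ⟨hA, hB, hC⟩ := habc
  have hMa : M *ᵥ x = 0 := (hM.dotProduct_mulVec_zero_iff x).mp (Complex.ext (by simpa using hA) (by simpa using haI))
  have hDa : D *ᵥ x = 0 := (hD.dotProduct_mulVec_zero_iff x).mp (Complex.ext (by simpa using hB) (by simpa using hbI))
  have hKa : K *ᵥ x = 0 := (hK.dotProduct_mulVec_zero_iff x).mp (Complex.ext (by simpa using hC) (by simpa using hcI))
  rw [add_mulVec, add_mulVec, smul_mulVec, smul_mulVec, hMa, hDa, hKa]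
  simp
end

section
/- Let M, D, K ∈ ℂ^{n×n} be Hermitian positive semidefinite matrices such that the polynomial p(λ) = det(λ²M + λD + K) is not identically zero. Then every nonzero purely imaginary eigenvalue of S(λ) = λ²M + λD + K is semisimple: for every ω ∈ ℝ with ω ≠ 0, the multiplicity of iω as a root of p equals the dimension of ker(−ω²M + iωD + K). -/
open Matrix ComplexOrder Polynomial

private lemma eval_divByMonic_eq_derivative {p : ℂ[X]} {a : ℂ} (h : p.IsRoot a) :
    (p /ₘ (X - C a)).eval a = p.derivative.eval a := by
  conv_rhs => rw [← Polynomial.mul_divByMonic_eq_iff_isRoot.mpr h]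
  simp [Polynomial.derivative_mul]

/-- Corollary 4.9 (i), second part: for a regular quadratic polynomial
`S(λ) = λ²M + λD + K` with `M, D, K ⪰ 0`, every nonzero purely imaginary eigenvalue `iω`
is semisimple. -/
theorem stmt_16 {n : ℕ} (M D K : Matrix (Fin n) (Fin n) ℂ)
    (hM : M.PosSemidef) (hD : D.PosSemidef) (hK : K.PosSemidef)
    (hp : ((Polynomial.X ^ 2 : Polynomial ℂ) • M.map Polynomial.C +
        (Polynomial.X : Polynomial ℂ) • D.map Polynomial.C + K.map Polynomial.C).det ≠ 0) :
    ∀ ω : ℝ, ω ≠ 0 →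
      Polynomial.rootMultiplicity (Complex.I * (ω : ℂ))
          ((Polynomial.X ^ 2 : Polynomial ℂ) • M.map Polynomial.C +
            (Polynomial.X : Polynomial ℂ) • D.map Polynomial.C + K.map Polynomial.C).det =
        Module.finrank ℂ (LinearMap.ker (Matrix.mulVecLin
          ((Complex.I * (ω : ℂ)) ^ 2 • M + (Complex.I * (ω : ℂ)) • D + K))) := by
  classical
  intro ω hω
  set l : ℂ := Complex.I * (ω : ℂ) with hl
  have hl0 : l ≠ 0 := by
    simp [hl, Complex.I_ne_zero, Complex.ofReal_eq_zero, hω]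
  have hl2 : l ^ 2 = -((ω : ℂ) ^ 2) := by
    rw [hl, mul_pow, Complex.I_sq]; ring
  set Sp : Matrix (Fin n) (Fin n) ℂ[X] :=
    (X ^ 2 : ℂ[X]) • M.map C + (X : ℂ[X]) • D.map C + K.map C with hSp
  set S0 : Matrix (Fin n) (Fin n) ℂ := l ^ 2 • M + l • D + K with hS0
  set S1 : Matrix (Fin n) (Fin n) ℂ := (2 * l) • M + D with hS1
  -- evaluation of the polynomial matrix
  have hevalSp : ∀ μ : ℂ, Sp.map (evalRingHom μ) = μ ^ 2 • M + μ • D + K := by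
    intro μ
    ext i j
    simp [hSp, Matrix.map_apply, Matrix.add_apply, Matrix.smul_apply, smul_eq_mul]
    ring
  have hdet_eval : ∀ μ : ℂ, (Sp.det).eval μ = (μ ^ 2 • M + μ • D + K).det := by
    intro μ
    rw [← hevalSp μ]
    exact (RingHom.map_det (evalRingHom μ) Sp).trans rfl
  -- regularity: common kernel is trivial
  have hreg : ∀ x : Fin n → ℂ, M *ᵥ x = 0 → D *ᵥ x = 0 → K *ᵥ x = 0 → x = 0 := by
    intro x hMx hDx hKx
    by_contra hx0
    apply hp
    apply Polynomial.funext
    intro μ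
    rw [hdet_eval μ, Polynomial.eval_zero]
    rw [← Matrix.exists_mulVec_eq_zero_iff]
    exact ⟨x, hx0, by simp [Matrix.add_mulVec, Matrix.smul_mulVec, hMx, hDx, hKx]⟩
  -- elements of the kernel of `S(iω)` kill `D` and relate `K` and `M`
  have hker0 : ∀ x : Fin n → ℂ, S0 *ᵥ x = 0 →
      D *ᵥ x = 0 ∧ K *ᵥ x = ((ω : ℂ) ^ 2) • (M *ᵥ x) := by
    intro x hx
    have hxv : l ^ 2 • (M *ᵥ x) + l • (D *ᵥ x) + K *ᵥ x = 0 := by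
      rw [hS0] at hx
      simpa [Matrix.add_mulVec, Matrix.smul_mulVec] using hx
    have hdot : l ^ 2 * (star x ⬝ᵥ M *ᵥ x) + l * (star x ⬝ᵥ D *ᵥ x) + star x ⬝ᵥ K *ᵥ x = 0 := by
      have := congrArg (fun v => star x ⬝ᵥ v) hxv
      simpa [dotProduct_add, dotProduct_smul, smul_eq_mul] using this
    have hm := Complex.nonneg_iff.mp (hM.dotProduct_mulVec_nonneg x)
    have hd := Complex.nonneg_iff.mp (hD.dotProduct_mulVec_nonneg x)
    have hk := Complex.nonneg_iff.mp (hK.dotProduct_mulVec_nonneg x)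
    rw [hl2, hl] at hdot
    have him := congrArg Complex.im hdot
    simp only [Complex.add_im, Complex.mul_im, Complex.mul_re, Complex.neg_im, Complex.neg_re,
      Complex.I_re, Complex.I_im, ← Complex.ofReal_pow, Complex.ofReal_re, Complex.ofReal_im,
      Complex.zero_im, ← hm.2, ← hd.2, ← hk.2] at him
    have hdre : (star x ⬝ᵥ D *ᵥ x).re = 0 := by
      have : ω * (star x ⬝ᵥ D *ᵥ x).re = 0 := by linarith
      rcases mul_eq_zero.mp this with h | h
      · exact absurd h hω
      · exact h
    have hDx : D *ᵥ x = 0 := by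
      rw [← (hD.dotProduct_mulVec_zero_iff x)]
      exact Complex.ext hdre hd.2.symm
    refine ⟨hDx, ?_⟩
    rw [hDx, smul_zero, add_zero, hl2] at hxv
    have := congrArg (fun v => v - (-((ω : ℂ) ^ 2)) • (M *ᵥ x)) hxv
    simpa [sub_eq_iff_eq_add, neg_smul] using this
  -- no Jordan chains of length two at `iω`
  have hUcore : ∀ x y : Fin n → ℂ, S0 *ᵥ x = 0 → S1 *ᵥ x + S0 *ᵥ y = 0 → x = 0 := by
    intro x y hx hxy
    obtain ⟨hDx, hKx⟩ := hker0 x hx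
    have hS0Hx : S0ᴴ *ᵥ x = 0 := by
      have hconj : S0ᴴ = l ^ 2 • M + (-l) • D + K := by
        rw [hS0]
        rw [conjTranspose_add, conjTranspose_add, conjTranspose_smul, conjTranspose_smul,
          hM.1, hD.1, hK.1]
        congr 1
        · congr 1
          · congr 1
            rw [hl2]
            simp [← Complex.ofReal_pow]
          · congr 1
            rw [hl]
            simp [Complex.ext_iff]
      rw [hconj]
      simp only [Matrix.add_mulVec, Matrix.neg_mulVec, Matrix.smul_mulVec, hDx, hKx, hl2,
        smul_zero, neg_zero, neg_smul]
      abel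
    have hvm : star x ᵥ* S0 = 0 := by
      have := congrArg star hS0Hx
      rwa [Matrix.star_mulVec, conjTranspose_conjTranspose, star_zero] at this
    have hdot : star x ⬝ᵥ (S1 *ᵥ x) = 0 := by
      have h1 : star x ⬝ᵥ (S1 *ᵥ x + S0 *ᵥ y) = 0 := by rw [hxy, dotProduct_zero]
      have h2 : star x ⬝ᵥ (S0 *ᵥ y) = 0 := by
        rw [dotProduct_mulVec, hvm, zero_dotProduct]
      rwa [dotProduct_add, h2, add_zero] at h1
    have hmm : star x ⬝ᵥ (M *ᵥ x) = 0 := by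
      rw [hS1] at hdot
      simp only [Matrix.add_mulVec, Matrix.smul_mulVec, dotProduct_add, dotProduct_smul,
        smul_eq_mul, hDx, dotProduct_zero, add_zero] at hdot
      rcases mul_eq_zero.mp hdot with h | h
      · exact absurd h (by simp [hl0])
      · exact h
    have hMx : M *ᵥ x = 0 := (hM.dotProduct_mulVec_zero_iff x).mp hmm
    have hKx0 : K *ᵥ x = 0 := by rw [hKx, hMx, smul_zero]
    exact hreg x hMx hDx hKx0
  set Wk := LinearMap.ker S0.mulVecLin with hWk
  set k := Module.finrank ℂ Wk with hkdef
  obtain ⟨W', hcompl⟩ := Submodule.exists_isCompl Wk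
  set k' := Module.finrank ℂ W' with hk'def
  have hkk : k + k' = n := by
    have h1 := Submodule.finrank_add_eq_of_isCompl hcompl
    simpa [Module.finrank_pi] using h1
  set b1 : Module.Basis (Fin k) ℂ Wk := Module.finBasis ℂ Wk with hb1
  set b2 : Module.Basis (Fin k') ℂ W' := Module.finBasis ℂ W' with hb2
  set bsum : Module.Basis (Fin k ⊕ Fin k') ℂ (Fin n → ℂ) :=
    (b1.prod b2).map (Submodule.prodEquivOfIsCompl Wk W' hcompl) with hbsum
  set e : (Fin k ⊕ Fin k') ≃ Fin n := finSumFinEquiv.trans (finCongr hkk) with he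
  set bf : Module.Basis (Fin n) ℂ (Fin n → ℂ) := bsum.reindex e with hbf
  set cb : Fin n → (Fin n → ℂ) := fun j => bf j with hcb
  have hcbl : ∀ j, (e.symm j).isLeft → cb j ∈ Wk := by
    intro j hj
    rcases Sum.isLeft_iff.mp hj with ⟨a, ha⟩
    have h1 : cb j = bsum (e.symm j) := by
      simp only [hcb, hbf]
      exact bsum.reindex_apply e j
    rw [h1, ha, hbsum]
    simp only [Module.Basis.map_apply, Module.Basis.prod_apply, Sum.elim_inl]
    rw [Submodule.coe_prodEquivOfIsCompl']
    simp
  have hcbr : ∀ j, (e.symm j).isRight → cb j ∈ W' := by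
    intro j hj
    rcases Sum.isRight_iff.mp hj with ⟨a, ha⟩
    have h1 : cb j = bsum (e.symm j) := by
      simp only [hcb, hbf]
      exact bsum.reindex_apply e j
    rw [h1, ha, hbsum]
    simp only [Module.Basis.map_apply, Module.Basis.prod_apply, Sum.elim_inr]
    rw [Submodule.coe_prodEquivOfIsCompl']
    simp
  -- the change-of-basis matrix
  set P : Matrix (Fin n) (Fin n) ℂ := Matrix.of (fun i j => cb j i) with hP
  have hPdet : P.det ≠ 0 := by
    have hPeq : P = (Pi.basisFun ℂ (Fin n)).toMatrix bf := by
      ext i j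
      simp [hP, Module.Basis.toMatrix_apply, Pi.basisFun_repr, hcb]
    haveI := (Pi.basisFun ℂ (Fin n)).invertibleToMatrix bf
    rw [hPeq]
    exact (Matrix.isUnit_det_of_invertible _).ne_zero
  -- polynomial matrix T and its factorization
  set T : Matrix (Fin n) (Fin n) ℂ[X] := Sp * P.map C with hT
  have hTexp : T = (X ^ 2 : ℂ[X]) • ((M * P).map C) + (X : ℂ[X]) • ((D * P).map C)
      + (K * P).map C := by
    rw [hT, hSp, Matrix.add_mul, Matrix.add_mul, Matrix.smul_mul, Matrix.smul_mul,
      ← Matrix.map_mul, ← Matrix.map_mul, ← Matrix.map_mul]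
  have hTeval : ∀ μ : ℂ, T.map (evalRingHom μ) = (μ ^ 2 • M + μ • D + K) * P := by
    intro μ
    rw [hT, Matrix.map_mul, hevalSp]
    congr 1
    ext i j
    simp
  have hTentry : ∀ μ : ℂ, ∀ i j, (T i j).eval μ = ((μ ^ 2 • M + μ • D + K) *ᵥ cb j) i := by
    intro μ i j
    have h1 : (T.map (evalRingHom μ)) i j = ((μ ^ 2 • M + μ • D + K) * P) i j := by
      rw [hTeval]
    simpa [Matrix.map_apply, Matrix.mul_apply, Matrix.mulVec, dotProduct, hP] using h1
  have hS0cb : ∀ j, (e.symm j).isLeft → S0 *ᵥ cb j = 0 := by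
    intro j hj
    have := LinearMap.mem_ker.mp (hcbl j hj)
    rwa [Matrix.mulVecLin_apply] at this
  have hTroot : ∀ i j, (e.symm j).isLeft → (T i j).IsRoot l := by
    intro i j hj
    rw [Polynomial.IsRoot, hTentry l i j, ← hS0, hS0cb j hj]
    rfl
  set dg : Fin n → ℂ[X] := fun j => if (e.symm j).isLeft then X - C l else 1 with hdg
  set U : Matrix (Fin n) (Fin n) ℂ[X] :=
    Matrix.of (fun i j => if (e.symm j).isLeft then T i j /ₘ (X - C l) else T i j) with hU
  have hfact : T = U * Matrix.diagonal dg := by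
    refine Matrix.ext fun i j => ?_
    rw [Matrix.mul_diagonal]
    by_cases hj : (e.symm j).isLeft
    · simp only [hU, hdg, Matrix.of_apply, if_pos hj]
      rw [mul_comm]
      exact (Polynomial.mul_divByMonic_eq_iff_isRoot.mpr (hTroot i j hj)).symm
    · simp [hU, hdg, Matrix.of_apply, if_neg hj]
  have hprodg : ∏ j, dg j = (X - C l) ^ k := by
    rw [← Equiv.prod_comp e dg]
    have h1 : ∀ i : Fin k ⊕ Fin k', dg (e i) = if i.isLeft then X - C l else 1 := by
      intro i; simp [hdg]
    simp only [h1]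
    rw [Fintype.prod_sum_type]
    simp
  have hdetT : T.det = U.det * (X - C l) ^ k := by
    rw [hfact, Matrix.det_mul, Matrix.det_diagonal, hprodg]
  have hAP : ∀ (A : Matrix (Fin n) (Fin n) ℂ) (i j : Fin n), (A * P) i j = (A *ᵥ cb j) i := by
    intro A i j
    simp [Matrix.mul_apply, Matrix.mulVec, dotProduct, hP]
  have hUeval : ∀ i j, (U i j).eval l =
      if (e.symm j).isLeft then (S1 * P) i j else (S0 * P) i j := by
    intro i j
    by_cases hj : (e.symm j).isLeft
    · rw [hU]
      simp only [Matrix.of_apply, if_pos hj]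
      rw [eval_divByMonic_eq_derivative (hTroot i j hj)]
      have hTij : T i j = X ^ 2 * C ((M * P) i j) + X * C ((D * P) i j) + C ((K * P) i j) := by
        rw [hTexp]
        simp only [Matrix.add_apply, Matrix.smul_apply, Matrix.map_apply, smul_eq_mul,
          ← Matrix.map_mul]
      rw [hTij]
      simp only [Polynomial.derivative_add, Polynomial.derivative_mul, Polynomial.derivative_C,
        Polynomial.derivative_X_pow, Polynomial.derivative_X, Nat.cast_ofNat, pow_one,
        mul_zero, add_zero, one_mul, Polynomial.eval_add, Polynomial.eval_mul, Polynomial.eval_C,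
        Polynomial.eval_X, Polynomial.eval_ofNat, Polynomial.eval_natCast, Polynomial.eval_pow,
        Polynomial.eval_zero, zero_add]
      rw [hS1, Matrix.add_mul, Matrix.smul_mul]
      simp only [Matrix.add_apply, Matrix.smul_apply, smul_eq_mul]
      ring
    · rw [hU]
      simp only [Matrix.of_apply, if_neg hj]
      rw [hTentry l i j, ← hS0]
      exact (hAP S0 i j).symm
  -- U evaluated at l is invertible
  have hUdet : (U.det).eval l ≠ 0 := by
    have hUev : (U.det).eval l = (U.map (evalRingHom l)).det :=
      (RingHom.map_det (evalRingHom l) U).trans rfl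
    rw [hUev]
    intro h0
    obtain ⟨a, ha0, ha⟩ := Matrix.exists_mulVec_eq_zero_iff.mpr h0
    set c : Fin n → ℂ := fun j => if (e.symm j).isLeft then a j else 0 with hc_def
    set c' : Fin n → ℂ := fun j => if (e.symm j).isLeft then 0 else a j with hc'_def
    set x : Fin n → ℂ := P *ᵥ c with hx_def
    set y : Fin n → ℂ := P *ᵥ c' with hy_def
    have hsum_eq : ∀ (cc : Fin n → ℂ), P *ᵥ cc = ∑ j, cc j • cb j := by
      intro cc
      funext i
      simp only [Matrix.mulVec, dotProduct, hP, Matrix.of_apply, Finset.sum_apply, Pi.smul_apply,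
        smul_eq_mul]
      exact Finset.sum_congr rfl fun j _ => mul_comm _ _
    have hxmem : x ∈ Wk := by
      rw [hx_def, hsum_eq]
      apply Submodule.sum_mem
      intro j _
      by_cases hj : (e.symm j).isLeft
      · exact Submodule.smul_mem _ _ (hcbl j hj)
      · simp [hc_def, if_neg hj]
    have hymem : y ∈ W' := by
      rw [hy_def, hsum_eq]
      apply Submodule.sum_mem
      intro j _
      by_cases hj : (e.symm j).isLeft
      · simp [hc'_def, if_pos hj]
      · exact Submodule.smul_mem _ _ (hcbr j (Sum.not_isLeft.mp hj))
    have hxy : S1 *ᵥ x + S0 *ᵥ y = 0 := by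
      rw [hx_def, hy_def, Matrix.mulVec_mulVec, Matrix.mulVec_mulVec]
      funext i
      have : ((S1 * P) *ᵥ c) i + ((S0 * P) *ᵥ c') i = ((U.map (evalRingHom l)) *ᵥ a) i := by
        simp only [Matrix.mulVec, dotProduct, ← Finset.sum_add_distrib]
        apply Finset.sum_congr rfl
        intro j _
        by_cases hj : (e.symm j).isLeft
        · simp [hc_def, hc'_def, if_pos hj, Matrix.map_apply, hUeval i j]
        · simp [hc_def, hc'_def, if_neg hj, Matrix.map_apply, hUeval i j]
      rw [Pi.add_apply, this, ha]
    have hxker : S0 *ᵥ x = 0 := by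
      have := LinearMap.mem_ker.mp hxmem
      rwa [Matrix.mulVecLin_apply] at this
    have hx0 : x = 0 := hUcore x y hxker hxy
    have hli := Fintype.linearIndependent_iff.mp bf.linearIndependent
    have hc0 : ∀ j, c j = 0 := by
      apply hli c
      rw [← hsum_eq, ← hx_def, hx0]
    have hy0 : y = 0 := by
      have hyker : y ∈ Wk := by
        rw [hWk, LinearMap.mem_ker, Matrix.mulVecLin_apply]
        have : S0 *ᵥ y = 0 := by
          have := hxy
          rw [hx0, Matrix.mulVec_zero, zero_add] at this
          exact this
        exact this
      exact Submodule.disjoint_def.mp hcompl.disjoint y hyker hymem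
    have hc'0 : ∀ j, c' j = 0 := by
      apply hli c'
      rw [← hsum_eq, ← hy_def, hy0]
    apply ha0
    funext j
    show a j = 0
    by_cases hj : (e.symm j).isLeft
    · simpa [hc_def, hj] using hc0 j
    · simpa [hc'_def, hj] using hc'0 j
  -- conclude by comparing root multiplicities
  have h2 : (P.map C).det = C P.det := (RingHom.map_det (C : ℂ →+* ℂ[X]) P).symm.trans rfl
  have hdetTP : Sp.det * C P.det = U.det * (X - C l) ^ k := by
    rw [← h2, ← Matrix.det_mul, ← hT, hdetT]
  have hCP : (C P.det : ℂ[X]) ≠ 0 := by simpa using hPdet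
  have hlhs_ne : Sp.det * C P.det ≠ 0 := mul_ne_zero hp hCP
  have hUne : U.det ≠ 0 := fun h => hlhs_ne (by rw [hdetTP, h, zero_mul])
  have h3 := Polynomial.rootMultiplicity_mul (x := l) hlhs_ne
  rw [Polynomial.rootMultiplicity_C, add_zero] at h3
  have hXk : ((X - C l) ^ k : ℂ[X]) ≠ 0 := pow_ne_zero _ (Polynomial.X_sub_C_ne_zero l)
  have hrmU : rootMultiplicity l U.det = 0 :=
    Polynomial.rootMultiplicity_eq_zero (by simpa [Polynomial.IsRoot] using hUdet)
  have h4 := Polynomial.rootMultiplicity_mul (x := l) (mul_ne_zero hUne hXk)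
  rw [hrmU, zero_add, Polynomial.rootMultiplicity_X_sub_C_pow] at h4
  rw [← h3, hdetTP]
  exact h4
end

section
/- Let A, E ∈ ℂ^{n×n} and assume there exists an invertible matrix Q ∈ ℂ^{n×n} such that EᴴQ is Hermitian positive semidefinite and QᴴA + AᴴQ is negative semidefinite. Then: (a) every eigenvalue of the pencil λE − A lies in the closed left half-plane, i.e., for every λ₀ ∈ ℂ with Re(λ₀) > 0 and every μ ∈ ℂ, rank(μE − A) ≤ rank(λ₀E − A); (b) if moreover the pencil λE − A is regular (det(λ₁E − A) ≠ 0 for some λ₁ ∈ ℂ), then for every ω ∈ ℝ with ω ≠ 0 the multiplicity of iω as a root of the polynomial det(λE − A) equals dim ker(iωE − A) (purely imaginary nonzero eigenvalues are semisimple). -/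
open scoped ComplexOrder

namespace Stmt17

open Matrix Polynomial

variable {n : ℕ} {A E Q : Matrix (Fin n) (Fin n) ℂ}

lemma star_dot_conjT (M : Matrix (Fin n) (Fin n) ℂ) (x w : Fin n → ℂ) :
    star x ⬝ᵥ (Mᴴ *ᵥ w) = star (star w ⬝ᵥ (M *ᵥ x)) := by
  simp only [dotProduct, mulVec, dotProduct, conjTranspose_apply, star_sum, star_mul',
    star_star, Pi.star_apply, Finset.mul_sum, Finset.sum_mul]
  rw [Finset.sum_comm]
  exact Finset.sum_congr rfl fun i _ => Finset.sum_congr rfl fun j _ => by ring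

lemma eval_det_map (B : Matrix (Fin n) (Fin n) ℂ[X]) (z : ℂ) :
    eval z B.det = (B.map (eval z)).det := by
  rw [← coe_evalRingHom, RingHom.map_det]; rfl

lemma eval_charpoly' (B : Matrix (Fin n) (Fin n) ℂ) (t : ℂ) :
    eval t B.charpoly = (t • (1 : Matrix (Fin n) (Fin n) ℂ) - B).det := by
  rw [Matrix.charpoly, eval_det_map]
  congr 1
  ext i j
  by_cases h : i = j <;>
    simp [Matrix.charmatrix_apply, h, Matrix.one_apply, Matrix.diagonal]


lemma hQE (hpsd : (Eᴴ * Q).PosSemidef) : Qᴴ * E = Eᴴ * Q := by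
  have h := hpsd.1
  rw [Matrix.IsHermitian, conjTranspose_mul, conjTranspose_conjTranspose] at h
  exact h

/-- The quadratic form computation. -/
lemma form_eq (hpsd : (Eᴴ * Q).PosSemidef) (lam : ℂ) (x : Fin n → ℂ)
    (hx : A *ᵥ x = lam • (E *ᵥ x)) :
    star x ⬝ᵥ ((Qᴴ * A + Aᴴ * Q) *ᵥ x)
      = (lam + star lam) * (star x ⬝ᵥ ((Eᴴ * Q) *ᵥ x)) := by
  set s : ℂ := star x ⬝ᵥ ((Eᴴ * Q) *ᵥ x) with hs
  have hstars : star s = s := by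
    rw [hs, ← star_dot_conjT (Eᴴ * Q) x x, hpsd.1]
  have term1 : star x ⬝ᵥ ((Qᴴ * A) *ᵥ x) = lam * s := by
    rw [← Matrix.mulVec_mulVec, hx, Matrix.mulVec_smul, dotProduct_smul,
      Matrix.mulVec_mulVec, hQE hpsd, hs]
    rfl
  have term2 : star x ⬝ᵥ ((Aᴴ * Q) *ᵥ x) = star lam * s := by
    rw [← Matrix.mulVec_mulVec, star_dot_conjT A x (Q *ᵥ x), hx, dotProduct_smul,
      smul_eq_mul, star_mul']
    congr 1
    rw [← hstars]
    congr 1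
    rw [Matrix.dotProduct_mulVec, star_mulVec, vecMul_vecMul, hs, ← hQE hpsd,
      Matrix.dotProduct_mulVec]
  rw [Matrix.add_mulVec, dotProduct_add, term1, term2]
  ring


/-- If the PSD form of `Eᴴ Q` vanishes at `x` then `E *ᵥ x = 0`. -/
lemma Evec_zero (hQ : IsUnit Q) (hpsd : (Eᴴ * Q).PosSemidef) (x : Fin n → ℂ)
    (hx : star x ⬝ᵥ ((Eᴴ * Q) *ᵥ x) = 0) : E *ᵥ x = 0 := by
  have h1 : (Eᴴ * Q) *ᵥ x = 0 := (hpsd.dotProduct_mulVec_zero_iff x).mp hx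
  rw [← hQE hpsd, ← Matrix.mulVec_mulVec] at h1
  have hQinj : Function.Injective (Qᴴ).mulVec :=
    Matrix.mulVec_injective_iff_isUnit.mpr ((Matrix.isUnit_conjTranspose Q).mpr hQ)
  apply hQinj
  show Qᴴ *ᵥ (E *ᵥ x) = Qᴴ *ᵥ 0
  rw [Matrix.mulVec_zero]
  exact h1

lemma kernel_lemma (hQ : IsUnit Q) (hpsd : (Eᴴ * Q).PosSemidef)
    (hnsd : (-(Qᴴ * A + Aᴴ * Q)).PosSemidef) (lam : ℂ) (x : Fin n → ℂ)
    (hx0 : (lam • E - A) *ᵥ x = 0) :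
    (0 < lam.re → E *ᵥ x = 0 ∧ A *ᵥ x = 0) ∧
      (lam.re = 0 → (Qᴴ * A + Aᴴ * Q) *ᵥ x = 0) := by
  have hx : A *ᵥ x = lam • (E *ᵥ x) := by
    rw [Matrix.sub_mulVec, Matrix.smul_mulVec, sub_eq_zero] at hx0
    exact hx0.symm
  set s : ℂ := star x ⬝ᵥ ((Eᴴ * Q) *ᵥ x) with hs
  have hs_nonneg : 0 ≤ s := hpsd.dotProduct_mulVec_nonneg x
  have hform := form_eq hpsd lam x hx
  have hform_le : star x ⬝ᵥ ((Qᴴ * A + Aᴴ * Q) *ᵥ x) ≤ 0 := by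
    have h := hnsd.dotProduct_mulVec_nonneg x
    rw [Matrix.neg_mulVec, dotProduct_neg] at h
    exact neg_nonneg.mp h
  have hsim : s.im = 0 := by
    rw [Complex.le_def] at hs_nonneg
    exact hs_nonneg.2.symm
  have hsre : 0 ≤ s.re := by
    rw [Complex.le_def] at hs_nonneg
    simpa using hs_nonneg.1
  have hlam : lam + star lam = (2 * lam.re : ℝ) := by
    rw [Complex.star_def, Complex.add_conj]
  constructor
  · intro hre
    have hs0 : s = 0 := by
      have h1 : ((2 * lam.re : ℝ) * s).re ≤ 0 := by
        have := hform_le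
        rw [hform, hlam] at this
        rw [Complex.le_def] at this
        simpa using this.1
      rw [Complex.mul_re] at h1
      simp only [Complex.ofReal_re, Complex.ofReal_im, hsim, mul_zero, zero_mul,
        sub_zero] at h1
      have : s.re = 0 := by nlinarith
      exact Complex.ext (by simpa using this) (by simpa using hsim)
    refine ⟨Evec_zero hQ hpsd x hs0, ?_⟩
    rw [hx, Evec_zero hQ hpsd x hs0, smul_zero]
  · intro hre
    have hform0 : star x ⬝ᵥ ((Qᴴ * A + Aᴴ * Q) *ᵥ x) = 0 := by
      rw [hform, hlam, hre]
      simp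
    have h2 : (-(Qᴴ * A + Aᴴ * Q)) *ᵥ x = 0 :=
      (hnsd.dotProduct_mulVec_zero_iff x).mp
        (by rw [Matrix.neg_mulVec, dotProduct_neg, hform0, neg_zero])
    rw [Matrix.neg_mulVec, neg_eq_zero] at h2
    exact h2


lemma part_a (hQ : IsUnit Q) (hpsd : (Eᴴ * Q).PosSemidef)
    (hnsd : (-(Qᴴ * A + Aᴴ * Q)).PosSemidef) (lam0 : ℂ) (hre : 0 < lam0.re) (μ : ℂ) :
    (μ • E - A).rank ≤ (lam0 • E - A).rank := by
  have hker : LinearMap.ker (lam0 • E - A).mulVecLin ≤ LinearMap.ker (μ • E - A).mulVecLin := by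
    intro x hx
    rw [LinearMap.mem_ker, Matrix.mulVecLin_apply] at hx ⊢
    obtain ⟨hE, hA⟩ := (kernel_lemma hQ hpsd hnsd lam0 x hx).1 hre
    rw [Matrix.sub_mulVec, Matrix.smul_mulVec, hE, hA, smul_zero, sub_zero]
  have h1 := LinearMap.finrank_range_add_finrank_ker (lam0 • E - A).mulVecLin
  have h2 := LinearMap.finrank_range_add_finrank_ker (μ • E - A).mulVecLin
  have h3 := Submodule.finrank_mono hker
  rw [Matrix.rank, Matrix.rank]
  omega


/-- Common kernel is trivial, by regularity. -/
lemma common_ker (hreg : ∃ lam1 : ℂ, (lam1 • E - A).det ≠ 0) (x : Fin n → ℂ)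
    (hE : E *ᵥ x = 0) (hA : A *ᵥ x = 0) : x = 0 := by
  obtain ⟨lam1, h1⟩ := hreg
  have hU : IsUnit (lam1 • E - A) := (Matrix.isUnit_iff_isUnit_det _).mpr h1.isUnit
  have hinj := Matrix.mulVec_injective_iff_isUnit.mpr hU
  apply hinj
  show (lam1 • E - A) *ᵥ x = (lam1 • E - A) *ᵥ 0
  rw [Matrix.mulVec_zero, Matrix.sub_mulVec, Matrix.smul_mulVec, hE, hA,
    smul_zero, sub_zero]

/-- `E - A` is invertible. -/
lemma D_unit (hQ : IsUnit Q) (hpsd : (Eᴴ * Q).PosSemidef)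
    (hnsd : (-(Qᴴ * A + Aᴴ * Q)).PosSemidef)
    (hreg : ∃ lam1 : ℂ, (lam1 • E - A).det ≠ 0) : IsUnit (E - A) := by
  apply Matrix.mulVec_injective_iff_isUnit.mp
  intro x y hxy
  have h : (E - A) *ᵥ (x - y) = 0 := by
    rw [Matrix.mulVec_sub, sub_eq_zero]; exact hxy
  have h' : ((1 : ℂ) • E - A) *ᵥ (x - y) = 0 := by rwa [one_smul]
  obtain ⟨hE, hA⟩ := (kernel_lemma hQ hpsd hnsd 1 (x - y) h').1 (by norm_num)
  have := common_ker hreg (x - y) hE hA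
  exact sub_eq_zero.mp this


lemma pencil_eq {D M N : Matrix (Fin n) (Fin n) ℂ} (lam0 : ℂ) (h1l : lam0 ≠ 1)
    (hD : D = E - A) (hM : D * M = E) (hN : N = M - (1 - lam0)⁻¹ • 1) :
    lam0 • E - A = (lam0 - 1) • (D * N) := by
  have h1l' : (1 : ℂ) - lam0 ≠ 0 := sub_ne_zero.mpr (Ne.symm h1l)
  have hnu : (lam0 - 1) * (1 - lam0)⁻¹ = -1 := by
    field_simp
    ring
  calc lam0 • E - A = (lam0 - 1) • E - (-1 : ℂ) • (E - A) := by module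
  _ = (lam0 - 1) • E - ((lam0 - 1) * (1 - lam0)⁻¹) • D := by rw [hnu, hD]
  _ = (lam0 - 1) • (E - (1 - lam0)⁻¹ • D) := by
      rw [smul_sub, smul_smul]
  _ = (lam0 - 1) • (D * N) := by
      rw [hN, Matrix.mul_sub, hM, Matrix.mul_smul, Matrix.mul_one]

/-- Semisimplicity step: no Jordan chains of length two at `lam0 = iω`. -/
lemma semis (hQ : IsUnit Q) (hpsd : (Eᴴ * Q).PosSemidef)
    (hnsd : (-(Qᴴ * A + Aᴴ * Q)).PosSemidef)
    (hreg : ∃ lam1 : ℂ, (lam1 • E - A).det ≠ 0)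
    (lam0 : ℂ) (hre : lam0.re = 0) (h1l : lam0 ≠ 1)
    {D M N : Matrix (Fin n) (Fin n) ℂ}
    (hD : D = E - A) (hM : D * M = E) (hN : N = M - (1 - lam0)⁻¹ • 1)
    (x : Fin n → ℂ) (hx : N *ᵥ (N *ᵥ x) = 0) : N *ᵥ x = 0 := by
  have hstar : star lam0 = -lam0 := by
    rw [Complex.star_def]
    apply Complex.ext <;> simp [hre]
  have hId := pencil_eq (A := A) (E := E) lam0 h1l hD hM hN
  set y : Fin n → ℂ := N *ᵥ x with hy
  -- y is in the kernel of the pencil at lam0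
  have hy0 : (lam0 • E - A) *ᵥ y = 0 := by
    rw [hId, Matrix.smul_mulVec, ← Matrix.mulVec_mulVec, hx,
      Matrix.mulVec_zero, smul_zero]
  have hQAy : (Qᴴ * A + Aᴴ * Q) *ᵥ y = 0 :=
    (kernel_lemma hQ hpsd hnsd lam0 y hy0).2 hre
  have hAy : A *ᵥ y = lam0 • (E *ᵥ y) := by
    have := hy0
    rw [Matrix.sub_mulVec, Matrix.smul_mulVec, sub_eq_zero] at this
    exact this.symm
  -- adjoint annihilation: (lam0 • E - A)ᴴ *ᵥ (Q *ᵥ y) = 0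
  have hadj : (lam0 • E - A)ᴴ *ᵥ (Q *ᵥ y) = 0 := by
    have h1 : Aᴴ *ᵥ (Q *ᵥ y) = -(lam0 • ((Qᴴ * E) *ᵥ y)) := by
      rw [Matrix.mulVec_mulVec]
      have : (Aᴴ * Q) *ᵥ y = -((Qᴴ * A) *ᵥ y) := by
        rw [eq_neg_iff_add_eq_zero, ← Matrix.add_mulVec, add_comm]
        exact hQAy
      rw [this, ← Matrix.mulVec_mulVec, hAy, Matrix.mulVec_smul, Matrix.mulVec_mulVec]
    have h2 : Eᴴ *ᵥ (Q *ᵥ y) = (Qᴴ * E) *ᵥ y := by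
      rw [Matrix.mulVec_mulVec, hQE hpsd]
    rw [Matrix.conjTranspose_sub, Matrix.conjTranspose_smul, Matrix.sub_mulVec,
      Matrix.smul_mulVec, h2, h1, hstar]
    simp
  -- hence the Q-form of (lam0 E - A) x against y vanishes
  have hform : star y ⬝ᵥ (Qᴴ *ᵥ ((lam0 • E - A) *ᵥ x)) = 0 := by
    rw [Matrix.mulVec_mulVec, Matrix.dotProduct_mulVec]
    have : star y ᵥ* (Qᴴ * (lam0 • E - A)) = 0 := by
      rw [← Matrix.vecMul_vecMul, ← Matrix.star_mulVec]
      have : star ((lam0 • E - A)ᴴ *ᵥ (Q *ᵥ y)) = star (Q *ᵥ y) ᵥ* (lam0 • E - A) := by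
        rw [Matrix.star_mulVec, Matrix.conjTranspose_conjTranspose]
      rw [← this, hadj, star_zero]
    rw [this, zero_dotProduct]
  -- but that form equals (lam0 - 1) * (star y ⬝ᵥ (Qᴴ (E - A)) y)
  have hform2 : star y ⬝ᵥ ((Qᴴ * (E - A)) *ᵥ y) = 0 := by
    have h3 : (lam0 • E - A) *ᵥ x = (lam0 - 1) • (D *ᵥ y) := by
      rw [hId, Matrix.smul_mulVec, ← Matrix.mulVec_mulVec]
    rw [h3] at hform
    rw [Matrix.mulVec_smul, dotProduct_smul, smul_eq_mul, mul_eq_zero] at hform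
    rcases hform with h | h
    · exact absurd (sub_eq_zero.mp h) h1l
    · rw [← hD, ← Matrix.mulVec_mulVec]
      exact h
  -- now deduce the PSD form vanishes at y
  set s' : ℂ := star y ⬝ᵥ ((Qᴴ * E) *ᵥ y) with hs'
  set t : ℂ := star y ⬝ᵥ ((Qᴴ * A) *ᵥ y) with ht
  have hts : t = s' := by
    rw [Matrix.mul_sub, Matrix.sub_mulVec, dotProduct_sub, sub_eq_zero] at hform2
    exact hform2.symm
  have hstart : star t = star y ⬝ᵥ ((Aᴴ * Q) *ᵥ y) := by
    rw [ht, ← star_dot_conjT (Qᴴ * A) y y, Matrix.conjTranspose_mul,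
      Matrix.conjTranspose_conjTranspose]
  have hstars : star s' = s' := by
    rw [hs', hQE hpsd, ← star_dot_conjT (Eᴴ * Q) y y, hpsd.1]
  have hsum : t + star t = 0 := by
    rw [ht, hstart, ← dotProduct_add, ← Matrix.add_mulVec, hQAy, dotProduct_zero]
  have hs0 : s' = 0 := by
    have h2 : star t = s' := by rw [hts, hstars]
    have : s' + s' = 0 := by linear_combination hsum - hts - h2
    exact add_self_eq_zero.mp this
  have hEy : E *ᵥ y = 0 := by
    apply Evec_zero hQ hpsd
    rw [← hQE hpsd, ← hs']
    exact hs0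
  have hAy0 : A *ᵥ y = 0 := by rw [hAy, hEy, smul_zero]
  exact common_ker hreg y hEy hAy0


lemma finrank_ker_eq (N : Matrix (Fin n) (Fin n) ℂ)
    (hss : ∀ x, N *ᵥ (N *ᵥ x) = 0 → N *ᵥ x = 0) :
    Module.finrank ℂ (LinearMap.ker N.mulVecLin) = natTrailingDegree N.charpoly := by
  set φ : Module.End ℂ (Fin n → ℂ) := N.mulVecLin with hφ
  have hssφ : ∀ x, φ (φ x) = 0 → φ x = 0 := by
    intro x h
    exact hss x h
  have hpow : ∀ (k : ℕ) (x : Fin n → ℂ), (φ ^ (k + 1)) x = 0 → φ x = 0 := by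
    intro k
    induction k with
    | zero => intro x h; simpa [pow_one] using h
    | succ k ih =>
      intro x h
      have h2 : (φ ^ (k + 1)) (φ x) = 0 := by
        rw [← Module.End.mul_apply, ← pow_succ]
        exact h
      exact hssφ x (ih (φ x) h2)
  have hmax : Module.End.maxGenEigenspace φ 0 = LinearMap.ker φ := by
    ext x
    rw [Module.End.mem_maxGenEigenspace]
    simp only [zero_smul, sub_zero, LinearMap.mem_ker]
    constructor
    · rintro ⟨k, hk⟩
      cases k with
      | zero =>
        simp only [pow_zero, Module.End.one_apply] at hk
        rw [hk, map_zero]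
      | succ k => exact hpow k x hk
    · intro h
      exact ⟨1, by simpa [pow_one] using h⟩
  have h1 := LinearMap.finrank_maxGenEigenspace_zero_eq φ
  rw [hmax] at h1
  rw [h1]
  congr 1
  rw [← LinearMap.charpoly_toMatrix φ (Pi.basisFun ℂ (Fin n))]
  congr 1
  rw [LinearMap.toMatrix_eq_toMatrix', hφ, ← Matrix.toLin'_apply']
  exact LinearMap.toMatrix'_toLin' N


lemma charpoly_comp_shift (B : Matrix (Fin n) (Fin n) ℂ) (c : ℂ) :
    B.charpoly.comp (X + C c) = (B - c • 1).charpoly :=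
  Polynomial.funext fun z => by
    rw [eval_comp, eval_add, eval_X, eval_C, eval_charpoly', eval_charpoly']
    congr 1
    rw [add_smul]
    abel

lemma eval_reflect (d : ℕ) (u : ℂ[X]) (hud : u.natDegree ≤ d) (z : ℂ) (hz : z ≠ 0) :
    eval z (reflect d u) = z ^ d * eval z⁻¹ u := by
  letI : Invertible (z⁻¹ : ℂ) := invertibleOfNonzero (inv_ne_zero hz)
  have h := eval₂_reflect_mul_pow (RingHom.id ℂ) (z⁻¹) d u hud
  rw [invOf_eq_inv, inv_inv] at h
  have he : ∀ (w : ℂ) (p : ℂ[X]), eval₂ (RingHom.id ℂ) w p = eval w p := fun _ _ => rfl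
  rw [he, he] at h
  rw [← h]
  rw [mul_comm, mul_assoc, ← mul_pow, inv_mul_cancel₀ hz, one_pow, mul_one]


lemma rm_sPoly (M : Matrix (Fin n) (Fin n) ℂ) (lam0 : ℂ) (h1l : lam0 ≠ 1) :
    rootMultiplicity lam0 ((((X : ℂ[X]) - 1) • M.map C + 1).det)
      = rootMultiplicity ((1 - lam0)⁻¹) M.charpoly := by
  have h1l' : (1 : ℂ) - lam0 ≠ 0 := sub_ne_zero.mpr (Ne.symm h1l)
  set nu : ℂ := (1 - lam0)⁻¹ with hnu
  have hnu0 : nu ≠ 0 := inv_ne_zero h1l'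
  have hχ0 : M.charpoly ≠ 0 := (Matrix.charpoly_monic M).ne_zero
  set k := rootMultiplicity nu M.charpoly with hk
  obtain ⟨u, hu, hnd⟩ := M.charpoly.exists_eq_pow_rootMultiplicity_mul_and_not_dvd hχ0 nu
  have hu0 : eval nu u ≠ 0 := fun h => hnd (dvd_iff_isRoot.mpr h)
  have hune : u ≠ 0 := fun h => hu0 (by simp [h])
  set d := u.natDegree with hd
  have hkd : k + d = n := by
    have h1 := Matrix.charpoly_natDegree_eq_dim M
    rw [hu, natDegree_mul (pow_ne_zero _ (X_sub_C_ne_zero nu)) hune, natDegree_pow,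
      natDegree_X_sub_C, mul_one, Fintype.card_fin] at h1
    exact h1
  set v := (reflect d u).comp (1 - (X : ℂ[X])) with hv
  have hv_eval : ∀ z : ℂ, z ≠ 1 → eval z v = (1 - z) ^ d * eval ((1 - z)⁻¹) u := by
    intro z hz
    have hz' : (1 : ℂ) - z ≠ 0 := sub_ne_zero.mpr (Ne.symm hz)
    rw [hv, eval_comp, eval_sub, eval_one, eval_X, eval_reflect d u le_rfl (1 - z) hz']
  have hvlam0 : eval lam0 v ≠ 0 := by
    rw [hv_eval lam0 h1l, ← hnu]
    exact mul_ne_zero (pow_ne_zero _ h1l') hu0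
  have hvne : v ≠ 0 := fun h => hvlam0 (by simp [h])
  have main : (((X : ℂ[X]) - 1) • M.map C + 1).det
      = C (nu ^ k) * ((X - C lam0) ^ k * v) := by
    apply eq_of_infinite_eval_eq
    refine Set.Infinite.mono ?_ ((Set.finite_singleton (1 : ℂ)).infinite_compl)
    intro z hz
    have hz1 : z ≠ 1 := hz
    have hz' : (1 : ℂ) - z ≠ 0 := sub_ne_zero.mpr (Ne.symm hz1)
    set w : ℂ := (1 - z)⁻¹ with hw
    show eval z _ = eval z _
    have hmap : ((((X : ℂ[X]) - 1) • M.map C + 1)).map (eval z) = (z - 1) • M + 1 := by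
      ext i j
      by_cases h : i = j <;>
        simp [h, Matrix.map_apply, Matrix.add_apply, Matrix.smul_apply, Matrix.one_apply,
          smul_eq_mul]
    have hsm : (z - 1) • M + 1 = (z - 1) • (M - w • 1) := by
      rw [smul_sub, smul_smul]
      have hzw : (z - 1) * w = -1 := by
        rw [hw]
        field_simp
        ring
      rw [hzw, neg_smul, one_smul, sub_neg_eq_add]
    have hneg : M - w • 1 = -(w • (1 : Matrix (Fin n) (Fin n) ℂ) - M) := (neg_sub _ _).symm
    rw [eval_det_map, hmap, hsm, Matrix.det_smul, hneg, Matrix.det_neg, ← eval_charpoly' M w,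
      hu, eval_mul, eval_pow, eval_sub, eval_X, eval_C, eval_mul, eval_C, eval_mul, eval_pow,
      eval_sub, eval_X, eval_C, hv_eval z hz1, ← hw, Fintype.card_fin]
    -- scalar identity
    have key : (1 - z) * (w - nu) = nu * (z - lam0) := by
      rw [hw, hnu]
      field_simp
      ring
    have keyk : (1 - z) ^ k * (w - nu) ^ k = nu ^ k * (z - lam0) ^ k := by
      rw [← mul_pow, key, mul_pow]
    have hm1 : (-1 : ℂ) ^ n * (z - 1) ^ n = (1 - z) ^ n := by
      rw [← mul_pow, show (-1 : ℂ) * (z - 1) = 1 - z by ring]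
    have hpown : ((1 - z : ℂ)) ^ n = (1 - z) ^ k * (1 - z) ^ d := by
      rw [← pow_add, hkd]
    linear_combination ((w - nu) ^ k * eval w u) * hm1 + ((w - nu) ^ k * eval w u) * hpown
      + ((1 - z) ^ d * eval w u) * keyk
  rw [main]
  have hX0 : ((X : ℂ[X]) - C lam0) ^ k * v ≠ 0 :=
    mul_ne_zero (pow_ne_zero _ (X_sub_C_ne_zero lam0)) hvne
  have hC0 : (C (nu ^ k) : ℂ[X]) ≠ 0 := by
    simpa using pow_ne_zero k hnu0
  rw [rootMultiplicity_mul (mul_ne_zero hC0 hX0), rootMultiplicity_C,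
    rootMultiplicity_mul hX0, rootMultiplicity_X_sub_C_pow,
    rootMultiplicity_eq_zero hvlam0, zero_add, add_zero]

lemma p_fact {D M : Matrix (Fin n) (Fin n) ℂ} (hD : D = E - A) (hM : D * M = E) :
    ((X : ℂ[X]) • E.map C - A.map C) = D.map C * (((X : ℂ[X]) - 1) • M.map C + 1) := by
  rw [Matrix.mul_add, Matrix.mul_one, Matrix.mul_smul, ← Matrix.map_mul, hM, hD]
  have hmapsub : (E - A).map (C : ℂ → ℂ[X]) = E.map C - A.map C := by
    ext i j
    simp [Matrix.map_apply, Matrix.sub_apply]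
  rw [hmapsub]
  module

lemma sPoly_ne_zero (M : Matrix (Fin n) (Fin n) ℂ) :
    (((X : ℂ[X]) - 1) • M.map C + 1).det ≠ 0 := by
  intro h
  have h1 : eval 1 ((((X : ℂ[X]) - 1) • M.map C + 1).det) = 1 := by
    rw [eval_det_map]
    have : ((((X : ℂ[X]) - 1) • M.map C + 1)).map (eval 1) = 1 := by
      ext i j
      by_cases hij : i = j <;>
        simp [hij, Matrix.map_apply, Matrix.add_apply, Matrix.smul_apply, Matrix.one_apply,
          smul_eq_mul]
    rw [this, Matrix.det_one]
  rw [h] at h1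
  simp at h1

lemma ker_eq {D M N : Matrix (Fin n) (Fin n) ℂ} (lam0 : ℂ) (h1l : lam0 ≠ 1)
    (hD : D = E - A) (hM : D * M = E) (hN : N = M - (1 - lam0)⁻¹ • 1)
    (hDu : IsUnit D) :
    LinearMap.ker (lam0 • E - A).mulVecLin = LinearMap.ker N.mulVecLin := by
  ext x
  simp only [LinearMap.mem_ker, Matrix.mulVecLin_apply]
  rw [pencil_eq lam0 h1l hD hM hN, Matrix.smul_mulVec, ← Matrix.mulVec_mulVec]
  constructor
  · intro h
    rcases smul_eq_zero.mp h with h' | h'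
    · exact absurd (sub_eq_zero.mp h') h1l
    · have hinj := Matrix.mulVec_injective_iff_isUnit.mpr hDu
      apply hinj
      show D *ᵥ (N *ᵥ x) = D *ᵥ 0
      rw [Matrix.mulVec_zero]
      exact h'
  · intro h
    rw [h, Matrix.mulVec_zero, smul_zero]

end Stmt17

open Matrix ComplexOrder

/-- Corollary 4.11 (generalized Lyapunov stability criterion): if `EᴴQ ⪰ 0` and
`QᴴA + AᴴQ ⪯ 0` for some invertible `Q`, then all eigenvalues of `λE - A` lie in the
closed left half-plane, and in the regular case the nonzero purely imaginary eigenvalues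
are semisimple. -/
theorem stmt_17 {n : ℕ} (A E : Matrix (Fin n) (Fin n) ℂ)
    (Q : Matrix (Fin n) (Fin n) ℂ) (hQ : IsUnit Q)
    (hpsd : (Eᴴ * Q).PosSemidef)
    (hnsd : (-(Qᴴ * A + Aᴴ * Q)).PosSemidef) :
    (∀ lam0 : ℂ, 0 < lam0.re →
      ∀ μ : ℂ, (μ • E - A).rank ≤ (lam0 • E - A).rank) ∧
    ((∃ lam1 : ℂ, (lam1 • E - A).det ≠ 0) →
      ∀ ω : ℝ, ω ≠ 0 →
        Polynomial.rootMultiplicity (Complex.I * (ω : ℂ))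
            ((Polynomial.X : Polynomial ℂ) • E.map Polynomial.C - A.map Polynomial.C).det =
          Module.finrank ℂ
            (LinearMap.ker (Matrix.mulVecLin ((Complex.I * (ω : ℂ)) • E - A)))) := by
  open Polynomial in
  refine ⟨fun lam0 hre μ => Stmt17.part_a hQ hpsd hnsd lam0 hre μ, ?_⟩
  intro hreg ω hω
  set lam0 : ℂ := Complex.I * (ω : ℂ) with hlam0
  have hre : lam0.re = 0 := by
    simp [hlam0, Complex.mul_re]
  have h1l : lam0 ≠ 1 := by
    intro h
    have := congrArg Complex.re h
    rw [hre] at this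
    norm_num at this
  have hDu := Stmt17.D_unit hQ hpsd hnsd hreg
  have hDdet : (E - A).det ≠ 0 := by
    have := (Matrix.isUnit_iff_isUnit_det _).mp hDu
    exact this.ne_zero
  set D : Matrix (Fin n) (Fin n) ℂ := E - A with hD
  set Mm : Matrix (Fin n) (Fin n) ℂ := D⁻¹ * E with hMm
  have hM : D * Mm = E := by
    rw [hMm, ← Matrix.mul_assoc, Matrix.mul_nonsing_inv _ ((Matrix.isUnit_iff_isUnit_det _).mp hDu), Matrix.one_mul]
  set N : Matrix (Fin n) (Fin n) ℂ := Mm - (1 - lam0)⁻¹ • 1 with hN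
  have hss : ∀ x, N *ᵥ (N *ᵥ x) = 0 → N *ᵥ x = 0 := fun x hx =>
    Stmt17.semis hQ hpsd hnsd hreg lam0 hre h1l hD hM hN x hx
  have hC0 : (Polynomial.C (D.det) : Polynomial ℂ) ≠ 0 := by
    simpa using hDdet
  have hp : ((Polynomial.X : Polynomial ℂ) • E.map Polynomial.C - A.map Polynomial.C).det
      = Polynomial.C (D.det)
        * ((((Polynomial.X : Polynomial ℂ)) - 1) • Mm.map Polynomial.C + 1).det := by
    rw [Stmt17.p_fact hD hM, Matrix.det_mul]
    congr 1
    have h := RingHom.map_det (Polynomial.C : ℂ →+* Polynomial ℂ) D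
    exact h.symm
  rw [hp, Polynomial.rootMultiplicity_mul (mul_ne_zero hC0 (Stmt17.sPoly_ne_zero Mm)),
    Polynomial.rootMultiplicity_C, zero_add, Stmt17.rm_sPoly Mm lam0 h1l,
    Polynomial.rootMultiplicity_eq_natTrailingDegree, Stmt17.charpoly_comp_shift,
    ← Stmt17.finrank_ker_eq _ hss]
  have hker := Stmt17.ker_eq lam0 h1l hD hM hN hDu
  rw [hker]
end
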